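/- arXiv:2601.01212 — 8 statements merged into one kernel-verified Lean document; each statement's English description precedes it below -/
import Mathlib

section
/- Let μ be a discrete (purely atomic) probability measure on ℂ. Let (k_n) be a sequence of integers with 1 ≤ k_n < n and k_n/n → 0. Then almost surely, the empirical measures μ_{P_n^{(k_n)}} of the zeros of the k_n-th derivative of P_n converge weakly to μ as n → ∞. -/
open MeasureTheory ProbabilityTheory Polynomial Filter Topology
open scoped ENNReal

/-- The empirical probability measure of the roots of a polynomial (counted with
multiplicity), normalized by `m`. -/
noncomputable def empMeasure (P : Polynomial ℂ) (m : ℕ) : Measure ℂ :=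
  ((m : ℝ≥0∞))⁻¹ • (P.roots.map Measure.dirac).sum

/-- The random monic polynomial `P_n(z) = ∏_{j<n} (z - ξ_j)`. -/
noncomputable def Pn {Ω : Type*} (ξ : ℕ → Ω → ℂ) (n : ℕ) (ω : Ω) : Polynomial ℂ :=
  ∏ j ∈ Finset.range n, (X - C (ξ j ω))


-- test basic aux lemmas
lemma abs_multiset_map_sum_le (f : ℂ → ℝ) (M : ℝ) (h : ∀ x, |f x| ≤ M) (s : Multiset ℂ) :
    |(s.map f).sum| ≤ s.card * M := by
  induction s using Multiset.induction with
  | empty => simp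
  | cons a s ih =>
    simp only [Multiset.map_cons, Multiset.sum_cons, Multiset.card_cons]
    calc |f a + (s.map f).sum| ≤ |f a| + |(s.map f).sum| := abs_add_le _ _
    _ ≤ M + s.card * M := by gcongr; exact h a
    _ = (s.card + 1) * M := by ring
    _ = _ := by push_cast; ring

lemma multiset_sum_dirac_finite (s : Multiset ℂ) :
    IsFiniteMeasure ((s.map Measure.dirac).sum) := by
  induction s using Multiset.induction with
  | empty => simp; infer_instance
  | cons a s ih =>
    simp only [Multiset.map_cons, Multiset.sum_cons]
    haveI := ih
    infer_instance

lemma integral_multiset_sum_dirac (φ : BoundedContinuousFunction ℂ ℝ) (s : Multiset ℂ) :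
    ∫ x, φ x ∂((s.map Measure.dirac).sum) = (s.map (fun x => φ x)).sum := by
  induction s using Multiset.induction with
  | empty => simp
  | cons a s ih =>
    simp only [Multiset.map_cons, Multiset.sum_cons]
    haveI := multiset_sum_dirac_finite s
    rw [integral_add_measure (φ.integrable _) (φ.integrable _), integral_dirac, ih]

lemma integral_empMeasure (φ : BoundedContinuousFunction ℂ ℝ) (P : Polynomial ℂ) (m : ℕ) :
    ∫ x, φ x ∂(((m : ℝ≥0∞))⁻¹ • (P.roots.map Measure.dirac).sum)
      = (m : ℝ)⁻¹ * (P.roots.map (fun x => φ x)).sum := by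
  rw [integral_smul_measure, integral_multiset_sum_dirac]
  simp [ENNReal.toReal_inv]


lemma roots_Pn {Ω : Type*} (ξ : ℕ → Ω → ℂ) (n : ℕ) (ω : Ω) :
    (Pn ξ n ω).roots = (Finset.range n).val.map (fun j => ξ j ω) := by
  rw [Pn, Finset.prod_eq_multiset_prod]
  have : Multiset.map (fun j => X - C (ξ j ω)) (Finset.range n).val
      = Multiset.map (fun a => X - C a) (Multiset.map (fun j => ξ j ω) (Finset.range n).val) := by
    rw [Multiset.map_map]; rfl
  rw [this, roots_multiset_prod_X_sub_C]

lemma natDegree_Pn {Ω : Type*} (ξ : ℕ → Ω → ℂ) (n : ℕ) (ω : Ω) :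
    (Pn ξ n ω).natDegree = n := by
  rw [Pn, Finset.prod_eq_multiset_prod]
  have : Multiset.map (fun j => X - C (ξ j ω)) (Finset.range n).val
      = Multiset.map (fun a => X - C a) (Multiset.map (fun j => ξ j ω) (Finset.range n).val) := by
    rw [Multiset.map_map]; rfl
  rw [this, natDegree_multiset_prod_X_sub_C_eq_card]
  simp

lemma natDegree_iterate_derivative_eq {p : Polynomial ℂ} {k : ℕ} (hk : k ≤ p.natDegree)
    (hp : p ≠ 0) : (derivative^[k] p).natDegree = p.natDegree - k ∧ derivative^[k] p ≠ 0 := by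
  induction k with
  | zero => simpa using hp
  | succ m ih =>
    obtain ⟨h1, h2⟩ := ih (le_of_lt (Nat.lt_of_succ_le hk))
    have hpos : 0 < (derivative^[m] p).natDegree := by omega
    have := degree_derivative_eq (derivative^[m] p) hpos
    rw [Function.iterate_succ_apply']
    constructor
    · rw [natDegree_eq_of_degree_eq_some this, h1]; omega
    · intro h
      rw [h, degree_zero] at this
      exact (by simp at this)

lemma count_roots_iterate_derivative (p : Polynomial ℂ) (k : ℕ) (a : ℂ) :
    p.rootMultiplicity a - k ≤ (derivative^[k] p).rootMultiplicity a := by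
  induction k with
  | zero => simp
  | succ m ih =>
    rw [Function.iterate_succ_apply']
    calc p.rootMultiplicity a - (m + 1) = p.rootMultiplicity a - m - 1 := by omega
    _ ≤ (derivative^[m] p).rootMultiplicity a - 1 := by omega
    _ ≤ _ := rootMultiplicity_sub_one_le_derivative_rootMultiplicity _ _

lemma card_roots_eq (p : Polynomial ℂ) : p.roots.card = p.natDegree :=
  splits_iff_card_roots.mp (IsAlgClosed.splits p)

lemma multiset_decompose (F : Finset ℂ) (s : Multiset ℂ) (f : ℂ → ℝ) :
    ∃ u : Multiset ℂ,
      u.card + ∑ a ∈ F, s.count a = s.card ∧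
      (s.map f).sum = (∑ a ∈ F, (s.count a : ℝ) * f a) + (u.map f).sum := by
  classical
  set t : Multiset ℂ := ∑ a ∈ F, Multiset.replicate (s.count a) a with ht
  have hle : t ≤ s := by
    rw [Multiset.le_iff_count]
    intro b
    rw [ht, Multiset.count_sum']
    simp only [Multiset.count_replicate]
    rw [Finset.sum_ite_eq' F b (fun a => s.count a)]
    split <;> simp
  have hcardt : t.card = ∑ a ∈ F, s.count a := by
    rw [ht, Multiset.card_sum]
    simp [Multiset.card_replicate]
  have hmapt : ((t.map f).sum : ℝ) = ∑ a ∈ F, (s.count a : ℝ) * f a := by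
    rw [ht]
    rw [show Multiset.map f (∑ a ∈ F, Multiset.replicate (Multiset.count a s) a)
        = (Multiset.mapAddMonoidHom f) (∑ a ∈ F, Multiset.replicate (Multiset.count a s) a) from rfl]
    rw [map_sum (Multiset.mapAddMonoidHom f)]
    rw [show ((∑ a ∈ F, (Multiset.mapAddMonoidHom f) (Multiset.replicate (Multiset.count a s) a)).sum)
        = Multiset.sumAddMonoidHom (∑ a ∈ F, (Multiset.mapAddMonoidHom f) (Multiset.replicate (Multiset.count a s) a)) from rfl]
    rw [map_sum Multiset.sumAddMonoidHom]
    refine Finset.sum_congr rfl fun a _ => ?_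
    show ((Multiset.replicate (s.count a) a).map f).sum = _
    rw [Multiset.map_replicate, Multiset.sum_replicate, nsmul_eq_mul]
  refine ⟨s - t, ?_, ?_⟩
  · rw [Multiset.card_sub hle, hcardt]
    have := Multiset.card_le_card hle
    omega
  · conv_lhs => rw [← tsub_add_cancel_of_le hle]
    rw [Multiset.map_add, Multiset.sum_add, hmapt]
    ring

lemma exists_good_finset (μ : Measure ℂ) [IsProbabilityMeasure μ]
    (s : Set ℂ) (hs : s.Countable) (h0 : μ sᶜ = 0) {δ : ℝ} (hδ : 0 < δ) :
    ∃ F : Finset ℂ, (↑F : Set ℂ) ⊆ s ∧ 1 - δ < ∑ a ∈ F, (μ {a}).toReal ∧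
      (∑ a ∈ F, (μ {a}).toReal) + (μ (↑F : Set ℂ)ᶜ).toReal = 1 := by
  classical
  have hsm : MeasurableSet s := hs.measurableSet
  have hμs : μ s = 1 := by
    have h := measure_add_measure_compl (μ := μ) hsm
    rw [h0, add_zero, measure_univ] at h
    exact h
  have hbi : μ (⋃ a ∈ s, {a}) = ∑' a : s, μ {(a : ℂ)} :=
    measure_biUnion hs (fun a _ b _ hab => by simp [Function.onFun, hab])
      (fun a _ => measurableSet_singleton _)
  rw [Set.biUnion_of_singleton] at hbi
  have htsum : ∑' a : s, μ {(a : ℂ)} = 1 := by rw [← hbi, hμs]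
  have hhs : HasSum (fun a : s => (μ {(a : ℂ)}).toReal) 1 := by
    have h1 := ENNReal.hasSum_toReal (f := fun a : s => μ {(a : ℂ)})
      (by rw [htsum]; exact ENNReal.one_ne_top)
    rwa [← ENNReal.tsum_toReal_eq (fun a => (measure_lt_top μ _).ne), htsum,
      ENNReal.toReal_one] at h1
  have hev : ∀ᶠ T : Finset s in atTop, 1 - δ < ∑ a ∈ T, (μ {(a : ℂ)}).toReal :=
    hhs.eventually (eventually_gt_nhds (by linarith))
  obtain ⟨T, hT⟩ := hev.exists
  refine ⟨T.image Subtype.val, ?_, ?_, ?_⟩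
  · intro x hx
    simp only [Finset.coe_image, Set.mem_image, Finset.mem_coe] at hx
    obtain ⟨a, _, rfl⟩ := hx
    exact a.2
  · rwa [Finset.sum_image (fun a _ b _ h => Subtype.val_injective h)]
  · have hmF : μ (↑(T.image Subtype.val) : Set ℂ) = ∑ a ∈ T.image Subtype.val, μ {a} := by
      rw [← Set.biUnion_of_singleton (↑(T.image Subtype.val) : Set ℂ)]
      exact measure_biUnion_finset (fun a _ b _ hab => by simp [Function.onFun, hab])
        (fun a _ => measurableSet_singleton _)
    have h2 := measure_add_measure_compl (μ := μ) (s := (↑(T.image Subtype.val) : Set ℂ))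
      (Finset.finite_toSet _).measurableSet
    rw [measure_univ, hmF] at h2
    have h3 := congrArg ENNReal.toReal h2
    rw [ENNReal.toReal_add (by exact (ENNReal.sum_lt_top.mpr fun a _ => measure_lt_top μ _).ne)
      (measure_lt_top μ _).ne, ENNReal.toReal_one,
      ENNReal.toReal_sum (fun a _ => (measure_lt_top μ _).ne)] at h3
    exact h3

lemma freq_tendsto {Ω : Type*} [MeasureSpace Ω] [IsProbabilityMeasure (ℙ : Measure Ω)]
    (μ : Measure ℂ) [IsProbabilityMeasure μ]
    (ξ : ℕ → Ω → ℂ) (hmeas : ∀ i, Measurable (ξ i))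
    (hindep : iIndepFun ξ ℙ)
    (hdist : ∀ i, Measure.map (ξ i) ℙ = μ) (a : ℂ) :
    ∀ᵐ ω ∂ℙ, Tendsto
      (fun n => ((Finset.filter (fun j => ξ j ω = a) (Finset.range n)).card : ℝ) / n)
      atTop (𝓝 (μ {a}).toReal) := by
  classical
  set g : ℂ → ℝ := Set.indicator {a} (fun _ => (1:ℝ)) with hg
  have hgmeas : Measurable g := measurable_const.indicator (measurableSet_singleton a)
  set X : ℕ → Ω → ℝ := fun i ω => g (ξ i ω) with hX
  have hbound : ∀ i ω, ‖X i ω‖ ≤ 1 := by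
    intro i ω
    simp only [hX, hg, Set.indicator_apply]
    split <;> simp
  have hint : Integrable (X 0) ℙ := by
    refine Integrable.mono' (integrable_const 1) ?_ (Filter.Eventually.of_forall (hbound 0))
    exact (hgmeas.comp (hmeas 0)).aestronglyMeasurable
  have hindep' : Pairwise (Function.onFun (IndepFun · · ℙ) X) := fun i j hij =>
    (hindep.indepFun hij).comp hgmeas hgmeas
  have hident : ∀ i, IdentDistrib (X i) (X 0) ℙ ℙ := by
    intro i
    have : IdentDistrib (ξ i) (ξ 0) ℙ ℙ :=
      ⟨(hmeas i).aemeasurable, (hmeas 0).aemeasurable, by rw [hdist i, hdist 0]⟩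
    exact this.comp hgmeas
  have hE : (ℙ[X 0] : ℝ) = (μ {a}).toReal := by
    have : ℙ[X 0] = ∫ x, g x ∂(Measure.map (ξ 0) ℙ) := by
      rw [integral_map (hmeas 0).aemeasurable hgmeas.aestronglyMeasurable]
    rw [this, hdist 0, hg, integral_indicator_const (1:ℝ) (measurableSet_singleton a)]
    simp [measureReal_def]
  have := strong_law_ae X hint hindep' hident
  rw [hE] at this
  filter_upwards [this] with ω hω
  have heq : ∀ n : ℕ, (n : ℝ)⁻¹ • (∑ i ∈ Finset.range n, X i ω)
      = ((Finset.filter (fun j => ξ j ω = a) (Finset.range n)).card : ℝ) / n := by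
    intro n
    have : ∑ i ∈ Finset.range n, X i ω
        = ((Finset.filter (fun j => ξ j ω = a) (Finset.range n)).card : ℝ) := by
      rw [Finset.card_filter]
      push_cast
      refine Finset.sum_congr rfl fun i _ => ?_
      simp only [hX, hg, Set.indicator_apply, Set.mem_singleton_iff]
    rw [this, smul_eq_mul, inv_mul_eq_div]
  exact (funext heq) ▸ hω
/-- for a discrete (purely atomic) probability measure `μ` on `ℂ` and
derivative orders `k_n = o(n)`, the empirical root measures of `P_n^{(k_n)}` converge
weakly to `μ` almost surely. -/
theorem discrete_measure_derivative_roots_converge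
    {Ω : Type*} [MeasureSpace Ω] [IsProbabilityMeasure (ℙ : Measure Ω)]
    (μ : Measure ℂ) [IsProbabilityMeasure μ]
    (hdisc : ∃ s : Set ℂ, s.Countable ∧ μ sᶜ = 0)
    (ξ : ℕ → Ω → ℂ) (hmeas : ∀ i, Measurable (ξ i))
    (hindep : iIndepFun ξ ℙ)
    (hdist : ∀ i, Measure.map (ξ i) ℙ = μ)
    (k : ℕ → ℕ) (hk : ∀ n, 2 ≤ n → 1 ≤ k n ∧ k n < n)
    (hko : Tendsto (fun n => (k n : ℝ) / n) atTop (𝓝 0)) :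
    ∀ᵐ ω ∂ℙ, ∀ φ : BoundedContinuousFunction ℂ ℝ,
      Tendsto
        (fun n => ∫ x, φ x ∂(empMeasure (derivative^[k n] (Pn ξ n ω)) (n - k n)))
        atTop (𝓝 (∫ x, φ x ∂μ)) := by
  classical
  obtain ⟨s, hs, h0⟩ := hdisc
  have hae : ∀ᵐ ω ∂ℙ, ∀ a ∈ s, Tendsto
      (fun n => ((Finset.filter (fun j => ξ j ω = a) (Finset.range n)).card : ℝ) / n)
      atTop (𝓝 (μ {a}).toReal) := by
    rw [MeasureTheory.ae_ball_iff hs]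
    exact fun a _ => freq_tendsto μ ξ hmeas hindep hdist a
  filter_upwards [hae] with ω hω
  intro φ
  set cnt : ℂ → ℕ → ℕ :=
    fun a n => ((Finset.range n).filter (fun j => ξ j ω = a)).card with hcnt_def
  set L := ∫ x, φ x ∂μ with hLdef
  have key : ∀ ε : ℝ, 0 < ε → ∀ᶠ n in atTop,
      |(∫ x, φ x ∂(empMeasure (derivative^[k n] (Pn ξ n ω)) (n - k n))) - L| ≤ ε / 2 := by
    intro ε hε
    set M := ‖φ‖ + 1 with hMdef
    have hMpos : 0 < M := by positivity
    have hφb : ∀ x, |φ x| ≤ M := by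
      intro x
      have := φ.norm_coe_le_norm x
      rw [Real.norm_eq_abs] at this
      linarith
    set δ := ε / (16 * M) with hδdef
    have hδ : 0 < δ := by positivity
    clear_value M δ
    obtain ⟨F, hFsub, hF1, hF2⟩ := exists_good_finset μ s hs h0 hδ
    set p : ℂ → ℝ := fun a => (μ {a}).toReal with hp_def
    set e := (μ (↑F : Set ℂ)ᶜ).toReal with he_def
    have he0 : 0 ≤ e := ENNReal.toReal_nonneg
    have heeq : 1 - ∑ a ∈ F, p a = e := by linarith [hF2]
    have he1 : e < δ := by linarith [hF1]
    -- static bound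
    have hLbound : |(∑ a ∈ F, p a * φ a) - L| ≤ M * e := by
      have hFm : MeasurableSet (↑F : Set ℂ) := (Finset.finite_toSet F).measurableSet
      have hsplit : (∫ x in (↑F : Set ℂ), φ x ∂μ) + ∫ x in (↑F : Set ℂ)ᶜ, φ x ∂μ = L :=
        integral_add_compl hFm (φ.integrable μ)
      have h1 : ∫ x in (↑F : Set ℂ), φ x ∂μ = ∑ a ∈ F, p a * φ a := by
        rw [integral_finset F (f := fun x => φ x) (φ.integrable _).integrableOn]
        simp [hp_def, smul_eq_mul, measureReal_def]
      have h2 : |∫ x in (↑F : Set ℂ)ᶜ, φ x ∂μ| ≤ M * e := by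
        have := norm_integral_le_of_norm_le_const (μ := μ.restrict (↑F : Set ℂ)ᶜ)
          (f := fun x => φ x) (C := M)
          (Filter.Eventually.of_forall (fun x => by rw [Real.norm_eq_abs]; exact hφb x))
        rw [measureReal_restrict_apply_univ, Real.norm_eq_abs] at this
        exact this
      have h3 : (∑ a ∈ F, p a * φ a) - L = -(∫ x in (↑F : Set ℂ)ᶜ, φ x ∂μ) := by
        rw [← hsplit, h1]; ring
      rw [h3, abs_neg]
      exact h2
    set δ' := δ / (F.card + 1) with hδ'def
    have hδ' : 0 < δ' := by positivity
    have hcardδ' : (F.card : ℝ) * δ' ≤ δ := by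
      rw [hδ'def]
      have h1 : (0:ℝ) < (F.card : ℝ) + 1 := by positivity
      calc (F.card : ℝ) * (δ / (F.card + 1)) = δ * ((F.card : ℝ) / (F.card + 1)) := by ring
      _ ≤ δ * 1 := by
          gcongr
          rw [div_le_one h1]; linarith
      _ = δ := mul_one δ
    -- eventual facts
    have hevF : ∀ᶠ n in atTop, ∀ a ∈ F,
        p a - δ' < ((cnt a n : ℝ) - k n) / ((n:ℝ) - k n) := by
      rw [eventually_all_finset]
      intro a ha
      have h1 : Tendsto (fun n => (cnt a n : ℝ)/n) atTop (𝓝 (p a)) := hω a (hFsub ha)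
      have h2 : Tendsto (fun n => ((cnt a n : ℝ)/n - (k n : ℝ)/n) / (1 - (k n : ℝ)/n))
          atTop (𝓝 ((p a - 0)/(1 - 0))) :=
        Tendsto.div (h1.sub hko) (tendsto_const_nhds.sub hko) (by norm_num)
      have heq : ∀ᶠ n : ℕ in atTop,
          ((cnt a n : ℝ)/n - (k n : ℝ)/n) / (1 - (k n : ℝ)/n)
            = ((cnt a n : ℝ) - k n) / ((n:ℝ) - k n) := by
        filter_upwards [eventually_ge_atTop 2] with n hn2
        have hkn : (k n : ℝ) < n := by exact_mod_cast (hk n hn2).2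
        have hn0 : (0:ℝ) < n := by
          have : 0 < n := by omega
          exact_mod_cast this
        have hn0' : (n:ℝ) ≠ 0 := ne_of_gt hn0
        have hnk : (n:ℝ) - k n ≠ 0 := ne_of_gt (by linarith)
        have h4 : 1 - (k n : ℝ)/n ≠ 0 := by
          have : (k n : ℝ)/n < 1 := by rw [div_lt_one hn0]; exact hkn
          linarith
        field_simp
      have h3 : Tendsto (fun n : ℕ => ((cnt a n : ℝ) - k n) / ((n:ℝ) - k n))
          atTop (𝓝 (p a)) := by
        have := Tendsto.congr' heq h2
        simpa using this
      exact h3.eventually (eventually_gt_nhds (by linarith))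
    filter_upwards [hevF, eventually_ge_atTop 2] with n hnF hn2
    obtain ⟨hk1, hk2⟩ := hk n hn2
    -- basic numeric facts
    have hNnat : 1 ≤ n - k n := by omega
    have hNr : ((n - k n : ℕ):ℝ) = (n:ℝ) - k n := by
      rw [Nat.cast_sub hk2.le]
    have hknr : (k n : ℝ) < (n : ℝ) := by exact_mod_cast hk2
    have hNpos : (0:ℝ) < ((n - k n : ℕ):ℝ) := by rw [hNr]; linarith
    set Nr := ((n - k n : ℕ):ℝ) with hNrdef
    -- polynomial facts
    have hPdeg : (Pn ξ n ω).natDegree = n := natDegree_Pn ξ n ω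
    have hPne : Pn ξ n ω ≠ 0 := by
      intro h
      rw [h, natDegree_zero] at hPdeg
      omega
    obtain ⟨hQdeg, hQne⟩ :=
      natDegree_iterate_derivative_eq (p := Pn ξ n ω) (k := k n) (by rw [hPdeg]; omega) hPne
    set Q := derivative^[k n] (Pn ξ n ω) with hQdef
    set R := Q.roots with hRdef
    have hRcard : Multiset.card R = n - k n := by
      rw [hRdef, card_roots_eq, hQdeg, hPdeg]
    -- root counts
    have hcount : ∀ a : ℂ, (Pn ξ n ω).roots.count a = cnt a n := by
      intro a
      rw [roots_Pn, Multiset.count_map, hcnt_def]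
      have hfc : ((Finset.range n).val.filter (fun j => a = ξ j ω))
          = ((Finset.range n).val.filter (fun j => ξ j ω = a)) :=
        Multiset.filter_congr (fun x _ => ⟨fun h => h.symm, fun h => h.symm⟩)
      rw [hfc, ← Finset.filter_val]
      rfl
    have hclow : ∀ a : ℂ, cnt a n - k n ≤ R.count a := by
      intro a
      rw [hRdef, Polynomial.count_roots]
      have h1 := count_roots_iterate_derivative (Pn ξ n ω) (k n) a
      have h2 : rootMultiplicity a (Pn ξ n ω) = cnt a n := by
        rw [← Polynomial.count_roots, hcount a]
      rw [h2] at h1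
      exact h1
    -- decomposition
    obtain ⟨u, hu1, hu2⟩ := multiset_decompose F R (fun x => φ x)
    rw [hRcard] at hu1
    -- real estimates
    set d : ℂ → ℝ := fun a => (R.count a : ℝ) / Nr - p a with hd_def
    have hdlow : ∀ a ∈ F, -δ' < d a := by
      intro a ha
      have h1 : ((cnt a n : ℝ) - k n) ≤ (R.count a : ℝ) := by
        have hA : ((cnt a n - k n : ℕ):ℝ) ≤ (R.count a : ℝ) := by
          exact_mod_cast hclow a
        rcases le_total (k n) (cnt a n) with h | h
        · rw [Nat.cast_sub h] at hA; exact hA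
        · have : (cnt a n : ℝ) ≤ (k n : ℝ) := by exact_mod_cast h
          calc (cnt a n : ℝ) - k n ≤ 0 := by linarith
          _ ≤ (R.count a : ℝ) := Nat.cast_nonneg _
      have h2 : ((cnt a n : ℝ) - k n) / ((n:ℝ) - k n) ≤ (R.count a : ℝ) / Nr := by
        rw [hNr]
        exact (div_le_div_iff_of_pos_right (by linarith)).mpr h1
      have h3 := hnF a ha
      rw [hd_def]
      simp only
      linarith
    have hsumcle : (∑ a ∈ F, (R.count a : ℝ)) ≤ Nr := by
      have h1 : ∑ a ∈ F, R.count a ≤ n - k n := by omega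
      rw [hNrdef]
      calc (∑ a ∈ F, (R.count a : ℝ)) = ((∑ a ∈ F, R.count a : ℕ) : ℝ) := by push_cast; ring
      _ ≤ ((n - k n : ℕ):ℝ) := by exact_mod_cast h1
    have hsumd : ∑ a ∈ F, d a ≤ e := by
      have h1 : ∑ a ∈ F, d a = (∑ a ∈ F, (R.count a : ℝ)) / Nr - ∑ a ∈ F, p a := by
        rw [hd_def, Finset.sum_sub_distrib, Finset.sum_div]
      have h2 : (∑ a ∈ F, (R.count a : ℝ)) / Nr ≤ 1 := by
        rw [div_le_one hNpos]; exact hsumcle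
      rw [h1]
      linarith
    have habsd : ∑ a ∈ F, |d a| ≤ 3 * δ := by
      have h1 : ∀ a ∈ F, |d a| ≤ d a + 2 * δ' := by
        intro a ha
        have := hdlow a ha
        rcases abs_cases (d a) with ⟨h, _⟩ | ⟨h, _⟩ <;> rw [h] <;> linarith
      calc ∑ a ∈ F, |d a| ≤ ∑ a ∈ F, (d a + 2 * δ') := Finset.sum_le_sum h1
      _ = (∑ a ∈ F, d a) + 2 * F.card * δ' := by
          rw [Finset.sum_add_distrib, Finset.sum_const, nsmul_eq_mul]; ring
      _ ≤ e + 2 * δ := by linarith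
      _ ≤ 3 * δ := by linarith
    have hucard : (u.card : ℝ) = Nr - ∑ a ∈ F, (R.count a : ℝ) := by
      have : (u.card : ℝ) + ∑ a ∈ F, (R.count a : ℝ) = Nr := by
        rw [hNrdef]
        exact_mod_cast hu1
      linarith
    have hG : (u.card : ℝ) / Nr ≤ 4 * δ := by
      have h1 : (u.card : ℝ) / Nr = 1 - ∑ a ∈ F, ((R.count a : ℝ) / Nr) := by
        rw [hucard, ← Finset.sum_div]
        field_simp
      have h2 : ∑ a ∈ F, ((R.count a : ℝ) / Nr) = (∑ a ∈ F, p a) + ∑ a ∈ F, d a := by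
        rw [hd_def, ← Finset.sum_add_distrib]
        refine Finset.sum_congr rfl fun a _ => by ring
      have h3 : -(3 * δ) ≤ ∑ a ∈ F, d a := by
        calc -(3 * δ) ≤ -(∑ a ∈ F, |d a|) := by linarith
        _ ≤ ∑ a ∈ F, d a := by
            have := Finset.sum_le_sum (fun a (_ : a ∈ F) => neg_abs_le (d a))
            simpa [Finset.sum_neg_distrib] using this
      rw [h1, h2]
      linarith
    -- the integral
    have hInt : ∫ x, φ x ∂(empMeasure Q (n - k n)) = Nr⁻¹ * ((R.map (fun x => φ x)).sum) := by
      rw [show empMeasure Q (n - k n)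
          = (((n - k n : ℕ) : ℝ≥0∞))⁻¹ • ((Q.roots.map Measure.dirac).sum) from rfl]
      rw [integral_empMeasure]
    rw [hInt, hu2]
    have humap : |(u.map (fun x => φ x)).sum| ≤ u.card * M :=
      abs_multiset_map_sum_le (fun x => φ x) M hφb u
    -- final computation
    have hmain : Nr⁻¹ * ((∑ a ∈ F, (R.count a : ℝ) * φ a) + (u.map (fun x => φ x)).sum) - L
        = (∑ a ∈ F, d a * φ a) + Nr⁻¹ * (u.map (fun x => φ x)).sum
          + ((∑ a ∈ F, p a * φ a) - L) := by
      have h2' : Nr⁻¹ * (∑ a ∈ F, (R.count a : ℝ) * φ a)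
          = ∑ a ∈ F, ((R.count a : ℝ) / Nr) * φ a := by
        rw [Finset.mul_sum]
        refine Finset.sum_congr rfl fun a _ => by ring
      have hd1 : ∀ a ∈ F, d a * φ a = ((R.count a : ℝ) / Nr) * φ a - p a * φ a := by
        intro a _
        simp only [hd_def]
        ring
      rw [Finset.sum_congr rfl hd1, Finset.sum_sub_distrib, mul_add, h2']
      ring
    rw [hmain]
    have hterm1 : |∑ a ∈ F, d a * φ a| ≤ M * (3 * δ) := by
      calc |∑ a ∈ F, d a * φ a| ≤ ∑ a ∈ F, |d a * φ a| := Finset.abs_sum_le_sum_abs _ _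
      _ ≤ ∑ a ∈ F, |d a| * M := by
          refine Finset.sum_le_sum fun a _ => ?_
          rw [abs_mul]
          exact mul_le_mul_of_nonneg_left (hφb a) (abs_nonneg _)
      _ = (∑ a ∈ F, |d a|) * M := by rw [Finset.sum_mul]
      _ ≤ 3 * δ * M := mul_le_mul_of_nonneg_right habsd (by linarith)
      _ = M * (3 * δ) := by ring
    have hterm2 : |Nr⁻¹ * (u.map (fun x => φ x)).sum| ≤ M * (4 * δ) := by
      rw [abs_mul, abs_inv, abs_of_pos hNpos]
      calc Nr⁻¹ * |(u.map (fun x => φ x)).sum| ≤ Nr⁻¹ * (u.card * M) := by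
            exact mul_le_mul_of_nonneg_left humap (by positivity)
      _ = ((u.card : ℝ) / Nr) * M := by ring
      _ ≤ 4 * δ * M := mul_le_mul_of_nonneg_right hG (by linarith)
      _ = M * (4 * δ) := by ring
    have htot := abs_add_three (∑ a ∈ F, d a * φ a)
      (Nr⁻¹ * (u.map (fun x => φ x)).sum) ((∑ a ∈ F, p a * φ a) - L)
    have hMe : M * e ≤ M * δ := mul_le_mul_of_nonneg_left he1.le (by linarith)
    have h8 : M * (3 * δ) + M * (4 * δ) + M * δ = 8 * M * δ := by ring
    have hfin : 8 * M * δ = ε / 2 := by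
      rw [hδdef]
      field_simp
      ring
    calc |(∑ a ∈ F, d a * φ a) + Nr⁻¹ * (u.map (fun x => φ x)).sum
          + ((∑ a ∈ F, p a * φ a) - L)|
        ≤ |∑ a ∈ F, d a * φ a| + |Nr⁻¹ * (u.map (fun x => φ x)).sum|
          + |(∑ a ∈ F, p a * φ a) - L| := htot
    _ ≤ M * (3 * δ) + M * (4 * δ) + M * δ := by linarith [hterm1, hterm2, hLbound, hMe]
    _ = ε / 2 := by rw [h8, hfin]
  rw [Metric.tendsto_atTop]
  intro ε hε
  obtain ⟨N0, hN0⟩ := Filter.eventually_atTop.mp (key ε hε)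
  exact ⟨N0, fun n hn => by rw [Real.dist_eq]; linarith [hN0 n hn]⟩
end

section
/- Let P be a monic complex polynomial of degree n ≥ 1, let 1 ≤ k < n, and set S(z) = P^{(k)}(z)/(k! P(z)). Let u(z) = (αz+β)/(γz+δ) with α,β,γ,δ ∈ ℂ and αδ−βγ ≠ 0, and assume that the preimage u^{-1}(D(0,1)) of the open unit disk is a bounded disk in ℂ (equivalently, γ = 0 or |α| > |γ|). Let a := u^{-1}(0) ∈ ℂ and suppose P(a) ≠ 0 and P^{(k)}(a) ≠ 0. Then Σ_{ρ} log⁻|u(ρ)| − Σ_{ζ} log⁻|u(ζ)| ≤ log sup{ |S(z)| : z ∈ ℂ, |u(z)| = 1 } − log|S(a)|, where the first sum runs over the zeros ρ of P^{(k)} counted with multiplicity, the second over the zeros ζ of P counted with multiplicity, and log⁻|u(ζ)| := 0 when ζ is the pole of u. -/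
open Polynomial Filter Topology
open scoped ENNReal

private lemma multiset_prod_diff (f : ℂ → ℂ → ℂ) (M : Multiset ℂ)
    (h : ∀ t, Differentiable ℂ (f t)) :
    Differentiable ℂ (fun w => (M.map (fun t => f t w)).prod) := by
  induction M using Multiset.induction_on with
  | empty => simpa using differentiable_const (1:ℂ)
  | cons t M ih =>
    simp only [Multiset.map_cons, Multiset.prod_cons]
    exact (h t).mul ih

private lemma multiset_prod_exp (M : Multiset ℂ) (f : ℂ → ℝ) :
    (M.map (fun t => Real.exp (f t))).prod = Real.exp ((M.map f).sum) := by
  induction M using Multiset.induction_on with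
  | empty => simp
  | cons t M ih => simp [ih, Real.exp_add]

private lemma multiset_prod_abs (M : Multiset ℂ) (f : ℂ → ℂ) :
    ‖(M.map f).prod‖ = (M.map (fun t => ‖f t‖)).prod := by
  induction M using Multiset.induction_on with
  | empty => simp
  | cons t M ih => simp [ih]

private lemma multiset_cont_abs (M : Multiset ℂ) :
    Continuous (fun z : ℂ => (M.map (fun t => ‖z - t‖)).prod) := by
  induction M using Multiset.induction_on with
  | empty => simpa using continuous_const
  | cons t M ih =>
    simp only [Multiset.map_cons, Multiset.prod_cons]
    exact ((continuous_norm).comp (continuous_id.sub continuous_const)).mul ih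

private lemma blaschke_abs (c w : ℂ) (hw : ‖w‖ = 1) :
    ‖1 - (starRingEnd ℂ) c * w‖ = ‖w - c‖ := by
  have h1 : (starRingEnd ℂ) w * w = 1 := by
    rw [mul_comm, Complex.mul_conj]
    norm_cast
    rw [Complex.normSq_eq_norm_sq, hw]; norm_num
  calc ‖1 - (starRingEnd ℂ) c * w‖
      = ‖((starRingEnd ℂ) w - (starRingEnd ℂ) c) * w‖ := by rw [sub_mul, h1]
    _ = ‖(starRingEnd ℂ) (w - c)‖ * ‖w‖ := by rw [map_sub, norm_mul]
    _ = ‖w - c‖ := by rw [Complex.norm_conj, hw, mul_one]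


/-- `log⁻ t = max(-log t, 0)`.  With Lean's conventions (`Real.log 0 = 0`, division by
zero equals zero) this gives `log⁻|u(ζ)| = 0` at the pole of `u`, as required. -/
noncomputable def logNeg (t : ℝ) : ℝ := max (-Real.log t) 0

set_option maxHeartbeats 2000000 in
/-- Jensen-type inequality.  For a monic `P` of degree `n`, `1 ≤ k < n`,
`S = P^{(k)}/(k! P)` and a Möbius map `u` whose preimage of the unit disk is a bounded
disk, with `a = u⁻¹(0)` neither a zero of `P` nor of `P^{(k)}`,
`Σ_ρ log⁻|u(ρ)| − Σ_ζ log⁻|u(ζ)| ≤ log sup_{|u(z)|=1} |S(z)| − log |S(a)|`,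
the sums running over roots of `P^{(k)}` resp. `P` with multiplicity, the right-hand
side being an extended real. -/
theorem jensen_inequality_roots
    (n k : ℕ) (hn : 1 ≤ n) (hk1 : 1 ≤ k) (hkn : k < n)
    (P : Polynomial ℂ) (hmonic : P.Monic) (hdeg : P.natDegree = n)
    (α β γ δ : ℂ) (hdet : α * δ - β * γ ≠ 0)
    (hbounded : γ = 0 ∨ ‖γ‖ < ‖α‖)
    (a : ℂ) (ha0 : α * a + β = 0) (ha1 : γ * a + δ ≠ 0)
    (hPa : P.eval a ≠ 0) (hPka : (derivative^[k] P).eval a ≠ 0) :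
    let u : ℂ → ℂ := fun z => (α * z + β) / (γ * z + δ)
    let S : ℂ → ℂ := fun z => (derivative^[k] P).eval z / ((k.factorial : ℂ) * P.eval z)
    ((((derivative^[k] P).roots.map (fun ρ => logNeg ‖u ρ‖)).sum
        - ((P.roots.map (fun ζ => logNeg ‖u ζ‖)).sum) : ℝ) : EReal)
      ≤ (⨆ z ∈ {z : ℂ | ‖u z‖ = 1}, ((Real.log ‖S z‖ : EReal)))
        - ((Real.log ‖S a‖ : EReal)) := by
  intro u S
  classical
  have hu : ∀ t, u t = (α * t + β) / (γ * t + δ) := fun t => rfl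
  have hS : ∀ z, S z = (derivative^[k] P).eval z / ((k.factorial : ℂ) * P.eval z) :=
    fun z => rfl
  set Pk : Polynomial ℂ := derivative^[k] P with hPkdef
  -- basics
  have hα : α ≠ 0 := by
    rcases hbounded with h | h
    · intro h0; apply hdet; rw [h, h0]; ring
    · intro h0; rw [h0] at h; simp at h; exact absurd h (not_lt.mpr (norm_nonneg γ))
  have hPne : P ≠ 0 := hmonic.ne_zero
  have hPkne : Pk ≠ 0 := by intro h; apply hPka; rw [h]; simp
  set T : Multiset ℂ := P.roots with hTdef
  set R : Multiset ℂ := Pk.roots with hRdef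
  set c : ℂ := Pk.leadingCoeff with hc
  have hcne : c ≠ 0 := leadingCoeff_ne_zero.mpr hPkne
  have hPev : ∀ z, P.eval z = (T.map (fun t => z - t)).prod := by
    intro z
    conv_lhs => rw [(IsAlgClosed.splits P).eq_prod_roots_of_monic hmonic]
    rw [eval_multiset_prod, Multiset.map_map]
    congr 1
    apply Multiset.map_congr rfl
    intro t _
    simp
  have hPkev : ∀ z, Pk.eval z = c * (R.map (fun t => z - t)).prod := by
    intro z
    conv_lhs => rw [(IsAlgClosed.splits Pk).eq_prod_roots]
    rw [eval_mul, eval_C, eval_multiset_prod, Multiset.map_map]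
    congr 2
    apply Multiset.map_congr rfl
    intro t _
    simp
  have hcard : Multiset.card R ≤ Multiset.card T := by
    have h1 : Multiset.card T = n :=
      (splits_iff_card_roots.mp (IsAlgClosed.splits P)).trans hdeg
    have h2 : Multiset.card R = Pk.natDegree := by
      rw [hRdef]; exact splits_iff_card_roots.mp (IsAlgClosed.splits Pk)
    have h3 : Pk.natDegree ≤ n - k := by
      rw [hPkdef]
      calc (derivative^[k] P).natDegree ≤ P.natDegree - k := natDegree_iterate_derivative P k
        _ = n - k := by rw [hdeg]
    omega
  set κ : ℕ := Multiset.card T - Multiset.card R with hκ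
  have hfac : (k.factorial : ℂ) ≠ 0 := Nat.cast_ne_zero.mpr (Nat.factorial_ne_zero k)
  have hfacR : (0:ℝ) < (k.factorial : ℝ) := Nat.cast_pos.mpr (Nat.factorial_pos k)
  -- pole and root facts
  have hpole : ∀ t : ℂ, γ * t + δ = 0 → α * t + β ≠ 0 := by
    intro t h1 h2; apply hdet; linear_combination α * h1 - γ * h2
  have hroot_ne : ∀ t : ℂ, t ∈ T ∨ t ∈ R → α * t + β ≠ 0 := by
    intro t ht h2
    have hta : t = a := by
      have h3 : α * (t - a) = 0 := by linear_combination h2 - ha0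
      rcases mul_eq_zero.mp h3 with h | h
      · exact absurd h hα
      · exact sub_eq_zero.mp h
    subst hta
    rcases ht with h | h
    · exact hPa ((mem_roots hPne).mp h)
    · exact hPka ((mem_roots hPkne).mp h)
  -- w-plane machinery
  set A : ℂ → ℂ := fun w => α - γ * w with hAdef
  have hA : ∀ w : ℂ, ‖w‖ ≤ 1 → A w ≠ 0 := by
    intro w hw h0
    rcases hbounded with h | h
    · rw [hAdef] at h0; simp only [h, zero_mul, sub_zero] at h0; exact hα h0
    · have hαw : α = γ * w := by rw [hAdef] at h0; linear_combination h0
      have h1 : ‖α‖ = ‖γ‖ * ‖w‖ := by rw [hαw, norm_mul]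
      nlinarith [norm_nonneg γ, norm_nonneg w]
  set v : ℂ → ℂ := fun w => (δ * w - β) / A w with hvdef
  set e : ℂ → ℂ → ℂ := fun t w => (γ * t + δ) * w - (α * t + β) with hedef
  have ha : a = -β / α := by field_simp; linear_combination ha0
  have hva : v 0 = a := by
    rw [hvdef, hAdef]; simp only
    rw [ha]; norm_num
  have hue : ∀ t : ℂ, γ * t + δ ≠ 0 → (γ * t + δ) * u t = α * t + β := by
    intro t ht; rw [hu]; field_simp
  have huv : ∀ w, A w ≠ 0 → u (v w) = w := by
    intro w hw
    have hAw : α - γ * w ≠ 0 := by rwa [hAdef] at hw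
    rw [hu, hvdef, hAdef]
    simp only
    rw [div_eq_iff]
    · have key : ∀ q : ℂ, q * (α - γ * w) = δ * w - β → α * q + β = w * (γ * q + δ) := by
        intro q hq; linear_combination hq
      exact key _ (div_mul_cancel₀ _ hAw)
    · intro h0
      apply hdet
      have h1 : γ * ((δ * w - β) / (α - γ * w)) + δ = 0 := h0
      field_simp at h1
      linear_combination h1
  have hPvw : ∀ w, A w ≠ 0 →
      P.eval (v w) * A w ^ (Multiset.card T) = (T.map (fun t => e t w)).prod := by
    intro w hw
    rw [hPev (v w)]
    have h1 : (T.map fun t => v w - t) = T.map fun t => e t w / A w := by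
      apply Multiset.map_congr rfl
      intro t _
      rw [hvdef, hedef, hAdef] at *
      simp only
      rw [div_sub' hw, div_eq_div_iff hw hw]
      ring
    rw [h1, Multiset.prod_map_div, Multiset.map_const', Multiset.prod_replicate,
      div_mul_cancel₀]
    exact pow_ne_zero _ hw
  have hPkvw : ∀ w, A w ≠ 0 →
      Pk.eval (v w) * A w ^ (Multiset.card R) = c * (R.map (fun t => e t w)).prod := by
    intro w hw
    rw [hPkev (v w)]
    have h1 : (R.map fun t => v w - t) = R.map fun t => e t w / A w := by
      apply Multiset.map_congr rfl
      intro t _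
      rw [hvdef, hedef, hAdef] at *
      simp only
      rw [div_sub' hw, div_eq_div_iff hw hw]
      ring
    rw [h1, Multiset.prod_map_div, Multiset.map_const', Multiset.prod_replicate,
      ← mul_div_assoc, div_mul_cancel₀]
    exact pow_ne_zero _ hw
  have hSv : ∀ w, A w ≠ 0 → P.eval (v w) ≠ 0 →
      S (v w) = c / (k.factorial : ℂ) * A w ^ κ * ((R.map (fun t => e t w)).prod)
        / ((T.map (fun t => e t w)).prod) := by
    intro w hw hP0
    have h1 : P.eval (v w) = (T.map (fun t => e t w)).prod / A w ^ Multiset.card T := by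
      rw [eq_div_iff (pow_ne_zero _ hw)]; exact hPvw w hw
    have h2 : Pk.eval (v w) = c * (R.map (fun t => e t w)).prod / A w ^ Multiset.card R := by
      rw [eq_div_iff (pow_ne_zero _ hw)]; exact hPkvw w hw
    have hTne : (T.map (fun t => e t w)).prod ≠ 0 := by
      intro h0; apply hP0; rw [h1, h0, zero_div]
    rw [hS, h1, h2]
    have hct : Multiset.card T = Multiset.card R + κ := by rw [hκ]; omega
    rw [hct, pow_add]
    field_simp
  -- predicates and modified factors
  set bd : ℂ → Prop := fun t => γ * t + δ ≠ 0 ∧ ‖u t‖ = 1 with hbddef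
  set inb : ℂ → Prop := fun t => γ * t + δ ≠ 0 ∧ ‖u t‖ < 1 with hinbdef
  set ee : ℂ → ℂ → ℂ := fun t w =>
    if inb t then (γ * t + δ) * (1 - (starRingEnd ℂ) (u t) * w) else e t w with heedef
  have hee_diff : ∀ t, Differentiable ℂ (ee t) := by
    intro t
    rw [heedef]
    by_cases h : inb t
    · simp only [if_pos h]
      exact (differentiable_const _).mul
        ((differentiable_const (1:ℂ)).sub (differentiable_id.const_mul _))
    · simp only [if_neg h, hedef]
      exact (differentiable_id.const_mul _).sub (differentiable_const _)
  have habs_sphere : ∀ t w, ‖w‖ = 1 →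
      ‖ee t w‖ = ‖e t w‖ := by
    intro t w hw
    rw [heedef]
    simp only
    split_ifs with h
    · have he : e t w = (γ * t + δ) * (w - u t) := by
        rw [hedef]; simp only; linear_combination hue t h.1
      rw [he, norm_mul, norm_mul, blaschke_abs _ _ hw]
    · rfl
  have hkey0 : ∀ t : ℂ, α * t + β ≠ 0 →
      ‖ee t 0‖ = ‖e t 0‖ * Real.exp (logNeg (‖u t‖)) := by
    intro t ht
    have he0 : e t 0 = -(α * t + β) := by rw [hedef]; ring
    rw [heedef]
    simp only
    split_ifs with h
    · obtain ⟨h1, h2⟩ := h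
      have habsut : ‖u t‖ = ‖α * t + β‖ / ‖γ * t + δ‖ := by
        rw [hu, norm_div]
      have hpos : 0 < ‖u t‖ := by
        rw [habsut]
        exact div_pos (norm_pos_iff.mpr ht) (norm_pos_iff.mpr h1)
      have hlog : logNeg (‖u t‖) = - Real.log (‖u t‖) := by
        rw [logNeg]
        exact max_eq_left (by simpa using Real.log_nonpos (norm_nonneg _) h2.le)
      rw [hlog, Real.exp_neg, Real.exp_log hpos, he0, norm_neg]
      rw [mul_zero, sub_zero, mul_one]
      rw [habsut]
      field_simp
      exact (div_self (norm_ne_zero_iff.mpr (by rw [mul_comm]; exact ht))).symm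
    · have hlog : logNeg (‖u t‖) = 0 := by
        simp only [hinbdef] at h
        push_neg at h
        by_cases hd : γ * t + δ = 0
        · have h0 : u t = 0 := by rw [hu, hd, div_zero]
          rw [h0]
          simp [logNeg]
        · have h1 : 1 ≤ ‖u t‖ := h hd
          rw [logNeg, max_eq_right]
          simpa using Real.log_nonneg h1
      rw [hlog, Real.exp_zero, mul_one]
  have hee_ne : ∀ t w, ‖w‖ ≤ 1 → ¬ bd t → α * t + β ≠ 0 → ee t w ≠ 0 := by
    intro t w hw hbd hne
    rw [heedef]
    simp only
    split_ifs with h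
    · obtain ⟨h1, h2⟩ := h
      intro h0
      rcases mul_eq_zero.mp h0 with h' | h'
      · exact h1 h'
      · have h3 : (starRingEnd ℂ) (u t) * w = 1 := by linear_combination -h'
        have h4 := congrArg norm h3
        rw [norm_mul, Complex.norm_conj, norm_one] at h4
        nlinarith [norm_nonneg w, norm_nonneg (u t)]
    · simp only [hinbdef] at h
      push_neg at h
      by_cases hd : γ * t + δ = 0
      · rw [hedef]; simp only; rw [hd]
        intro h0
        exact hne (by linear_combination -h0)
      · have h3 : ‖u t‖ ≠ 1 := fun hh => hbd (by rw [hbddef]; exact ⟨hd, hh⟩)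
        have h4 : 1 < ‖u t‖ := lt_of_le_of_ne (h hd) (Ne.symm h3)
        rw [hedef]
        simp only
        intro h0
        have hw' : w = u t := by
          have h5 := hue t hd
          have h6 : (γ * t + δ) * (w - u t) = 0 := by linear_combination h0 - h5
          rcases mul_eq_zero.mp h6 with h' | h'
          · exact absurd h' hd
          · exact sub_eq_zero.mp h'
        rw [hw'] at hw
        linarith
  -- shared circle-path machinery
  have hpath : ∀ w₁ : ℂ, ‖w₁‖ = 1 →
      (∀ᶠ θ : ℝ in 𝓝[>] (0:ℝ), (w₁ * Complex.exp (θ * Complex.I)) ≠ w₁) ∧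
      Tendsto (fun θ : ℝ => w₁ * Complex.exp (θ * Complex.I)) (𝓝[>] (0:ℝ)) (𝓝 w₁) ∧
      ∀ θ : ℝ, ‖w₁ * Complex.exp (θ * Complex.I)‖ = 1 := by
    intro w₁ hw₁
    have hw₁ne : w₁ ≠ 0 := by
      intro h0; rw [h0] at hw₁; simp at hw₁
    refine ⟨?_, ?_, ?_⟩
    · filter_upwards [Ioo_mem_nhdsGT_of_mem (by constructor <;> norm_num : (0:ℝ) ∈ Set.Ico (0:ℝ) 1)]
        with θ hθ heq
      have hexp : Complex.exp (θ * Complex.I) = 1 := by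
        have := mul_left_cancel₀ hw₁ne (heq.trans (mul_one w₁).symm)
        exact this
      obtain ⟨m, hm⟩ := Complex.exp_eq_one_iff.mp hexp
      have hm2 : (θ : ℂ) = (m : ℂ) * (2 * Real.pi) := by
        apply mul_right_cancel₀ Complex.I_ne_zero
        rw [hm]; ring
      have hm3 : θ = (m : ℝ) * (2 * Real.pi) := by exact_mod_cast hm2
      have hπ := Real.pi_gt_three
      rcases lt_trichotomy m 0 with h | h | h
      · have : (m : ℝ) ≤ -1 := by exact_mod_cast Int.le_sub_one_of_lt h
        nlinarith [hθ.1]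
      · rw [h] at hm3; simp at hm3; linarith [hθ.1]
      · have : (1 : ℝ) ≤ (m : ℝ) := by exact_mod_cast h
        nlinarith [hθ.2]
    · have hcont : Continuous (fun θ : ℝ => w₁ * Complex.exp (θ * Complex.I)) :=
        continuous_const.mul (Complex.continuous_exp.comp
          (Complex.continuous_ofReal.mul continuous_const))
      have := hcont.tendsto 0
      simp only [Complex.ofReal_zero, zero_mul, Complex.exp_zero, mul_one] at this
      exact this.mono_left nhdsWithin_le_nhds
    · intro θ
      rw [norm_mul, hw₁, Complex.norm_exp]
      simp
  set Sup : EReal := ⨆ z ∈ {z : ℂ | ‖u z‖ = 1},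
    ((Real.log (‖S z‖) : EReal)) with hSupdef
  have hmemsup : ∀ z : ℂ, ‖u z‖ = 1 →
      ((Real.log (‖S z‖) : EReal)) ≤ Sup := by
    intro z hz
    rw [hSupdef]
    exact le_iSup₂ (f := fun z (_ : z ∈ {z : ℂ | ‖u z‖ = 1}) =>
      ((Real.log (‖S z‖) : EReal))) z hz
  by_cases hcase : ∃ ζ ∈ T, bd ζ ∧ R.count ζ < T.count ζ
  · -- Case A : blow-up, sup = ⊤
    obtain ⟨ζ, hζT, hbdζ, hcnt⟩ := hcase
    have hd : γ * ζ + δ ≠ 0 := by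
      simp only [hbddef] at hbdζ; exact hbdζ.1
    have hζ1 : ‖u ζ‖ = 1 := by
      simp only [hbddef] at hbdζ; exact hbdζ.2
    have hsup : Sup = ⊤ := by
      by_contra hne
      obtain ⟨M, hM1, -⟩ := EReal.lt_iff_exists_real_btwn.mp (Ne.lt_top hne)
      obtain ⟨hev_ne, htend_ω, habs_ω⟩ := hpath (u ζ) hζ1
      have hAw₁ : A (u ζ) ≠ 0 := hA (u ζ) hζ1.le
      have hvw₁ : v (u ζ) = ζ := by
        rw [hvdef]
        simp only
        rw [div_eq_iff hAw₁]
        simp only [hAdef]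
        linear_combination hue ζ hd
      set m : ℕ := T.count ζ with hmdef
      set j : ℕ := R.count ζ with hjdef
      set T' : Multiset ℂ := T.filter (fun t => ¬ t = ζ) with hT'def
      set R' : Multiset ℂ := R.filter (fun t => ¬ t = ζ) with hR'def
      have hTsp : Multiset.replicate m ζ + T' = T := by
        rw [hT'def, hmdef]
        conv_rhs => rw [← Multiset.filter_add_not (fun t => t = ζ) T]
        rw [Multiset.filter_eq']
      have hRsp : Multiset.replicate j ζ + R' = R := by
        rw [hR'def, hjdef]
        conv_rhs => rw [← Multiset.filter_add_not (fun t => t = ζ) R]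
        rw [Multiset.filter_eq']
      have hζT' : ζ ∉ T' := by
        intro h
        rw [hT'def] at h
        exact (Multiset.mem_filter.mp h).2 rfl
      have hζR' : ζ ∉ R' := by
        intro h
        rw [hR'def] at h
        exact (Multiset.mem_filter.mp h).2 rfl
      set G : ℂ → ℝ := fun z => (‖c‖ / (k.factorial : ℝ))
        * ((R'.map (fun t => ‖z - t‖)).prod)
        / ((T'.map (fun t => ‖z - t‖)).prod) with hGdef
      have hT'prod : ((T'.map (fun t => ‖ζ - t‖)).prod) ≠ 0 := by
        apply Multiset.prod_ne_zero
        intro h0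
        obtain ⟨t, ht, ht0⟩ := Multiset.mem_map.mp h0
        apply hζT'
        have : ζ = t := by
          have := norm_eq_zero.mp ht0
          have := sub_eq_zero.mp this
          exact this
        rwa [this]
      have hGcont : ContinuousAt G ζ := by
        rw [hGdef]
        exact ContinuousAt.div
          ((continuous_const.mul (multiset_cont_abs R')).continuousAt)
          ((multiset_cont_abs T').continuousAt) hT'prod
      have hGpos : 0 < G ζ := by
        rw [hGdef]
        simp only
        apply div_pos
        · apply mul_pos
          · exact div_pos (norm_pos_iff.mpr hcne) hfacR
          · apply Multiset.prod_pos
            intro x hx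
            obtain ⟨t, ht, ht0⟩ := Multiset.mem_map.mp hx
            rw [← ht0]
            apply norm_pos_iff.mpr
            intro h0
            exact hζR' (by rw [show ζ = t from sub_eq_zero.mp h0]; exact ht)
        · apply Multiset.prod_pos
          intro x hx
          obtain ⟨t, ht, ht0⟩ := Multiset.mem_map.mp hx
          rw [← ht0]
          apply norm_pos_iff.mpr
          intro h0
          exact hζT' (by rw [show ζ = t from sub_eq_zero.mp h0]; exact ht)
      have hSzform : ∀ z : ℂ, z ≠ ζ → (∀ t ∈ T', z ≠ t) →
          ‖S z‖ = ((‖z - ζ‖)⁻¹) ^ (m - j) * G z := by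
        intro z hz hzT'
        have hPz : P.eval z = (z - ζ) ^ m * (T'.map (fun t => z - t)).prod := by
          rw [hPev]
          conv_lhs => rw [← hTsp]
          rw [Multiset.map_add, Multiset.prod_add, Multiset.map_replicate,
            Multiset.prod_replicate]
        have hPkz : Pk.eval z = c * ((z - ζ) ^ j * (R'.map (fun t => z - t)).prod) := by
          rw [hPkev]
          conv_lhs => rw [← hRsp]
          rw [Multiset.map_add, Multiset.prod_add, Multiset.map_replicate,
            Multiset.prod_replicate]
        have habsz : ‖z - ζ‖ ≠ 0 := norm_ne_zero_iff.mpr (sub_ne_zero.mpr hz)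
        have hT'z : ((T'.map (fun t => ‖z - t‖)).prod) ≠ 0 := by
          apply Multiset.prod_ne_zero
          intro h0
          obtain ⟨t, ht, ht0⟩ := Multiset.mem_map.mp h0
          exact hzT' t ht (sub_eq_zero.mp (norm_eq_zero.mp ht0))
        rw [hS, hPz, hPkz, norm_div, norm_mul, norm_mul, norm_mul, norm_mul, norm_pow,
          norm_pow, multiset_prod_abs, multiset_prod_abs, Complex.norm_natCast, hGdef]
        simp only
        rw [show m = j + (m - j) by omega, pow_add, inv_pow]
        rw [Nat.add_sub_cancel_left]
        field_simp
      set zf : ℝ → ℂ := fun θ => v (u ζ * Complex.exp (θ * Complex.I)) with hzfdef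
      have habs_u_zf : ∀ θ : ℝ, ‖u (zf θ)‖ = 1 := by
        intro θ
        rw [hzfdef]
        simp only
        rw [huv _ (hA _ (habs_ω θ).le)]
        exact habs_ω θ
      have hzf_tend : Tendsto zf (𝓝[>] (0:ℝ)) (𝓝 ζ) := by
        have hv_cont : ContinuousAt v (u ζ) := by
          rw [hvdef]
          apply ContinuousAt.div
          · exact ((continuous_const.mul continuous_id).sub continuous_const).continuousAt
          · rw [hAdef]
            exact (continuous_const.sub (continuous_const.mul continuous_id)).continuousAt
          · exact hAw₁
        have h1 := hv_cont.tendsto.comp htend_ω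
        rw [hvw₁] at h1
        exact h1
      have hzf_ne : ∀ᶠ θ : ℝ in 𝓝[>] (0:ℝ), zf θ ≠ ζ := by
        filter_upwards [hev_ne] with θ hθ h0
        apply hθ
        have h2 : u (zf θ) = u ζ * Complex.exp (θ * Complex.I) := by
          rw [hzfdef]
          simp only
          exact huv _ (hA _ (habs_ω θ).le)
        rw [← h2, h0]
      have hzf_T' : ∀ᶠ θ : ℝ in 𝓝[>] (0:ℝ), ∀ t ∈ T'.toFinset, zf θ ≠ t := by
        rw [eventually_all_finset]
        intro t ht
        apply hzf_tend.eventually_ne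
        intro h0
        exact hζT' (by rw [h0]; exact Multiset.mem_toFinset.mp ht)
      have htendS : Tendsto (fun θ : ℝ => ‖S (zf θ)‖) (𝓝[>] (0:ℝ)) atTop := by
        have h1 : Tendsto (fun θ : ℝ => ‖zf θ - ζ‖) (𝓝[>] (0:ℝ)) (𝓝[>] (0:ℝ)) := by
          rw [tendsto_nhdsWithin_iff]
          constructor
          · have h2 : Tendsto (fun θ : ℝ => zf θ - ζ) (𝓝[>] (0:ℝ)) (𝓝 0) := by
              simpa using hzf_tend.sub_const ζ
            simpa [Function.comp_def] using (continuous_norm.tendsto 0).comp h2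
          · filter_upwards [hzf_ne] with θ hθ
            exact norm_pos_iff.mpr (sub_ne_zero.mpr hθ)
        have h2 : Tendsto (fun θ : ℝ => (‖zf θ - ζ‖)⁻¹) (𝓝[>] (0:ℝ)) atTop :=
          tendsto_inv_nhdsGT_zero.comp h1
        have h3 : Tendsto (fun θ : ℝ => ((‖zf θ - ζ‖)⁻¹) ^ (m - j))
            (𝓝[>] (0:ℝ)) atTop :=
          (tendsto_pow_atTop (n := m - j) (by omega)).comp h2
        have h4 : Tendsto (fun θ : ℝ => G (zf θ)) (𝓝[>] (0:ℝ)) (𝓝 (G ζ)) :=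
          hGcont.tendsto.comp hzf_tend
        have h5 := Filter.Tendsto.atTop_mul_pos hGpos h3 h4
        apply h5.congr'
        filter_upwards [hzf_ne, hzf_T'] with θ hθ1 hθ2
        exact (hSzform (zf θ) hθ1 (fun t ht => hθ2 t (Multiset.mem_toFinset.mpr ht))).symm
      have hlogtend := Real.tendsto_log_atTop.comp htendS
      obtain ⟨θ, hθM⟩ := (hlogtend.eventually (eventually_ge_atTop M)).exists
      have h6 : ((Real.log (‖S (zf θ)‖)) : EReal) ≤ Sup :=
        hmemsup (zf θ) (habs_u_zf θ)
      have h7 : (M : EReal) ≤ Sup := le_trans (by exact_mod_cast hθM) h6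
      exact absurd h7 (not_le.mpr hM1)
    rw [hsup, EReal.top_sub_coe]
    exact le_top
  · -- Case B : maximum modulus
    push_neg at hcase
    -- hcase : ∀ ζ ∈ T, bd ζ → T.count ζ ≤ R.count ζ
    set B : Multiset ℂ := T.filter bd with hBdef
    set T₀ : Multiset ℂ := T.filter (fun t => ¬ bd t) with hT₀def
    have hBmem : ∀ t ∈ B, t ∈ T ∧ bd t := by
      intro t ht
      rw [hBdef] at ht
      exact ⟨(Multiset.mem_filter.mp ht).1, (Multiset.mem_filter.mp ht).2⟩
    have hT₀mem : ∀ t ∈ T₀, t ∈ T ∧ ¬ bd t := by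
      intro t ht
      rw [hT₀def] at ht
      exact ⟨(Multiset.mem_filter.mp ht).1, (Multiset.mem_filter.mp ht).2⟩
    have hBR : B ≤ R := by
      rw [Multiset.le_iff_count]
      intro x
      rw [hBdef, Multiset.count_filter]
      split_ifs with h
      · by_cases hx : x ∈ T
        · exact hcase x hx h
        · simp [Multiset.count_eq_zero_of_notMem hx]
      · exact Nat.zero_le _
    have hTsplit : B + T₀ = T := by rw [hBdef, hT₀def]; exact Multiset.filter_add_not _ _
    have hRsplit : R - B + B = R := tsub_add_cancel_of_le hBR
    set N : ℂ → ℂ := fun w => c / (k.factorial : ℂ) * A w ^ κ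
      * (((R - B).map (fun t => ee t w)).prod) with hNdef
    set D : ℂ → ℂ := fun w => (T₀.map (fun t => ee t w)).prod with hDdef
    set F : ℂ → ℂ := fun w => N w / D w with hFdef
    have hDne : ∀ w : ℂ, ‖w‖ ≤ 1 → D w ≠ 0 := by
      intro w hw
      rw [hDdef]
      apply Multiset.prod_ne_zero
      intro h0
      obtain ⟨t, ht, ht0⟩ := Multiset.mem_map.mp h0
      exact hee_ne t w hw (hT₀mem t ht).2 (hroot_ne t (Or.inl (hT₀mem t ht).1)) ht0
    have hNdiff : Differentiable ℂ N := by
      rw [hNdef]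
      apply Differentiable.mul
      · apply Differentiable.mul (differentiable_const _)
        have : Differentiable ℂ A := by
          rw [hAdef]
          exact differentiable_const α |>.sub (differentiable_id.const_mul γ)
        exact this.pow κ
      · exact multiset_prod_diff ee (R - B) hee_diff
    have hDdiff : Differentiable ℂ D := multiset_prod_diff ee T₀ hee_diff
    have hFdiff : DifferentiableOn ℂ F (Metric.closedBall 0 1) := by
      rw [hFdef]
      apply DifferentiableOn.div hNdiff.differentiableOn hDdiff.differentiableOn
      intro x hx
      exact hDne x (by simpa [Complex.dist_eq] using Metric.mem_closedBall.mp hx)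
    obtain ⟨w₂, hw₂s, hw₂max⟩ := (isCompact_sphere (0:ℂ) 1).exists_isMaxOn
      ⟨1, by simp⟩ ((hFdiff.continuousOn.mono Metric.sphere_subset_closedBall).norm)
    have hw₂1 : ‖w₂‖ = 1 := by simpa [Complex.dist_eq] using hw₂s
    have hmax : ∀ z ∈ Metric.sphere (0:ℂ) 1, ‖F z‖ ≤ ‖F w₂‖ := fun z hz => hw₂max hz
    have hF0le : ‖F 0‖ ≤ ‖F w₂‖ := by
      have hdc : DiffContOnCl ℂ F (Metric.ball 0 1) :=
        DifferentiableOn.diffContOnCl (by rwa [closure_ball (0:ℂ) one_ne_zero])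
      apply Complex.norm_le_of_forall_mem_frontier_norm_le Metric.isBounded_ball hdc
      · intro z hz
        exact hmax z (by rwa [frontier_ball (0:ℂ) one_ne_zero] at hz)
      · rw [closure_ball (0:ℂ) one_ne_zero]
        exact Metric.mem_closedBall_self zero_le_one
    -- the padding identity
    have hpad : ∀ (g : ℂ → ℝ), (∀ t ∈ B, g t ≠ 0) →
        (((R - B).map g).prod) / ((T₀.map g).prod)
          = ((R.map g).prod) / ((T.map g).prod) := by
      intro g hg
      have hBne : ((B.map g)).prod ≠ 0 := by
        apply Multiset.prod_ne_zero
        intro h0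
        obtain ⟨t, ht, ht0⟩ := Multiset.mem_map.mp h0
        exact hg t ht ht0
      have h1 : (R.map g).prod = ((R - B).map g).prod * (B.map g).prod := by
        conv_lhs => rw [← hRsplit]
        rw [Multiset.map_add, Multiset.prod_add]
      have h2 : (T.map g).prod = (T₀.map g).prod * (B.map g).prod := by
        conv_lhs => rw [← hTsplit]
        rw [Multiset.map_add, Multiset.prod_add]
        ring
      rw [h1, h2, mul_div_mul_right _ _ hBne]
    -- |F| = |S ∘ v| on good sphere points
    have hFS : ∀ w, ‖w‖ = 1 → (∀ t ∈ B, e t w ≠ 0) →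
        ‖F w‖ = ‖S (v w)‖ := by
      intro w hw hBw
      have hAw : A w ≠ 0 := hA w hw.le
      have hT₀w : ∀ t ∈ T₀, ee t w ≠ 0 := fun t ht =>
        hee_ne t w hw.le (hT₀mem t ht).2 (hroot_ne t (Or.inl (hT₀mem t ht).1))
      have hTw : ∀ t ∈ T, e t w ≠ 0 := by
        intro t ht
        by_cases hb : bd t
        · exact hBw t (by rw [hBdef]; exact Multiset.mem_filter.mpr ⟨ht, hb⟩)
        · intro h0
          apply hT₀w t (by rw [hT₀def]; exact Multiset.mem_filter.mpr ⟨ht, hb⟩)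
          have h1 := habs_sphere t w hw
          rw [h0, norm_zero] at h1
          exact norm_eq_zero.mp h1
      have hPvne : P.eval (v w) ≠ 0 := by
        intro h0
        have h1 := hPvw w hAw
        rw [h0, zero_mul] at h1
        obtain ⟨t, ht, ht0⟩ := Multiset.mem_map.mp
          (Multiset.prod_eq_zero_iff.mp h1.symm)
        exact hTw t ht ht0
      have e1 : ‖F w‖ = (‖c‖ / (k.factorial : ℝ)
            * ‖A w‖ ^ κ) *
          (((((R - B).map (fun t => ‖e t w‖)).prod))
            / ((T₀.map (fun t => ‖e t w‖)).prod)) := by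
        rw [hFdef]
        simp only
        rw [norm_div, hNdef, hDdef]
        simp only
        rw [norm_mul, norm_mul, norm_div, norm_pow, multiset_prod_abs, multiset_prod_abs,
          Complex.norm_natCast]
        rw [Multiset.map_congr rfl (fun t _ => habs_sphere t w hw),
          Multiset.map_congr rfl (fun t _ => habs_sphere t w hw)]
        ring
      have e2 : ‖S (v w)‖ = (‖c‖ / (k.factorial : ℝ)
            * ‖A w‖ ^ κ) *
          ((((R.map (fun t => ‖e t w‖)).prod))
            / ((T.map (fun t => ‖e t w‖)).prod)) := by
        rw [hSv w hAw hPvne, norm_div, norm_mul, norm_mul, norm_div, norm_pow,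
          multiset_prod_abs, multiset_prod_abs, Complex.norm_natCast]
        ring
      rw [e1, e2, hpad _ (fun t ht => norm_ne_zero_iff.mpr (hBw t ht))]
    -- value at 0
    have hA0 : A 0 ≠ 0 := hA 0 (by simp)
    have hmod : ∀ (M : Multiset ℂ), (∀ t ∈ M, α * t + β ≠ 0) →
        (M.map (fun t => ‖ee t 0‖)).prod
          = (M.map (fun t => ‖e t 0‖)).prod
            * Real.exp ((M.map (fun t => logNeg (‖u t‖))).sum) := by
      intro M hM
      rw [Multiset.map_congr rfl (fun t ht => hkey0 t (hM t ht)), Multiset.prod_map_mul,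
        multiset_prod_exp]
    have he0ne : ∀ t : ℂ, α * t + β ≠ 0 → ‖e t 0‖ ≠ 0 := by
      intro t ht
      apply norm_ne_zero_iff.mpr
      rw [hedef]
      simp only
      intro h0
      exact ht (by linear_combination -h0)
    have hBee0 : ∀ t ∈ B, ‖ee t 0‖ ≠ 0 := by
      intro t ht
      have hbdt : bd t := (hBmem t ht).2
      have hninb : ¬ inb t := by
        simp only [hinbdef]
        simp only [hbddef] at hbdt
        push_neg
        intro _
        rw [hbdt.2]
      apply norm_ne_zero_iff.mpr
      rw [heedef]
      simp only
      rw [if_neg hninb, hedef]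
      simp only
      intro h0
      exact hroot_ne t (Or.inl (hBmem t ht).1) (by linear_combination -h0)
    have hSa_eq : ‖S a‖ = (‖c‖ / (k.factorial : ℝ)
          * ‖A 0‖ ^ κ) *
        ((((R.map (fun t => ‖e t 0‖)).prod))
          / ((T.map (fun t => ‖e t 0‖)).prod)) := by
      have h1 := hSv 0 hA0 (by rw [hva]; exact hPa)
      rw [hva] at h1
      rw [h1, norm_div, norm_mul, norm_mul, norm_div, norm_pow,
        multiset_prod_abs, multiset_prod_abs, Complex.norm_natCast]
      ring
    have hTprodne : ((T.map (fun t => ‖e t 0‖)).prod) ≠ 0 := by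
      apply Multiset.prod_ne_zero
      intro h0
      obtain ⟨t, ht, ht0⟩ := Multiset.mem_map.mp h0
      exact he0ne t (hroot_ne t (Or.inl ht)) ht0
    have hF0 : ‖F 0‖ = ‖S a‖ * Real.exp
        (((R.map (fun t => logNeg (‖u t‖))).sum)
          - ((T.map (fun t => logNeg (‖u t‖))).sum)) := by
      have e1 : ‖F 0‖ = (‖c‖ / (k.factorial : ℝ)
            * ‖A 0‖ ^ κ) *
          (((((R - B).map (fun t => ‖ee t 0‖)).prod))
            / ((T₀.map (fun t => ‖ee t 0‖)).prod)) := by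
        rw [hFdef]
        simp only
        rw [norm_div, hNdef, hDdef]
        simp only
        rw [norm_mul, norm_mul, norm_div, norm_pow, multiset_prod_abs, multiset_prod_abs,
          Complex.norm_natCast]
        ring
      rw [e1, hpad _ hBee0, hmod R (fun t ht => hroot_ne t (Or.inr ht)),
        hmod T (fun t ht => hroot_ne t (Or.inl ht)), hSa_eq, Real.exp_sub]
      rw [mul_div_mul_comm, ← mul_assoc]
    have hSapos : 0 < ‖S a‖ := by
      apply norm_pos_iff.mpr
      rw [hS]
      exact div_ne_zero hPka (mul_ne_zero hfac hPa)
    have hF0pos : 0 < ‖F 0‖ := by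
      rw [hF0]
      exact mul_pos hSapos (Real.exp_pos _)
    have hFw₂pos : 0 < ‖F w₂‖ :=
      lt_of_lt_of_le hF0pos (by simpa using hF0le)
    -- bound the sup
    have hsupb : ((Real.log (‖F w₂‖) : EReal)) ≤ Sup := by
      by_cases hbw : ∀ t ∈ B, e t w₂ ≠ 0
      · rw [hFS w₂ hw₂1 hbw]
        exact hmemsup (v w₂) (by rw [huv w₂ (hA w₂ hw₂1.le)]; exact hw₂1)
      · obtain ⟨hev_ne, htend_ω, habs_ω⟩ := hpath w₂ hw₂1
        have hevB : ∀ᶠ θ : ℝ in 𝓝[>] (0:ℝ),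
            ∀ t ∈ B.toFinset, e t (w₂ * Complex.exp (θ * Complex.I)) ≠ 0 := by
          rw [eventually_all_finset]
          intro t ht
          have htB : t ∈ B := Multiset.mem_toFinset.mp ht
          have hd : γ * t + δ ≠ 0 := by
            have := (hBmem t htB).2
            rw [hbddef] at this
            exact this.1
          have he_form : ∀ w' : ℂ, e t w' = (γ * t + δ) * (w' - u t) := fun w' => by
            rw [hedef]; simp only; linear_combination hue t hd
          by_cases hut : u t = w₂
          · filter_upwards [hev_ne] with θ hθ h0
            rw [he_form] at h0
            rcases mul_eq_zero.mp h0 with h' | h'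
            · exact hd h'
            · exact hθ (by rw [sub_eq_zero.mp h', hut])
          · filter_upwards [htend_ω.eventually_ne (Ne.symm hut)] with θ hθ h0
            rw [he_form] at h0
            rcases mul_eq_zero.mp h0 with h' | h'
            · exact hd h'
            · exact hθ (sub_eq_zero.mp h')
        have hevFS : ∀ᶠ θ : ℝ in 𝓝[>] (0:ℝ),
            ‖F (w₂ * Complex.exp (θ * Complex.I))‖
              = ‖S (v (w₂ * Complex.exp (θ * Complex.I)))‖ := by
          filter_upwards [hevB] with θ hθ
          exact hFS _ (habs_ω θ) (fun t ht => hθ t (Multiset.mem_toFinset.mpr ht))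
        have hcontF : Tendsto (fun θ : ℝ =>
            ‖F (w₂ * Complex.exp (θ * Complex.I))‖) (𝓝[>] (0:ℝ))
            (𝓝 (‖F w₂‖)) := by
          have h2 : ContinuousWithinAt F (Metric.closedBall 0 1) w₂ :=
            hFdiff.continuousOn w₂ (Metric.sphere_subset_closedBall hw₂s)
          have h3 : Tendsto (fun θ : ℝ => w₂ * Complex.exp (θ * Complex.I))
              (𝓝[>] (0:ℝ)) (𝓝[Metric.closedBall 0 1] w₂) := by
            rw [tendsto_nhdsWithin_iff]
            refine ⟨htend_ω, Filter.Eventually.of_forall (fun θ => ?_)⟩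
            rw [Metric.mem_closedBall, Complex.dist_eq, sub_zero]
            exact le_of_eq (habs_ω θ)
          exact (continuous_norm.tendsto _).comp (h2.tendsto.comp h3)
        have hlogtend : Tendsto (fun θ : ℝ =>
            ((Real.log (‖F (w₂ * Complex.exp (θ * Complex.I))‖)) : EReal))
            (𝓝[>] (0:ℝ)) (𝓝 ((Real.log (‖F w₂‖) : EReal))) := by
          rw [EReal.tendsto_coe]
          exact (Real.continuousAt_log hFw₂pos.ne').tendsto.comp hcontF
        apply le_of_tendsto hlogtend
        filter_upwards [hevFS] with θ hθ
        rw [hθ]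
        apply hmemsup
        rw [huv _ (hA _ (habs_ω θ).le)]
        exact habs_ω θ
    -- conclude
    have hlogF0 : Real.log (‖F 0‖)
        = (((R.map (fun t => logNeg (‖u t‖))).sum)
          - ((T.map (fun t => logNeg (‖u t‖))).sum))
          + Real.log (‖S a‖) := by
      rw [hF0, Real.log_mul hSapos.ne' (Real.exp_ne_zero _), Real.log_exp]
      ring
    have hle2 : Real.log (‖F 0‖) ≤ Real.log (‖F w₂‖) :=
      Real.log_le_log hF0pos (by simpa using hF0le)
    have hchain : (((((R.map (fun t => logNeg (‖u t‖))).sum)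
          - ((T.map (fun t => logNeg (‖u t‖))).sum))
          + Real.log (‖S a‖) : ℝ) : EReal) ≤ Sup := by
      refine le_trans ?_ hsupb
      rw [← hlogF0]
      exact_mod_cast hle2
    calc ((((R.map (fun t => logNeg (‖u t‖))).sum)
          - ((T.map (fun t => logNeg (‖u t‖))).sum) : ℝ) : EReal)
        = (((((R.map (fun t => logNeg (‖u t‖))).sum)
          - ((T.map (fun t => logNeg (‖u t‖))).sum))
          + Real.log (‖S a‖) - Real.log (‖S a‖) : ℝ) : EReal) := by
          rw [add_sub_cancel_right]
      _ = (((((R.map (fun t => logNeg (‖u t‖))).sum)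
          - ((T.map (fun t => logNeg (‖u t‖))).sum))
          + Real.log (‖S a‖) : ℝ) : EReal)
          - ((Real.log (‖S a‖) : ℝ) : EReal) := by rw [EReal.coe_sub]
      _ ≤ Sup - ((Real.log (‖S a‖) : ℝ) : EReal) :=
          EReal.sub_le_sub hchain le_rfl
end

section
/- Let μ be any probability measure on ℂ, let ξ_1, ξ_2, … be i.i.d. with law μ, and let P_n(z) = ∏_{j=1}^n (z−ξ_j). Let (k_n) be integers with 1 ≤ k_n < n and (k_n log n)/n → 0. Then for every ε > 0 and for Lebesgue-almost every (a, r) ∈ ℂ × (0,∞): almost surely, for all sufficiently large n, |P_n^{(k_n)}(z)| ≤ e^{ε n} · k_n! · |P_n(z)| for every z on the circle {z : |z−a| = r}. -/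
open MeasureTheory ProbabilityTheory Polynomial Filter Topology
open scoped ENNReal

set_option maxHeartbeats 1000000

open Metric

lemma deriv_prod_linear (s : Finset ℕ) (c : ℕ → ℂ) :
    derivative (∏ j ∈ s, (X - C (c j))) = ∑ b ∈ s, ∏ j ∈ s.erase b, (X - C (c j)) := by
  classical
  induction s using Finset.induction with
  | empty => simp
  | @insert a s ha ih =>

    rw [Finset.prod_insert ha, derivative_mul, ih, derivative_sub, derivative_X, derivative_C,
      sub_zero, one_mul, Finset.sum_insert ha, Finset.erase_insert ha, Finset.mul_sum]
    congr 1
    refine Finset.sum_congr rfl fun b hb => ?_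
    rw [Finset.erase_insert_of_ne (by rintro rfl; exact ha hb),
      Finset.prod_insert (fun h => ha (Finset.mem_of_mem_erase h))]

lemma nat_dF (n k : ℕ) : n * (n - 1).descFactorial k = n.descFactorial (k + 1) := by
  cases n with
  | zero => simp
  | succ m => rw [Nat.succ_sub_one, Nat.succ_descFactorial_succ]


lemma arith_step {A B S d δ : ℝ} {k : ℕ} (hδ : 0 < δ) (hd : 0 ≤ d)
    (h1 : A * δ ^ k ≤ d * B) (h2 : δ * B ≤ S) : A * δ ^ (k + 1) ≤ d * S := by
  have h3 : A * δ ^ k * δ ≤ d * B * δ := mul_le_mul_of_nonneg_right h1 hδ.le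
  have h4 : d * (δ * B) ≤ d * S := mul_le_mul_of_nonneg_left h2 hd
  calc A * δ ^ (k + 1) = A * δ ^ k * δ := by ring
    _ ≤ d * B * δ := h3
    _ = d * (δ * B) := by ring
    _ ≤ d * S := h4

lemma key_bound (k : ℕ) : ∀ (s : Finset ℕ) (c : ℕ → ℂ) (z : ℂ) (δ : ℝ), 0 < δ →
    (∀ j ∈ s, δ ≤ ‖z - c j‖) →
    ‖(derivative^[k] (∏ j ∈ s, (X - C (c j)))).eval z‖ * δ ^ k ≤
      (s.card.descFactorial k : ℝ) * ‖(∏ j ∈ s, (X - C (c j))).eval z‖ := by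
  induction k with
  | zero => intro s c z δ hδ h; simp
  | succ k ih =>
    intro s c z δ hδ h
    rw [Function.iterate_succ_apply, deriv_prod_linear, Polynomial.iterate_derivative_sum,
      Polynomial.eval_finset_sum]
    have step : ∀ b ∈ s,
        ‖(derivative^[k] (∏ j ∈ s.erase b, (X - C (c j)))).eval z‖ * δ ^ (k+1) ≤
        ((s.card - 1).descFactorial k : ℝ) * ‖(∏ j ∈ s, (X - C (c j))).eval z‖ := by
      intro b hb
      have h1 := ih (s.erase b) c z δ hδ (fun j hj => h j (Finset.mem_of_mem_erase hj))
      rw [Finset.card_erase_of_mem hb] at h1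
      have h2 : δ * ‖(∏ j ∈ s.erase b, (X - C (c j))).eval z‖ ≤
          ‖(∏ j ∈ s, (X - C (c j))).eval z‖ := by
        rw [← Finset.mul_prod_erase s _ hb, eval_mul, norm_mul]
        simp only [eval_sub, eval_X, eval_C]
        exact mul_le_mul_of_nonneg_right (h b hb) (norm_nonneg _)
      exact arith_step hδ (Nat.cast_nonneg _) h1 h2
    calc ‖∑ b ∈ s, (derivative^[k] (∏ j ∈ s.erase b, (X - C (c j)))).eval z‖ * δ ^ (k+1)
        ≤ (∑ b ∈ s, ‖(derivative^[k] (∏ j ∈ s.erase b, (X - C (c j)))).eval z‖) * δ ^ (k+1) :=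
          mul_le_mul_of_nonneg_right (norm_sum_le _ _) (by positivity)
      _ = ∑ b ∈ s, ‖(derivative^[k] (∏ j ∈ s.erase b, (X - C (c j)))).eval z‖ * δ ^ (k+1) :=
          Finset.sum_mul _ _ _
      _ ≤ ∑ b ∈ s, ((s.card - 1).descFactorial k : ℝ) *
            ‖(∏ j ∈ s, (X - C (c j))).eval z‖ := by exact Finset.sum_le_sum step
      _ = (s.card * ((s.card - 1).descFactorial k) : ℕ) *
            ‖(∏ j ∈ s, (X - C (c j))).eval z‖ := by
          rw [Finset.sum_const, nsmul_eq_mul]; push_cast; ring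
      _ = _ := by rw [nat_dF]


/-- annulus of width `t` around circle centered `p.1` radius `p.2` -/
def Ann (p : ℂ × ℝ) (t : ℝ) : Set ℂ := {z : ℂ | |‖z - p.1‖ - p.2| ≤ t}

lemma contAnn (p : ℂ × ℝ) : Continuous fun z : ℂ => |‖z - p.1‖ - p.2| :=
  ((continuous_norm.comp (continuous_id.sub continuous_const)).sub continuous_const).abs

lemma annMeas (p : ℂ × ℝ) (t : ℝ) : MeasurableSet (Ann p t) :=
  (contAnn p).measurable measurableSet_Iic

lemma annMono (p : ℂ × ℝ) {t t' : ℝ} (h : t ≤ t') : Ann p t ⊆ Ann p t' :=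
  fun z hz => le_trans hz h

/-- the limsup functional controlling the local dimension of `μ` around the circle -/
noncomputable def GG (μ : Measure ℂ) (p : ℂ × ℝ) : ℝ≥0∞ :=
  Filter.limsup (fun m : ℕ => ((m : ℝ≥0∞) + 1) * μ (Ann p (1 / ((m:ℝ) + 1)))) atTop

lemma measurable_GG (μ : Measure ℂ) [SFinite μ] : Measurable (GG μ) := by
  apply Measurable.limsup
  intro m
  apply Measurable.const_mul
  have hS : MeasurableSet {q : (ℂ × ℝ) × ℂ | |‖q.2 - q.1.1‖ - q.1.2| ≤ 1/((m:ℝ)+1)} := by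
    have hc : Continuous fun q : (ℂ × ℝ) × ℂ => |‖q.2 - q.1.1‖ - q.1.2| :=
      ((continuous_norm.comp (continuous_snd.sub continuous_fst.fst)).sub
        continuous_fst.snd).abs
    exact hc.measurable measurableSet_Iic
  have := measurable_measure_prodMk_left (ν := μ) hS
  exact this

lemma slice_ae (μ : Measure ℂ) [IsProbabilityMeasure μ] (a : ℂ) :
    ∀ᵐ r ∂(volume : Measure ℝ), GG μ (a, r) < ∞ := by
  have hmab : Measurable fun z : ℂ => ‖z - a‖ :=
    (continuous_norm.comp (continuous_id.sub continuous_const)).measurable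
  set ν : Measure ℝ := μ.map (fun z => ‖z - a‖) with hν
  have : IsProbabilityMeasure ν := Measure.isProbabilityMeasure_map hmab.aemeasurable
  have h1 := Besicovitch.ae_tendsto_rnDeriv ν (volume : Measure ℝ)
  have h2 := Measure.rnDeriv_lt_top ν (volume : Measure ℝ)
  filter_upwards [h1, h2] with r hr hfin
  have hAnn : ∀ t : ℝ, μ (Ann (a, r) t) = ν (closedBall r t) := by
    intro t
    rw [hν, Measure.map_apply hmab measurableSet_closedBall]
    congr 1
  have hterm : ∀ m : ℕ, ((m : ℝ≥0∞) + 1) * μ (Ann (a, r) (1 / ((m:ℝ) + 1))) ≤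
      (ν (closedBall r (1 / (m + 1))) / volume (closedBall r (1 / (m + 1)))) * 2 := by
    intro m
    have hm0 : ((m : ℝ≥0∞) + 1) ≠ 0 := ne_of_gt (lt_of_lt_of_le zero_lt_one le_add_self)
    have hmt : ((m : ℝ≥0∞) + 1) ≠ ⊤ :=
      ENNReal.add_ne_top.mpr ⟨ENNReal.natCast_ne_top m, ENNReal.one_ne_top⟩
    have hvol : volume (closedBall r (1 / ((m:ℝ) + 1))) = ENNReal.ofReal (2 * (1 / (m + 1))) :=
      Real.volume_closedBall r _
    have hv0 : volume (closedBall r (1 / ((m:ℝ) + 1))) ≠ 0 := by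
      rw [hvol]; simp only [ne_eq, ENNReal.ofReal_eq_zero, not_le]; positivity
    have hvt : volume (closedBall r (1 / ((m:ℝ) + 1))) ≠ ∞ := by
      rw [hvol]; exact ENNReal.ofReal_ne_top
    have hofr : ENNReal.ofReal (2 * (1 / ((m:ℝ) + 1))) = 2 * ((m : ℝ≥0∞) + 1)⁻¹ := by
      rw [ENNReal.ofReal_mul (by norm_num : (0:ℝ) ≤ 2), one_div,
        ENNReal.ofReal_inv_of_pos (by positivity : (0:ℝ) < (m:ℝ) + 1),
        show ((m:ℝ) + 1) = ((m + 1 : ℕ) : ℝ) by push_cast; ring, ENNReal.ofReal_natCast,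
        ENNReal.ofReal_ofNat]
      push_cast
      ring
    have h2' : ((m : ℝ≥0∞) + 1) * volume (closedBall r (1 / ((m:ℝ) + 1))) ≤ 2 := by
      rw [hvol, hofr, mul_comm (2 : ℝ≥0∞) _, ← mul_assoc, mul_comm ((m : ℝ≥0∞) + 1) _,
        ENNReal.inv_mul_cancel hm0 hmt, one_mul]
    have hcancel : ν (closedBall r (1 / ((m:ℝ) + 1))) =
        (ν (closedBall r (1 / ((m:ℝ) + 1))) / volume (closedBall r (1 / ((m:ℝ) + 1)))) *
          volume (closedBall r (1 / ((m:ℝ) + 1))) := (ENNReal.div_mul_cancel hv0 hvt).symm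
    rw [hAnn]
    nth_rewrite 1 [hcancel]
    rw [← mul_assoc, mul_comm ((m : ℝ≥0∞) + 1) _, mul_assoc]
    exact mul_le_mul_right h2' _
  have hlim : Tendsto (fun m : ℕ =>
      (ν (closedBall r (1 / (m + 1))) / volume (closedBall r (1 / (m + 1)))) * 2) atTop
      (𝓝 (ν.rnDeriv volume r * 2)) := by
    apply ENNReal.Tendsto.mul_const _ (Or.inr (by simp))
    apply hr.comp
    apply tendsto_nhdsWithin_of_tendsto_nhds_of_eventually_within
    · exact tendsto_one_div_add_atTop_nhds_zero_nat
    · exact Eventually.of_forall fun m => Set.mem_Ioi.mpr (by positivity)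
  calc GG μ (a, r) ≤ Filter.limsup (fun m : ℕ =>
        (ν (closedBall r (1 / (m + 1))) / volume (closedBall r (1 / (m + 1)))) * 2) atTop :=
        Filter.limsup_le_limsup (Eventually.of_forall hterm)
    _ = ν.rnDeriv volume r * 2 := hlim.limsup_eq
    _ < ∞ := ENNReal.mul_lt_top hfin (by norm_num)

lemma bad_null (μ : Measure ℂ) [IsProbabilityMeasure μ] :
    (volume : Measure (ℂ × ℝ)) {p : ℂ × ℝ | ¬ GG μ p < ∞} = 0 := by
  have hs : MeasurableSet {p : ℂ × ℝ | ¬ GG μ p < ∞} := by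
    have : {p : ℂ × ℝ | ¬ GG μ p < ∞} = GG μ ⁻¹' {∞} := by
      ext p; simp [not_lt, top_le_iff]
    rw [this]
    exact measurable_GG μ (measurableSet_singleton ∞)
  rw [Measure.volume_eq_prod, Measure.prod_apply hs]
  have hz : ∀ a : ℂ, (volume : Measure ℝ) (Prod.mk a ⁻¹' {p : ℂ × ℝ | ¬ GG μ p < ∞}) = 0 := by
    intro a
    have := slice_ae μ a
    rw [ae_iff] at this
    exact this
  simp only [hz]
  simp

lemma small_scale (μ : Measure ℂ) (p : ℂ × ℝ) (hG : GG μ p < ∞) :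
    ∃ (C : ℝ≥0∞) (M : ℕ), C ≠ ∞ ∧ 1 ≤ M ∧ ∀ t : ℝ, 0 < t → t ≤ 1 / ((M:ℝ) + 1) →
      μ (Ann p t) ≤ C * ENNReal.ofReal (2 * t) := by
  have h1 : ∀ᶠ (m : ℕ) in atTop, ((m : ℝ≥0∞) + 1) * μ (Ann p (1 / ((m:ℝ) + 1))) < GG μ p + 1 :=
    Filter.eventually_lt_of_limsup_lt
      (show Filter.limsup (fun m : ℕ => ((m : ℝ≥0∞) + 1) * μ (Ann p (1 / ((m:ℝ) + 1)))) atTop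
          < GG μ p + 1 from ENNReal.lt_add_right hG.ne one_ne_zero)
  obtain ⟨M0, hM0⟩ := eventually_atTop.mp h1
  refine ⟨GG μ p + 1, max M0 1, ENNReal.add_ne_top.mpr ⟨hG.ne, ENNReal.one_ne_top⟩,
    le_max_right _ _, ?_⟩
  set M := max M0 1 with hMdef
  intro t ht htle
  set q := Nat.floor (1 / t) with hq
  have hMt : ((M:ℝ) + 1) ≤ 1 / t := by
    rw [le_one_div (by positivity) ht]
    exact htle
  have hqM : M + 1 ≤ q := Nat.le_floor (by exact_mod_cast hMt)
  have hq1 : 1 ≤ q := le_trans (by omega) hqM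
  have hqpos : (0:ℝ) < q := by exact_mod_cast hq1
  have hqle : (q : ℝ) ≤ 1 / t := Nat.floor_le (by positivity)
  have htq : t ≤ 1 / (q:ℝ) := by
    rw [le_div_iff₀ hqpos]
    have h1t : t * (1/t) = 1 := by field_simp
    nlinarith [mul_le_mul_of_nonneg_left hqle ht.le]
  have hq2t : 1 / (q:ℝ) ≤ 2 * t := by
    have h2 : (2:ℝ) ≤ 1 / t := le_trans (by exact_mod_cast (by omega : 2 ≤ M + 1)) hMt
    have h2t : 2 * t ≤ 1 := by
      have := (le_div_iff₀ ht).mp h2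
      linarith
    have hfl : 1 / t - 1 < (q:ℝ) := Nat.sub_one_lt_floor (1/t)
    have h3 : 1 / (2 * t) ≤ (q:ℝ) := by
      have hcal : 1/t - 1 - 1/(2*t) = (1 - 2*t)/(2*t) := by field_simp; ring
      have hnn : 0 ≤ 1/t - 1 - 1/(2*t) := by
        rw [hcal]; exact div_nonneg (by linarith) (by positivity)
      linarith
    have h4 := (div_le_iff₀ (by positivity : (0:ℝ) < 2*t)).mp h3
    rw [div_le_iff₀ hqpos]
    nlinarith [h4]
  have happ := hM0 (q - 1) (by omega)
  have hcast1 : (((q - 1 : ℕ) : ℝ≥0∞) + 1) = (q : ℝ≥0∞) := by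
    rw [show ((q - 1 : ℕ) : ℝ≥0∞) = ((q - 1 : ℕ) : ℝ≥0∞) from rfl]
    have : (q - 1) + 1 = q := Nat.succ_pred_eq_of_pos hq1
    exact_mod_cast congrArg (Nat.cast : ℕ → ℝ≥0∞) this
  have hcast2 : (1 : ℝ) / (((q - 1 : ℕ) : ℝ) + 1) = 1 / q := by
    congr 1
    have : (q - 1) + 1 = q := Nat.succ_pred_eq_of_pos hq1
    exact_mod_cast congrArg (Nat.cast : ℕ → ℝ) this
  rw [hcast1, hcast2] at happ
  have hq0 : (q : ℝ≥0∞) ≠ 0 := Nat.cast_ne_zero.mpr (by omega)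
  have hqt : (q : ℝ≥0∞) ≠ ∞ := ENNReal.natCast_ne_top q
  have hmono : μ (Ann p t) ≤ μ (Ann p (1 / q)) := measure_mono (annMono p htq)
  have hdiv : μ (Ann p (1 / q)) ≤ (GG μ p + 1) / q := by
    rw [ENNReal.le_div_iff_mul_le (Or.inl hq0) (Or.inl hqt), mul_comm]
    exact happ.le
  have hinv : ((q : ℝ≥0∞))⁻¹ ≤ ENNReal.ofReal (2 * t) := by
    have : ENNReal.ofReal (1 / (q:ℝ)) ≤ ENNReal.ofReal (2 * t) := ENNReal.ofReal_le_ofReal hq2t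
    rwa [one_div, ENNReal.ofReal_inv_of_pos hqpos, ENNReal.ofReal_natCast] at this
  calc μ (Ann p t) ≤ (GG μ p + 1) / q := le_trans hmono hdiv
    _ = (GG μ p + 1) * ((q : ℝ≥0∞))⁻¹ := by rw [ENNReal.div_eq_inv_mul, mul_comm]
    _ ≤ (GG μ p + 1) * ENNReal.ofReal (2 * t) := mul_le_mul_right hinv _


/-- upper bound.  For any probability measure `μ`, i.i.d. roots, derivative
orders `k_n` with `(k_n log n)/n → 0`, every `ε > 0` and Lebesgue-a.e. circle
`{|z-a| = r}`: almost surely, eventually in `n`,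
`|P_n^{(k_n)}(z)| ≤ e^{εn} k_n! |P_n(z)|` on the whole circle. -/
theorem upper_bound_on_circles
    {Ω : Type*} [MeasureSpace Ω] [IsProbabilityMeasure (ℙ : Measure Ω)]
    (μ : Measure ℂ) [IsProbabilityMeasure μ]
    (ξ : ℕ → Ω → ℂ) (hmeas : ∀ i, Measurable (ξ i))
    (hindep : iIndepFun ξ ℙ)
    (hdist : ∀ i, Measure.map (ξ i) ℙ = μ)
    (k : ℕ → ℕ) (hk : ∀ n, 2 ≤ n → 1 ≤ k n ∧ k n < n)
    (hko : Tendsto (fun n => (k n : ℝ) * Real.log n / n) atTop (𝓝 0)) :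
    ∀ ε : ℝ, 0 < ε → ∀ᵐ p ∂(volume : Measure (ℂ × ℝ)), 0 < p.2 →
      ∀ᵐ ω ∂ℙ, ∀ᶠ n in atTop, ∀ z : ℂ, ‖z - p.1‖ = p.2 →
        ‖(derivative^[k n] (Pn ξ n ω)).eval z‖ ≤
          Real.exp (ε * n) * (k n).factorial * ‖(Pn ξ n ω).eval z‖ := by
  intro ε hε
  have hGae : ∀ᵐ p ∂(volume : Measure (ℂ × ℝ)), GG μ p < ∞ := by
    rw [ae_iff]; exact bad_null μ
  filter_upwards [hGae] with p hG _hr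
  obtain ⟨C, M, hC, hM1, hsmall⟩ := small_scale μ p hG
  set δ : ℕ → ℝ := fun n => Real.exp (-(ε/2) * n / k n) with hδdef
  have hδpos : ∀ n, 0 < δ n := fun n => Real.exp_pos _
  have hev : ∀ᶠ (n : ℕ) in atTop, (k n : ℝ) * Real.log n / n < ε/8 :=
    hko.eventually (gt_mem_nhds (by linarith : (0:ℝ) < ε/8))
  have hklog : ∀ᶠ (n : ℕ) in atTop, (k n : ℝ) * Real.log n ≤ ε/8 * n := by
    filter_upwards [hev, eventually_ge_atTop 1] with n h1 h2
    have hn : (0:ℝ) < n := by exact_mod_cast h2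
    rw [div_lt_iff₀ hn] at h1
    linarith
  obtain ⟨N1, hN1⟩ := eventually_atTop.mp hklog
  set N := max N1 (max 2 (M + 1)) with hNdef
  have hprop : ∀ n, N ≤ n → δ n ≤ ((n:ℝ)^4)⁻¹ ∧ δ n ≤ 1 / ((M:ℝ) + 1) := by
    intro n hn
    have h2n : 2 ≤ n := le_trans (le_trans (le_max_left 2 (M+1)) (le_max_right N1 _)) hn
    have hMn : M + 1 ≤ n := le_trans (le_trans (le_max_right 2 (M+1)) (le_max_right N1 _)) hn
    have hkl := hN1 n (le_trans (le_max_left _ _) hn)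
    have hk1 : 1 ≤ k n := (hk n h2n).1
    have hkpos : (0:ℝ) < k n := by exact_mod_cast hk1
    have hnpos : (0:ℝ) < n := by exact_mod_cast (by omega : 0 < n)
    have h1n : (1:ℝ) ≤ n := by exact_mod_cast (by omega : 1 ≤ n)
    have hlogn : 0 ≤ Real.log n := Real.log_nonneg h1n
    have h4 : δ n ≤ ((n:ℝ)^4)⁻¹ := by
      have harg : -(ε/2) * n / k n ≤ -(4 * Real.log n) := by
        rw [div_le_iff₀ hkpos]
        nlinarith [hkl]
      have hexp := Real.exp_le_exp.mpr harg
      have hid : Real.exp (-(4 * Real.log n)) = ((n:ℝ)^4)⁻¹ := by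
        rw [Real.exp_neg]
        congr 1
        rw [show (4:ℝ) * Real.log n = ((4:ℕ):ℝ) * Real.log n by norm_num,
          Real.exp_nat_mul, Real.exp_log hnpos]
      calc δ n ≤ Real.exp (-(4 * Real.log n)) := hexp
        _ = ((n:ℝ)^4)⁻¹ := hid
    have hn4 : ((n:ℝ)^4)⁻¹ ≤ 1 / ((M:ℝ) + 1) := by
      rw [one_div]
      apply inv_anti₀ (by positivity)
      calc ((M:ℝ) + 1) ≤ n := by exact_mod_cast hMn
        _ ≤ (n:ℝ)^4 := le_self_pow₀ h1n (by norm_num)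
    exact ⟨h4, le_trans h4 hn4⟩
  set Q : ℕ → Set Ω :=
    fun n => {ω | N ≤ n ∧ ∃ j < n, |‖ξ j ω - p.1‖ - p.2| ≤ δ n} with hQdef
  have hQbound : ∀ n, ℙ (Q n) ≤ C * ENNReal.ofReal (2 * ((n:ℝ)^3)⁻¹) := by
    intro n
    by_cases hn : N ≤ n
    · have hsub : Q n ⊆ ⋃ j ∈ Finset.range n, ξ j ⁻¹' (Ann p (δ n)) := by
        rintro ω ⟨-, j, hj, hωj⟩
        exact Set.mem_biUnion (Finset.mem_range.mpr hj) hωj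
      have hPj : ∀ j, ℙ (ξ j ⁻¹' (Ann p (δ n))) = μ (Ann p (δ n)) := by
        intro j
        rw [← hdist j, Measure.map_apply (hmeas j) (annMeas p (δ n))]
      have hnR1 : (1:ℝ) ≤ n := by
        have : 2 ≤ n := le_trans (le_trans (le_max_left 2 (M+1)) (le_max_right N1 _)) hn
        exact_mod_cast (by omega : 1 ≤ n)
      have hreal : (n:ℝ) * (2 * (((n:ℝ)^4)⁻¹)) = 2 * ((n:ℝ)^3)⁻¹ := by
        have hne : (n:ℝ) ≠ 0 := by linarith
        field_simp
      calc ℙ (Q n) ≤ ∑ j ∈ Finset.range n, ℙ (ξ j ⁻¹' (Ann p (δ n))) :=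
            le_trans (measure_mono hsub) (measure_biUnion_finset_le _ _)
        _ = (n : ℝ≥0∞) * μ (Ann p (δ n)) := by
            simp only [hPj]
            rw [Finset.sum_const, Finset.card_range, nsmul_eq_mul]
        _ ≤ (n : ℝ≥0∞) * (C * ENNReal.ofReal (2 * δ n)) :=
            mul_le_mul_right (hsmall (δ n) (hδpos n) (hprop n hn).2) _
        _ ≤ (n : ℝ≥0∞) * (C * ENNReal.ofReal (2 * (((n:ℝ)^4)⁻¹))) := by
            apply mul_le_mul_right
            apply mul_le_mul_right
            apply ENNReal.ofReal_le_ofReal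
            have := (hprop n hn).1
            linarith
        _ = C * ((n : ℝ≥0∞) * ENNReal.ofReal (2 * (((n:ℝ)^4)⁻¹))) := by ring
        _ = C * ENNReal.ofReal (2 * ((n:ℝ)^3)⁻¹) := by
            rw [← ENNReal.ofReal_natCast n, ← ENNReal.ofReal_mul (Nat.cast_nonneg n), hreal]
    · have hQn : Q n = ∅ := by
        ext ω
        simp only [hQdef, Set.mem_setOf_eq, Set.mem_empty_iff_false, iff_false, not_and]
        intro h; exact absurd h hn
      simp [hQn]
  have hsum : (∑' n, ℙ (Q n)) ≠ ∞ := by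
    have hle : ∑' n, ℙ (Q n) ≤ C * ENNReal.ofReal (∑' (n:ℕ), 2 * ((n:ℝ)^3)⁻¹) := by
      calc ∑' n, ℙ (Q n) ≤ ∑' (n : ℕ), C * ENNReal.ofReal (2 * ((n:ℝ)^3)⁻¹) :=
            ENNReal.tsum_le_tsum hQbound
        _ = C * ∑' (n : ℕ), ENNReal.ofReal (2 * ((n:ℝ)^3)⁻¹) := ENNReal.tsum_mul_left
        _ = C * ENNReal.ofReal (∑' (n:ℕ), 2 * ((n:ℝ)^3)⁻¹) := by
            rw [ENNReal.ofReal_tsum_of_nonneg (fun n => by positivity)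
              ((Real.summable_nat_pow_inv.mpr (by norm_num)).mul_left 2)]
    exact ne_top_of_le_ne_top (ENNReal.mul_ne_top hC ENNReal.ofReal_ne_top) hle
  have hBC : ∀ᵐ ω ∂ℙ, ∀ᶠ n in atTop, ω ∉ Q n := MeasureTheory.ae_eventually_notMem hsum
  filter_upwards [hBC] with ω hω
  filter_upwards [hω, eventually_ge_atTop N] with n hQn hNn
  intro z hz
  have h2n : 2 ≤ n := le_trans (le_trans (le_max_left 2 (M+1)) (le_max_right N1 _)) hNn
  have hnpos : (0:ℝ) < n := by exact_mod_cast (by omega : 0 < n)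
  have hkn1 : 1 ≤ k n := (hk n h2n).1
  have hkne : ((k n : ℕ) : ℝ) ≠ 0 := by
    have : (0:ℝ) < k n := by exact_mod_cast hkn1
    linarith
  simp only [hQdef, Set.mem_setOf_eq] at hQn
  push_neg at hQn
  have hroots : ∀ j ∈ Finset.range n, δ n ≤ ‖z - ξ j ω‖ := by
    intro j hj
    have hjn := Finset.mem_range.mp hj
    have hfar : δ n < |‖ξ j ω - p.1‖ - p.2| := hQn hNn j hjn
    have htri : |‖z - p.1‖ - ‖ξ j ω - p.1‖| ≤
        ‖z - ξ j ω‖ := by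
      have h := abs_norm_sub_norm_le (z - p.1) (ξ j ω - p.1)
      simpa [sub_sub_sub_cancel_right] using h
    rw [hz] at htri
    have he : |p.2 - ‖ξ j ω - p.1‖| = |‖ξ j ω - p.1‖ - p.2| :=
      abs_sub_comm _ _
    rw [he] at htri
    linarith
  have hkey : ‖(derivative^[k n] (Pn ξ n ω)).eval z‖ * (δ n) ^ (k n) ≤
      ((Finset.range n).card.descFactorial (k n) : ℝ) *
        ‖(Pn ξ n ω).eval z‖ :=
    key_bound (k n) (Finset.range n) (fun j => ξ j ω) z (δ n) (hδpos n) hroots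
  rw [Finset.card_range] at hkey
  have hexp2 : (δ n) ^ (k n) = Real.exp (-(ε/2) * n) := by
    simp only [hδdef]
    rw [← Real.exp_nat_mul]
    congr 1
    field_simp
  have hdf : ((n.descFactorial (k n) : ℕ) : ℝ) ≤ Real.exp ((k n : ℝ) * Real.log n) := by
    rw [Real.exp_nat_mul, Real.exp_log hnpos]
    exact_mod_cast Nat.descFactorial_le_pow n (k n)
  have hlog2 : Real.exp ((k n : ℝ) * Real.log n) ≤ Real.exp (ε/2 * n) := by
    apply Real.exp_le_exp.mpr
    have h8 := hN1 n (le_trans (le_max_left _ _) hNn)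
    nlinarith
  have hBnn : 0 ≤ ‖(Pn ξ n ω).eval z‖ := norm_nonneg _
  have hmain : ‖(derivative^[k n] (Pn ξ n ω)).eval z‖ * Real.exp (-(ε/2) * n) ≤
      Real.exp (ε/2 * n) * ‖(Pn ξ n ω).eval z‖ := by
    rw [← hexp2]
    refine hkey.trans ?_
    exact mul_le_mul_of_nonneg_right (hdf.trans hlog2) hBnn
  have hone : (1:ℝ) ≤ (k n).factorial := by exact_mod_cast (k n).factorial_pos
  calc ‖(derivative^[k n] (Pn ξ n ω)).eval z‖
      = (‖(derivative^[k n] (Pn ξ n ω)).eval z‖ * Real.exp (-(ε/2) * n)) *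
          Real.exp (ε/2 * n) := by
        rw [mul_assoc, ← Real.exp_add, show -(ε/2) * (n:ℝ) + ε/2 * n = 0 by ring,
          Real.exp_zero, mul_one]
    _ ≤ (Real.exp (ε/2 * n) * ‖(Pn ξ n ω).eval z‖) * Real.exp (ε/2 * n) :=
        mul_le_mul_of_nonneg_right hmain (Real.exp_pos _).le
    _ = Real.exp (ε * n) * ‖(Pn ξ n ω).eval z‖ := by
        rw [mul_right_comm, ← Real.exp_add, show ε/2 * (n:ℝ) + ε/2 * n = ε * n by ring]
    _ ≤ Real.exp (ε * n) * (k n).factorial * ‖(Pn ξ n ω).eval z‖ := by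
        exact mul_le_mul_of_nonneg_right
          (le_mul_of_one_le_right (Real.exp_pos _).le hone) hBnn
end

section
/- Let R > 0, q > 0, r₀ ∈ (0,1), let ν be a finite Borel measure on ℂ supported in the closed disk D(0,R), and suppose ν(D(x,r)) ≤ r^q for all x ∈ ℂ and all r ∈ (0, r₀). Let a ∈ ℂ. Then there exist constants C > 0 and γ₀ > 0 (depending only on a, R, q, r₀) such that for all γ ∈ (0, γ₀) and all w ∈ ℂ, ν({ x ∈ ℂ : x ≠ a and |1/(a−x) − w| ≤ γ }) ≤ C·γ^q. -/
open MeasureTheory Filter Topology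
open scoped ENNReal

/-- a Frostman-type bound `ν(D(x,r)) ≤ r^q` for a finite measure `ν`
supported in `D(0,R)` transfers through the inversion `x ↦ 1/(a-x)`: for all small `γ`
and every `w ∈ ℂ`, `ν{x ≠ a : |1/(a-x) - w| ≤ γ} ≤ C γ^q`. -/
theorem frostman_through_inversion
    (R q r₀ : ℝ) (hR : 0 < R) (hq : 0 < q) (hr₀ : r₀ ∈ Set.Ioo (0 : ℝ) 1)
    (ν : Measure ℂ) [IsFiniteMeasure ν]
    (hsupp : ν (Metric.closedBall 0 R)ᶜ = 0)
    (hfrost : ∀ x : ℂ, ∀ r : ℝ, 0 < r → r < r₀ →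
      ν (Metric.ball x r) ≤ ENNReal.ofReal (r ^ q))
    (a : ℂ) :
    ∃ C : ℝ, 0 < C ∧ ∃ γ₀ : ℝ, 0 < γ₀ ∧
      ∀ γ : ℝ, 0 < γ → γ < γ₀ → ∀ w : ℂ,
        ν {x : ℂ | x ≠ a ∧ ‖(a - x)⁻¹ - w‖ ≤ γ}
          ≤ ENNReal.ofReal (C * γ ^ q) := by
  obtain ⟨hr₀0, hr₀1⟩ := hr₀
  set M : ℝ := ‖a‖ + R with hMdef
  have hM0 : 0 < M := by positivity
  have hC0 : (0:ℝ) < (3 * M ^ 2) ^ q := Real.rpow_pos_of_pos (by positivity) q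
  refine ⟨(3 * M ^ 2) ^ q, hC0, r₀ / (3 * M ^ 2), by positivity, ?_⟩
  intro γ hγ0 hγlt w
  set S := {x : ℂ | x ≠ a ∧ ‖(a - x)⁻¹ - w‖ ≤ γ} with hSdef
  have habs : ∀ x ∈ Metric.closedBall (0:ℂ) R, ‖a - x‖ ≤ M := by
    intro x hx
    have hx' : ‖x‖ ≤ R := by
      simpa [Complex.dist_eq] using Metric.mem_closedBall.mp hx
    calc ‖a - x‖ ≤ ‖a‖ + ‖x‖ := by
          simpa [sub_eq_add_neg] using norm_add_le a (-x)
      _ ≤ M := by simp [hMdef]; linarith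
  have hfin : ν S ≤ ν (S ∩ Metric.closedBall 0 R) := by
    calc ν S ≤ ν ((S ∩ Metric.closedBall 0 R) ∪ (Metric.closedBall 0 R)ᶜ) := by
          apply measure_mono
          intro x hx
          by_cases hxB : x ∈ Metric.closedBall (0:ℂ) R
          · exact Or.inl ⟨hx, hxB⟩
          · exact Or.inr hxB
      _ ≤ ν (S ∩ Metric.closedBall 0 R) + ν (Metric.closedBall 0 R)ᶜ :=
          measure_union_le _ _
      _ = ν (S ∩ Metric.closedBall 0 R) := by rw [hsupp, add_zero]
  by_cases hne : (S ∩ Metric.closedBall 0 R).Nonempty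
  · obtain ⟨x₀, hx₀S, hx₀B⟩ := hne
    have key : S ∩ Metric.closedBall 0 R ⊆ Metric.ball x₀ (3 * M ^ 2 * γ) := by
      rintro x ⟨hxS, hxB⟩
      obtain ⟨hxa, hxw⟩ := hxS
      obtain ⟨hx₀a, hx₀w⟩ := hx₀S
      have hu : a - x ≠ 0 := sub_ne_zero.mpr (fun h => hxa h.symm)
      have hv : a - x₀ ≠ 0 := sub_ne_zero.mpr (fun h => hx₀a h.symm)
      have hfact : x - x₀ = (a - x) * (a - x₀) * ((a - x)⁻¹ - (a - x₀)⁻¹) := by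
        field_simp
        ring
      have hdiff : ‖(a - x)⁻¹ - (a - x₀)⁻¹‖ ≤ 2 * γ := by
        calc ‖(a - x)⁻¹ - (a - x₀)⁻¹‖
            ≤ ‖(a - x)⁻¹ - w‖ + ‖w - (a - x₀)⁻¹‖ := by
              simpa using norm_sub_le_norm_sub_add_norm_sub ((a - x)⁻¹) w ((a - x₀)⁻¹)
          _ ≤ γ + γ := by
              have : ‖w - (a - x₀)⁻¹‖ ≤ γ := by
                rwa [← norm_sub_rev] at hx₀w
              linarith
          _ = 2 * γ := by ring
      have hdist : dist x x₀ ≤ M * M * (2 * γ) := by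
        rw [Complex.dist_eq, hfact]
        rw [norm_mul, norm_mul]
        exact mul_le_mul (mul_le_mul (habs x hxB) (habs x₀ hx₀B)
          (norm_nonneg _) (le_trans (norm_nonneg _) (habs x hxB)))
          hdiff (norm_nonneg _) (by positivity)
      have hp : 0 < M ^ 2 * γ := by positivity
      have : M * M * (2 * γ) < 3 * M ^ 2 * γ := by nlinarith [hp]
      exact Metric.mem_ball.mpr (lt_of_le_of_lt hdist this)
    have hrpos : 0 < 3 * M ^ 2 * γ := by positivity
    have hrlt : 3 * M ^ 2 * γ < r₀ := by
      have := (lt_div_iff₀ (by positivity : (0:ℝ) < 3 * M ^ 2)).mp hγlt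
      nlinarith
    calc ν S ≤ ν (S ∩ Metric.closedBall 0 R) := hfin
      _ ≤ ν (Metric.ball x₀ (3 * M ^ 2 * γ)) := measure_mono key
      _ ≤ ENNReal.ofReal ((3 * M ^ 2 * γ) ^ q) := hfrost x₀ _ hrpos hrlt
      _ = ENNReal.ofReal ((3 * M ^ 2) ^ q * γ ^ q) := by
          rw [Real.mul_rpow (by positivity) hγ0.le]
  · rw [Set.not_nonempty_iff_eq_empty] at hne
    calc ν S ≤ ν (S ∩ Metric.closedBall 0 R) := hfin
      _ = 0 := by rw [hne, measure_empty]
      _ ≤ _ := bot_le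
end

section
/- Let μ be a probability measure on ℂ satisfying the Doeblin condition with parameters c₀, r₀ ∈ (0,∞) and z₀ ∈ ℂ, and let a ∈ ℂ with a ≠ z₀. Let ν_a be the law of 1/(a−ξ) where ξ ∼ μ (with any fixed convention at ξ = a, e.g. value 0). Then there exist c_a ∈ (0,1], r_a > 0, w_a ∈ ℂ, and a Borel probability measure η on ℂ such that ν_a = c_a·λ_a + (1−c_a)·η, where λ_a is the uniform probability measure on the disk D(w_a, r_a) (normalized Lebesgue measure on that disk). Equivalently, 1/(a−ξ) has the same distribution as εZ + (1−ε)W, where ε ∼ Bernoulli(c_a), Z ∼ Uniform(D(w_a,r_a)), W ∼ η are independent. -/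
open MeasureTheory Filter Topology
open scoped ENNReal

lemma det_complex_smulRight (c : ℂ) :
    ((ContinuousLinearMap.smulRight (1 : ℂ →L[ℂ] ℂ) c).restrictScalars ℝ).det
      = Complex.normSq c := by
  have h : (((ContinuousLinearMap.smulRight (1 : ℂ →L[ℂ] ℂ) c).restrictScalars ℝ)
      : ℂ →ₗ[ℝ] ℂ) = Algebra.lmul ℝ ℂ c := by
    apply LinearMap.ext; intro z
    simp [mul_comm]
  rw [ContinuousLinearMap.det, h, ← Algebra.norm_apply, Algebra.norm_complex_apply]

/-- Nummelin splitting.  If `μ` satisfies the Doeblin condition with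
parameters `c₀, r₀, z₀` and `a ≠ z₀`, then the law `ν_a` of `1/(a-ξ)`, `ξ ∼ μ` (with
Lean's convention `1/0 = 0` at `ξ = a`) decomposes as
`ν_a = c_a · Unif(D(w_a,r_a)) + (1-c_a) · η` for some `c_a ∈ (0,1]`, `r_a > 0`,
`w_a ∈ ℂ` and a Borel probability measure `η`. -/
theorem nummelin_splitting
    (μ : Measure ℂ) [IsProbabilityMeasure μ]
    (c₀ r₀ : ℝ) (z₀ : ℂ) (hc₀ : 0 < c₀) (hr₀ : 0 < r₀)
    (hdoeblin : ∀ A : Set ℂ, MeasurableSet A → A ⊆ Metric.ball z₀ r₀ →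
      ENNReal.ofReal c₀ * volume A ≤ μ A)
    (a : ℂ) (ha : a ≠ z₀) :
    ∃ ca : ℝ, ca ∈ Set.Ioc (0 : ℝ) 1 ∧
    ∃ ra : ℝ, 0 < ra ∧ ∃ wa : ℂ, ∃ η : Measure ℂ, IsProbabilityMeasure η ∧
      Measure.map (fun x : ℂ => (a - x)⁻¹) μ =
        ENNReal.ofReal ca •
            ((volume (Metric.ball wa ra))⁻¹ • volume.restrict (Metric.ball wa ra)) +
          ENNReal.ofReal (1 - ca) • η := by
  classical
  set f : ℂ → ℂ := fun x => (a - x)⁻¹ with hf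
  have hfm : Measurable f := (measurable_const.sub measurable_id).inv
  set ν : Measure ℂ := Measure.map f μ with hν
  have hνprob : IsProbabilityMeasure ν := Measure.isProbabilityMeasure_map hfm.aemeasurable
  set w : ℂ := (a - z₀)⁻¹ with hw
  have hw0 : w ≠ 0 := inv_ne_zero (sub_ne_zero.mpr ha)
  set g : ℂ → ℂ := fun y => a - y⁻¹ with hg
  have hgw : g w = z₀ := by simp [hg, hw]
  have hgc : ContinuousAt g w := continuousAt_const.sub (continuousAt_inv₀ hw0)
  obtain ⟨δ, hδpos, hδ⟩ := Metric.continuousAt_iff.mp hgc r₀ hr₀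
  set r : ℝ := min (δ / 2) (‖w‖ / 2) with hrdef
  have hwnorm : 0 < ‖w‖ := norm_pos_iff.mpr hw0
  have hrpos : 0 < r := lt_min (by linarith) (by linarith)
  have hball0 : ∀ y ∈ Metric.ball w r, y ≠ 0 := by
    intro y hy h0
    rw [Metric.mem_ball, h0, dist_comm, dist_zero_right] at hy
    have : r ≤ ‖w‖ / 2 := min_le_right _ _
    have : ‖w‖ > 0 := norm_pos_iff.mpr hw0
    linarith
  have himg : ∀ y ∈ Metric.ball w r, g y ∈ Metric.ball z₀ r₀ := by
    intro y hy
    rw [Metric.mem_ball] at hy ⊢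
    have : dist y w < δ := lt_of_lt_of_le hy (le_trans (min_le_left _ _) (by linarith))
    have := hδ this
    rwa [hgw] at this
  set M : ℝ := ‖w‖ + r with hM
  have hMpos : 0 < M := by positivity
  set c' : ℝ := c₀ * (M ^ 4)⁻¹ with hc'
  have hc'pos : 0 < c' := by positivity
  -- the key lower bound
  have key : ∀ A : Set ℂ, MeasurableSet A → A ⊆ Metric.ball w r →
      ENNReal.ofReal c' * volume A ≤ ν A := by
    intro A hA hAsub
    have hA0 : ∀ y ∈ A, y ≠ 0 := fun y hy => hball0 y (hAsub hy)
    -- preimage equals image under g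
    have hpre : f ⁻¹' A = g '' A := by
      ext x
      constructor
      · intro hx
        have hx' : (a - x)⁻¹ ∈ A := hx
        have hne : a - x ≠ 0 := by
          intro h0
          exact hA0 _ hx' (by rw [h0, inv_zero])
        refine ⟨(a - x)⁻¹, hx', ?_⟩
        simp [hg, inv_inv, hne]
      · rintro ⟨y, hy, rfl⟩
        have hy0 : y ≠ 0 := hA0 y hy
        have : f (g y) = y := by
          simp [hf, hg]
        simpa [Set.mem_preimage, this] using hy
    have hpre_meas : MeasurableSet (g '' A) := hpre ▸ hfm hA
    -- derivative of g on A
    set F : ℂ → ℂ →L[ℝ] ℂ := fun y =>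
      (ContinuousLinearMap.smulRight (1 : ℂ →L[ℂ] ℂ) ((y ^ 2)⁻¹)).restrictScalars ℝ with hF
    have hderiv : ∀ y ∈ A, HasFDerivWithinAt g (F y) A y := by
      intro y hy
      have hy0 : y ≠ 0 := hA0 y hy
      have h1 : HasDerivAt (fun y : ℂ => a - y⁻¹) ((y ^ 2)⁻¹) y := by
        have := (hasDerivAt_inv hy0).const_sub a
        simpa using this
      exact (h1.hasFDerivAt.restrictScalars ℝ).hasFDerivWithinAt
    have hinj : Set.InjOn g A := by
      intro y1 h1 y2 h2 he
      exact inv_injective (sub_right_injective he)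
    have hvol : volume (g '' A) = ∫⁻ y in A, ENNReal.ofReal |(F y).det| := by
      exact (lintegral_abs_det_fderiv_eq_addHaar_image volume hA hderiv hinj).symm
    have hdetlb : ∀ y ∈ A, ENNReal.ofReal ((M ^ 4)⁻¹) ≤ ENNReal.ofReal |(F y).det| := by
      intro y hy
      have hy0 : y ≠ 0 := hA0 y hy
      have hdet : (F y).det = Complex.normSq ((y ^ 2)⁻¹) := det_complex_smulRight _
      have hnorm : ‖y‖ ≤ M := by
        have := hAsub hy
        rw [Metric.mem_ball] at this
        calc ‖y‖ = dist y 0 := by simp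
          _ ≤ dist y w + dist w 0 := dist_triangle _ _ _
          _ ≤ r + ‖w‖ := by
              have := le_of_lt this
              simp only [dist_zero_right] at *
              linarith
          _ = M := by rw [hM]; ring
      have hns : Complex.normSq ((y ^ 2)⁻¹) = ((Complex.normSq y) ^ 2)⁻¹ := by
        rw [map_inv₀, map_pow]
      have hnsy : Complex.normSq y ≤ M ^ 2 := by
        rw [Complex.normSq_eq_norm_sq]
        have h0 : (0:ℝ) ≤ ‖y‖ := norm_nonneg _
        calc ‖y‖ ^ 2 = ‖y‖ ^ 2 := rfl
          _ ≤ M ^ 2 := by nlinarith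
      have hlb : (M ^ 4)⁻¹ ≤ (F y).det := by
        rw [hdet, hns]
        have h2 : (Complex.normSq y) ^ 2 ≤ (M ^ 2) ^ 2 := by
          have h0 : (0:ℝ) ≤ Complex.normSq y := Complex.normSq_nonneg y
          nlinarith
        have h3 : (M ^ 2) ^ 2 = M ^ 4 := by ring
        rw [h3] at h2
        have h4 : (0:ℝ) < (Complex.normSq y) ^ 2 := by
          have := Complex.normSq_pos.mpr hy0
          positivity
        exact inv_anti₀ h4 h2
      apply ENNReal.ofReal_le_ofReal
      calc (M ^ 4)⁻¹ ≤ (F y).det := hlb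
        _ ≤ |(F y).det| := le_abs_self _
    have hlint : ENNReal.ofReal ((M ^ 4)⁻¹) * volume A ≤ volume (g '' A) := by
      rw [hvol]
      calc ENNReal.ofReal ((M ^ 4)⁻¹) * volume A
          = ∫⁻ _ in A, ENNReal.ofReal ((M ^ 4)⁻¹) := (setLIntegral_const _ _).symm
        _ ≤ ∫⁻ y in A, ENNReal.ofReal |(F y).det| := setLIntegral_mono' hA hdetlb
    have hgsub : g '' A ⊆ Metric.ball z₀ r₀ := by
      rintro _ ⟨y, hy, rfl⟩
      exact himg y (hAsub hy)
    have hdoe := hdoeblin (g '' A) hpre_meas hgsub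
    have hmap : ν A = μ (f ⁻¹' A) := Measure.map_apply hfm hA
    calc ENNReal.ofReal c' * volume A
        = ENNReal.ofReal c₀ * (ENNReal.ofReal ((M ^ 4)⁻¹) * volume A) := by
          rw [← mul_assoc, ← ENNReal.ofReal_mul (le_of_lt hc₀)]
      _ ≤ ENNReal.ofReal c₀ * volume (g '' A) := by
          exact mul_le_mul_right hlint _
      _ ≤ μ (g '' A) := hdoe
      _ = ν A := by rw [hmap, hpre]
  -- now the splitting
  set D : Set ℂ := Metric.ball w r with hD
  set V : ℝ≥0∞ := volume D with hV
  have hVpos : 0 < V := Metric.measure_ball_pos _ _ hrpos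
  have hVfin : V < ⊤ := measure_ball_lt_top
  set lam : Measure ℂ := V⁻¹ • volume.restrict D with hlam
  have hlam_univ : lam Set.univ = 1 := by
    rw [hlam]
    simp only [Measure.smul_apply, Measure.restrict_apply MeasurableSet.univ,
      Set.univ_inter, smul_eq_mul]
    exact ENNReal.inv_mul_cancel (ne_of_gt hVpos) (ne_of_lt hVfin)
  have hlamprob : IsProbabilityMeasure lam := ⟨hlam_univ⟩
  set κ : ℝ≥0∞ := ENNReal.ofReal c' * V with hκ
  have hκlam_le : ∀ s : Set ℂ, MeasurableSet s → κ * lam s ≤ ν s := by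
    intro s hs
    have h1 : lam s = V⁻¹ * volume (s ∩ D) := by
      rw [hlam]
      simp [Measure.restrict_apply hs]
    have h2 : κ * lam s = ENNReal.ofReal c' * volume (s ∩ D) := by
      rw [h1, hκ, mul_assoc, ← mul_assoc V V⁻¹,
        ENNReal.mul_inv_cancel (ne_of_gt hVpos) (ne_of_lt hVfin), one_mul]
    rw [h2]
    calc ENNReal.ofReal c' * volume (s ∩ D)
        ≤ ν (s ∩ D) := key _ (hs.inter measurableSet_ball) Set.inter_subset_right
      _ ≤ ν s := measure_mono Set.inter_subset_left
  have hκle1 : κ ≤ 1 := by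
    have := hκlam_le Set.univ MeasurableSet.univ
    rwa [hlam_univ, mul_one, measure_univ] at this
  have hκpos : 0 < κ := by
    rw [hκ]
    exact ENNReal.mul_pos (by simp [ENNReal.ofReal_pos.mpr hc'pos, ne_of_gt]) (ne_of_gt hVpos)
  have hκfin : κ ≠ ⊤ := ne_top_of_le_ne_top ENNReal.one_ne_top hκle1
  set ca : ℝ := κ.toReal / 2 with hca
  have hca_pos : 0 < ca := by
    have := ENNReal.toReal_pos (ne_of_gt hκpos) hκfin
    positivity
  have hκtoReal_le : κ.toReal ≤ 1 := by
    have := ENNReal.toReal_mono ENNReal.one_ne_top hκle1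
    simpa using this
  have hca_le_half : ca ≤ 1 / 2 := by rw [hca]; linarith
  have hca_le_one : ca ≤ 1 := by linarith
  have hca_lt_one : ca < 1 := by linarith
  have hofca_le : ENNReal.ofReal ca ≤ κ := by
    calc ENNReal.ofReal ca ≤ ENNReal.ofReal κ.toReal :=
          ENNReal.ofReal_le_ofReal (by rw [hca]; linarith [ENNReal.toReal_nonneg (a := κ)])
      _ = κ := ENNReal.ofReal_toReal hκfin
  have hle : (ENNReal.ofReal ca) • lam ≤ ν := by
    intro s
    calc ((ENNReal.ofReal ca) • lam) s = ENNReal.ofReal ca * lam s := by simp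
      _ ≤ κ * lam s := mul_le_mul_left hofca_le _
      _ ≤ κ * lam (toMeasurable ν s) := by
          gcongr
          exact subset_toMeasurable _ _
      _ ≤ ν (toMeasurable ν s) := hκlam_le _ (measurableSet_toMeasurable _ _)
      _ = ν s := measure_toMeasurable s
  set ξ : Measure ℂ := ν - (ENNReal.ofReal ca) • lam with hξ
  have hsmul_fin : IsFiniteMeasure ((ENNReal.ofReal ca) • lam) := by
    constructor
    rw [Measure.smul_apply, hlam_univ, smul_eq_mul, mul_one]
    exact ENNReal.ofReal_lt_top
  have hsum : ξ + (ENNReal.ofReal ca) • lam = ν := Measure.sub_add_cancel_of_le hle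
  have hξuniv : ξ Set.univ = 1 - ENNReal.ofReal ca := by
    rw [hξ, Measure.sub_apply MeasurableSet.univ hle]
    rw [measure_univ, Measure.smul_apply, hlam_univ, smul_eq_mul, mul_one]
  have hofeq : ENNReal.ofReal (1 - ca) = 1 - ENNReal.ofReal ca := by
    rw [ENNReal.ofReal_sub _ (le_of_lt hca_pos), ENNReal.ofReal_one]
  have hofca1_pos : ENNReal.ofReal (1 - ca) ≠ 0 := by
    simp [ENNReal.ofReal_eq_zero, not_le]
    linarith
  have hofca1_fin : ENNReal.ofReal (1 - ca) ≠ ⊤ := ENNReal.ofReal_ne_top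
  set η : Measure ℂ := (ENNReal.ofReal (1 - ca))⁻¹ • ξ with hη
  have hηprob : IsProbabilityMeasure η := by
    constructor
    rw [hη, Measure.smul_apply, hξuniv, smul_eq_mul, ← hofeq]
    exact ENNReal.inv_mul_cancel hofca1_pos hofca1_fin
  refine ⟨ca, ⟨hca_pos, hca_le_one⟩, r, hrpos, w, η, hηprob, ?_⟩
  have hback : ENNReal.ofReal (1 - ca) • η = ξ := by
    rw [hη, smul_smul, ENNReal.mul_inv_cancel hofca1_pos hofca1_fin, one_smul]
  rw [hback]
  rw [← hsum]
  exact add_comm _ _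
end

section
/- Let Y_1, …, Y_n be i.i.d. complex random variables with E[Y_1] = c and σ² := E[|Y_1 − c|²] < ∞. For 1 ≤ k ≤ n let S_{k,n} := Σ_{1 ≤ i_1 < … < i_k ≤ n} Y_{i_1}⋯Y_{i_k}. Then E[S_{k,n}] = C(n,k)·c^k and E[ |S_{k,n} − E S_{k,n}|² ] = Σ_{r=1}^{k} C(n,r)·C(n−r, k−r)²·σ^{2r}·|c|^{2(k−r)}. -/
open MeasureTheory ProbabilityTheory Filter Topology
open scoped ENNReal

private lemma my_indepFun_integral_mul {Ω : Type*} [MeasureSpace Ω]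
    [IsProbabilityMeasure (ℙ : Measure Ω)] {X Y : Ω → ℂ}
    (h : IndepFun X Y ℙ) (hX : Measurable X) (hY : Measurable Y) :
    ∫ ω, X ω * Y ω ∂ℙ = (∫ ω, X ω ∂ℙ) * ∫ ω, Y ω ∂ℙ := by
  have hmap := (indepFun_iff_map_prod_eq_prod_map_map hX.aemeasurable hY.aemeasurable).1 h
  have h1 : ∫ ω, X ω * Y ω ∂ℙ
      = ∫ p : ℂ × ℂ, p.1 * p.2 ∂(Measure.map (fun ω => (X ω, Y ω)) ℙ) :=
    (integral_map (hX.prodMk hY).aemeasurable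
      (measurable_fst.mul measurable_snd).aestronglyMeasurable).symm
  rw [h1, hmap, integral_prod_mul (f := fun x : ℂ => x) (g := fun y : ℂ => y),
    integral_map hX.aemeasurable (f := fun x : ℂ => x) aestronglyMeasurable_id,
    integral_map hY.aemeasurable (f := fun x : ℂ => x) aestronglyMeasurable_id]

private lemma my_indep_prod_integral {Ω : Type*} [MeasureSpace Ω]
    [IsProbabilityMeasure (ℙ : Measure Ω)] {n : ℕ} {Y : Fin n → Ω → ℂ}
    (hmeas : ∀ i, Measurable (Y i))
    (hindep : iIndepFun Y ℙ)
    (g : Fin n → ℂ → ℂ) (hg : ∀ i, Measurable (g i))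
    (hint : ∀ i, Integrable (fun ω => g i (Y i ω)) ℙ) :
    ∀ A : Finset (Fin n),
      Integrable (fun ω => ∏ i ∈ A, g i (Y i ω)) ℙ ∧
      ∫ ω, ∏ i ∈ A, g i (Y i ω) ∂ℙ = ∏ i ∈ A, ∫ ω, g i (Y i ω) ∂ℙ := by
  have hF : iIndepFun (fun i => (g i) ∘ (Y i)) ℙ :=
    hindep.comp g hg
  have hFmeas : ∀ i, Measurable ((g i) ∘ (Y i)) := fun i => (hg i).comp (hmeas i)
  intro A
  induction A using Finset.cons_induction with
  | empty => simp
  | cons i A hi ih =>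
    have hprod_eq : (fun ω => ∏ j ∈ A, g j (Y j ω)) = ∏ j ∈ A, (g j) ∘ (Y j) := by
      funext ω; simp
    have hIndep : IndepFun ((g i) ∘ (Y i)) (∏ j ∈ A, (g j) ∘ (Y j)) ℙ :=
      (hF.indepFun_finset_prod_of_notMem hFmeas hi).symm
    have hintA : Integrable (∏ j ∈ A, (g j) ∘ (Y j)) ℙ := hprod_eq ▸ ih.1
    have hmul : Integrable (((g i) ∘ (Y i)) * ∏ j ∈ A, (g j) ∘ (Y j)) ℙ :=
      hIndep.integrable_mul (hint i) hintA
    have hfe : (fun ω => ∏ j ∈ Finset.cons i A hi, g j (Y j ω))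
        = ((g i) ∘ (Y i)) * ∏ j ∈ A, (g j) ∘ (Y j) := by
      funext ω; simp [Finset.prod_cons, Finset.prod_insert hi]
    constructor
    · rw [hfe]; exact hmul
    · have hmeasA : Measurable (∏ j ∈ A, (g j) ∘ (Y j)) := by
        rw [← hprod_eq]; exact Finset.measurable_prod _ (fun j _ => hFmeas j)
      have h2 := my_indepFun_integral_mul hIndep (hFmeas i) hmeasA
      simp only [Finset.prod_apply, Function.comp_apply] at h2
      simp only [Finset.prod_cons]
      calc ∫ ω, g i (Y i ω) * ∏ j ∈ A, g j (Y j ω) ∂ℙ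
          = (∫ ω, g i (Y i ω) ∂ℙ) * ∫ ω, ∏ j ∈ A, g j (Y j ω) ∂ℙ := h2
        _ = (∫ ω, g i (Y i ω) ∂ℙ) * ∏ j ∈ A, ∫ ω, g j (Y j ω) ∂ℙ := by rw [ih.2]

private lemma my_card_filter {n k : ℕ} (t : Finset (Fin n)) (htk : t.card ≤ k) :
    ((Finset.powersetCard k (Finset.univ : Finset (Fin n))).filter
      (fun s => t ⊆ s)).card = (n - t.card).choose (k - t.card) := by
  classical
  have hcard : ((Finset.univ : Finset (Fin n)) \ t).card = n - t.card := by
    rw [Finset.card_sdiff_of_subset (Finset.subset_univ t), Finset.card_univ, Fintype.card_fin]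
  rw [← hcard, ← Finset.card_powersetCard]
  apply Finset.card_bij' (fun s _ => s \ t) (fun v _ => v ∪ t)
  · intro s hs
    simp only [Finset.mem_filter, Finset.mem_powersetCard] at hs
    obtain ⟨⟨-, hsk⟩, hts⟩ := hs
    rw [Finset.mem_powersetCard]
    exact ⟨Finset.sdiff_subset_sdiff (Finset.subset_univ s) le_rfl,
      by rw [Finset.card_sdiff_of_subset hts, hsk]⟩
  · intro v hv
    rw [Finset.mem_powersetCard] at hv
    obtain ⟨hvsub, hvcard⟩ := hv
    have hdisj : Disjoint v t := by
      refine Finset.disjoint_left.2 fun a hav hat => ?_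
      exact (Finset.mem_sdiff.1 (hvsub hav)).2 hat
    simp only [Finset.mem_filter, Finset.mem_powersetCard]
    refine ⟨⟨Finset.subset_univ _, ?_⟩, Finset.subset_union_right⟩
    rw [Finset.card_union_of_disjoint hdisj, hvcard]
    omega
  · intro s hs
    simp only [Finset.mem_filter] at hs
    exact Finset.sdiff_union_of_subset hs.2
  · intro v hv
    rw [Finset.mem_powersetCard] at hv
    have hdisj : Disjoint v t := by
      refine Finset.disjoint_left.2 fun a hav hat => ?_
      exact (Finset.mem_sdiff.1 (hv.1 hav)).2 hat
    rw [Finset.union_sdiff_right, Finset.sdiff_eq_self_of_disjoint hdisj]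

private lemma my_esymm_expand {R : Type*} [CommRing R] {n k : ℕ} (c : R) (Z : Fin n → R) :
    ∑ s ∈ Finset.powersetCard k (Finset.univ : Finset (Fin n)), ∏ i ∈ s, (Z i + c)
      = ∑ t ∈ (Finset.univ : Finset (Fin n)).powerset,
          (if t.card ≤ k then ((n - t.card).choose (k - t.card) : R) * c ^ (k - t.card) else 0)
            * ∏ i ∈ t, Z i := by
  classical
  have h1 : ∀ s ∈ Finset.powersetCard k (Finset.univ : Finset (Fin n)),
      ∏ i ∈ s, (Z i + c) = ∑ t ∈ s.powerset, (∏ i ∈ t, Z i) * c ^ (s \ t).card := by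
    intro s hs
    rw [Finset.prod_add]
    exact Finset.sum_congr rfl fun t ht => by rw [Finset.prod_const]
  rw [Finset.sum_congr rfl h1]
  rw [Finset.sum_comm'
    (s' := fun t => (Finset.powersetCard k (Finset.univ : Finset (Fin n))).filter
      (fun s => t ⊆ s))
    (t' := (Finset.univ : Finset (Fin n)).powerset)
    (by
      intro s t
      simp only [Finset.mem_powerset, Finset.mem_filter, Finset.mem_powersetCard]
      constructor
      · rintro ⟨⟨hsu, hsk⟩, hts⟩; exact ⟨⟨⟨hsu, hsk⟩, hts⟩, hts.trans hsu⟩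
      · rintro ⟨⟨⟨hsu, hsk⟩, hts⟩, -⟩; exact ⟨⟨hsu, hsk⟩, hts⟩)]
  refine Finset.sum_congr rfl fun t ht => ?_
  have h2 : ∀ s ∈ (Finset.powersetCard k (Finset.univ : Finset (Fin n))).filter
      (fun s => t ⊆ s), (∏ i ∈ t, Z i) * c ^ (s \ t).card
        = (∏ i ∈ t, Z i) * c ^ (k - t.card) := by
    intro s hs
    simp only [Finset.mem_filter, Finset.mem_powersetCard] at hs
    rw [Finset.card_sdiff_of_subset hs.2, hs.1.2]
  rw [Finset.sum_congr rfl h2, Finset.sum_const]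
  by_cases htk : t.card ≤ k
  · rw [my_card_filter t htk, if_pos htk, nsmul_eq_mul]
    ring
  · have hempty : (Finset.powersetCard k (Finset.univ : Finset (Fin n))).filter
        (fun s => t ⊆ s) = ∅ := by
      refine Finset.filter_eq_empty_iff.2 fun s hs hts => ?_
      rw [Finset.mem_powersetCard] at hs
      exact htk (hs.2 ▸ Finset.card_le_card hts)
    rw [hempty, if_neg htk]
    simp

/-- mean and variance of the `k`-th elementary symmetric polynomial of
i.i.d. complex random variables with mean `c` and variance `σ²`:
`E[S_{k,n}] = C(n,k) c^k` and
`E|S_{k,n} - E S_{k,n}|² = Σ_{r=1}^k C(n,r) C(n-r,k-r)² σ^{2r} |c|^{2(k-r)}`. -/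
theorem esymm_mean_variance
    {Ω : Type*} [MeasureSpace Ω] [IsProbabilityMeasure (ℙ : Measure Ω)]
    (n k : ℕ) (hk1 : 1 ≤ k) (hkn : k ≤ n)
    (Y : Fin n → Ω → ℂ) (hmeas : ∀ i, Measurable (Y i))
    (hindep : iIndepFun Y ℙ)
    (hident : ∀ i j, Measure.map (Y i) ℙ = Measure.map (Y j) ℙ)
    (hL2 : ∀ i, MemLp (Y i) 2 ℙ)
    (c : ℂ) (hmean : ∀ i, ∫ ω, Y i ω ∂ℙ = c)
    (σ : ℝ) (hσ : ∀ i, σ ^ 2 = ∫ ω, ‖Y i ω - c‖ ^ 2 ∂ℙ) :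
    (∫ ω, (∑ s ∈ Finset.powersetCard k (Finset.univ : Finset (Fin n)),
        ∏ i ∈ s, Y i ω) ∂ℙ) = (n.choose k : ℂ) * c ^ k ∧
    (∫ ω, ‖(∑ s ∈ Finset.powersetCard k (Finset.univ : Finset (Fin n)),
          ∏ i ∈ s, Y i ω) - (n.choose k : ℂ) * c ^ k‖ ^ 2 ∂ℙ)
      = ∑ r ∈ Finset.Icc 1 k, (n.choose r : ℝ) * ((n - r).choose (k - r) : ℝ) ^ 2 *
          (σ ^ 2) ^ r * (‖c‖ ^ 2) ^ (k - r) := by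
  classical
  -- basic facts about the centered variables
  set Z : Fin n → Ω → ℂ := fun i ω => Y i ω - c with hZdef
  have hZmeas : ∀ i, Measurable (Z i) := fun i => (hmeas i).sub measurable_const
  have hZL2 : ∀ i, MemLp (Z i) 2 ℙ := fun i => (hL2 i).sub (memLp_const c)
  have hYint : ∀ i, Integrable (Y i) ℙ := fun i => (hL2 i).integrable one_le_two
  have hZint : ∀ i, Integrable (Z i) ℙ := fun i => (hYint i).sub (integrable_const c)
  have hZmean : ∀ i, ∫ ω, Z i ω ∂ℙ = 0 := by
    intro i
    rw [hZdef]
    simp only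
    rw [integral_sub (hYint i) (integrable_const c), hmean i, integral_const]
    simp
  have hZconjmeas : ∀ i, Measurable (fun ω => (starRingEnd ℂ) (Z i ω)) := fun i =>
    Complex.continuous_conj.measurable.comp (hZmeas i)
  have hZconjL2 : ∀ i, MemLp (fun ω => (starRingEnd ℂ) (Z i ω)) 2 ℙ := by
    intro i
    refine (hZL2 i).of_le ((hZconjmeas i).aestronglyMeasurable) ?_
    exact Filter.Eventually.of_forall fun ω => by simp [RCLike.norm_conj]
  have hZconjint : ∀ i, Integrable (fun ω => (starRingEnd ℂ) (Z i ω)) ℙ := fun i =>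
    (hZconjL2 i).integrable one_le_two
  have hZsqint : ∀ i, Integrable (fun ω => Z i ω * (starRingEnd ℂ) (Z i ω)) ℙ := by
    intro i
    have h := MemLp.smul (r := 1) (φ := Z i) (f := fun ω => (starRingEnd ℂ) (Z i ω))
      (hZconjL2 i) (hZL2 i)
    exact memLp_one_iff_integrable.mp h
  have hZsq : ∀ i, ∫ ω, Z i ω * (starRingEnd ℂ) (Z i ω) ∂ℙ = ((σ ^ 2 : ℝ) : ℂ) := by
    intro i
    have hpt : ∀ ω, Z i ω * (starRingEnd ℂ) (Z i ω)
        = ((‖Y i ω - c‖ ^ 2 : ℝ) : ℂ) := by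
      intro ω
      rw [Complex.mul_conj']
      norm_cast
    calc ∫ ω, Z i ω * (starRingEnd ℂ) (Z i ω) ∂ℙ
        = ∫ ω, ((‖Y i ω - c‖ ^ 2 : ℝ) : ℂ) ∂ℙ := by simp only [hpt]
      _ = ((∫ ω, ‖Y i ω - c‖ ^ 2 ∂ℙ : ℝ) : ℂ) := integral_ofReal
      _ = ((σ ^ 2 : ℝ) : ℂ) := by rw [← hσ i]
  -- the mean computation
  have hmean_prod : ∀ s : Finset (Fin n), s ∈ Finset.powersetCard k
      (Finset.univ : Finset (Fin n)) →
      (∫ ω, ∏ i ∈ s, Y i ω ∂ℙ) = c ^ k := by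
    intro s hs
    have h := (my_indep_prod_integral hmeas hindep (fun _ => id)
      (fun _ => measurable_id) (fun i => hYint i)) s
    simp only [id] at h
    rw [h.2]
    rw [Finset.mem_powersetCard] at hs
    rw [Finset.prod_congr rfl fun i _ => hmean i, Finset.prod_const, hs.2]
  have hint_prod : ∀ s : Finset (Fin n), Integrable (fun ω => ∏ i ∈ s, Y i ω) ℙ := by
    intro s
    have h := (my_indep_prod_integral hmeas hindep (fun _ => id)
      (fun _ => measurable_id) (fun i => hYint i)) s
    simpa only [id] using h.1
  have hmean_part : (∫ ω, (∑ s ∈ Finset.powersetCard k (Finset.univ : Finset (Fin n)),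
      ∏ i ∈ s, Y i ω) ∂ℙ) = (n.choose k : ℂ) * c ^ k := by
    rw [integral_finset_sum _ (fun s _ => hint_prod s),
      Finset.sum_congr rfl hmean_prod, Finset.sum_const, Finset.card_powersetCard,
      Finset.card_univ, Fintype.card_fin, nsmul_eq_mul]
  refine ⟨hmean_part, ?_⟩
  -- abbreviations
  set b : Finset (Fin n) → ℂ := fun t =>
    if t.card ≤ k then ((n - t.card).choose (k - t.card) : ℂ) * c ^ (k - t.card) else 0
    with hbdef
  set T : Finset (Finset (Fin n)) := ((Finset.univ : Finset (Fin n)).powerset).erase ∅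
    with hTdef
  have hbempty : b ∅ = (n.choose k : ℂ) * c ^ k := by
    simp only [hbdef, Finset.card_empty, Nat.zero_le, if_pos, Nat.sub_zero]
  -- expansion of the centered sum
  have hW : ∀ ω, (∑ s ∈ Finset.powersetCard k (Finset.univ : Finset (Fin n)),
      ∏ i ∈ s, Y i ω) - (n.choose k : ℂ) * c ^ k = ∑ t ∈ T, b t * ∏ i ∈ t, Z i ω := by
    intro ω
    have h := my_esymm_expand (k := k) c (fun i => Z i ω)
    have h2 : ∀ s ∈ Finset.powersetCard k (Finset.univ : Finset (Fin n)),
        ∏ i ∈ s, (Z i ω + c) = ∏ i ∈ s, Y i ω := by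
      intro s _
      exact Finset.prod_congr rfl fun i _ => sub_add_cancel _ _
    rw [Finset.sum_congr rfl h2] at h
    rw [h, hTdef, ← Finset.add_sum_erase _ _
      (Finset.empty_mem_powerset (Finset.univ : Finset (Fin n)))]
    have h3 : (if (∅ : Finset (Fin n)).card ≤ k then
        ((n - (∅ : Finset (Fin n)).card).choose (k - (∅ : Finset (Fin n)).card) : ℂ)
          * c ^ (k - (∅ : Finset (Fin n)).card) else 0) * ∏ i ∈ (∅ : Finset (Fin n)), Z i ω
        = (n.choose k : ℂ) * c ^ k := by
      rw [Finset.prod_empty, mul_one]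
      simp only [Finset.card_empty, Nat.zero_le, if_pos, Nat.sub_zero]
    rw [h3, add_sub_cancel_left]
  -- integral of a product pair
  have hstep : ∀ u v : Finset (Fin n),
      Integrable (fun ω => (∏ i ∈ u, Z i ω) * (starRingEnd ℂ) (∏ i ∈ v, Z i ω)) ℙ ∧
      ∫ ω, (∏ i ∈ u, Z i ω) * (starRingEnd ℂ) (∏ i ∈ v, Z i ω) ∂ℙ
        = if u = v then ((σ ^ 2 : ℝ) : ℂ) ^ u.card else 0 := by
    intro u v
    set g : Fin n → ℂ → ℂ := fun i y =>
      (if i ∈ u then y - c else 1) * (if i ∈ v then (starRingEnd ℂ) (y - c) else 1) with hgdef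
    have hgm : ∀ i, Measurable (g i) := by
      intro i
      apply Measurable.mul
      · split_ifs
        · exact measurable_id.sub measurable_const
        · exact measurable_const
      · split_ifs
        · exact Complex.continuous_conj.measurable.comp (measurable_id.sub measurable_const)
        · exact measurable_const
    have hgint : ∀ i, Integrable (fun ω => g i (Y i ω)) ℙ := by
      intro i
      simp only [hgdef]
      by_cases hu : i ∈ u <;> by_cases hv : i ∈ v <;>
        simp only [hu, hv, if_true, if_false, mul_one, one_mul]
      · exact hZsqint i
      · exact hZint i
      · exact hZconjint i
      · exact integrable_const 1
    have hPP : ∀ ω, (∏ i ∈ u, Z i ω) * (starRingEnd ℂ) (∏ i ∈ v, Z i ω)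
        = ∏ i ∈ Finset.univ, g i (Y i ω) := by
      intro ω
      simp only [hgdef]
      rw [Finset.prod_mul_distrib, Finset.prod_ite_mem, Finset.prod_ite_mem,
        Finset.univ_inter, Finset.univ_inter, map_prod]
    have h := my_indep_prod_integral hmeas hindep g hgm hgint Finset.univ
    have hgi : ∀ i, ∫ ω, g i (Y i ω) ∂ℙ =
        if i ∈ u then (if i ∈ v then ((σ ^ 2 : ℝ) : ℂ) else 0)
          else (if i ∈ v then 0 else 1) := by
      intro i
      simp only [hgdef]
      by_cases hu : i ∈ u <;> by_cases hv : i ∈ v <;>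
        simp only [hu, hv, if_true, if_false, mul_one, one_mul]
      · exact hZsq i
      · exact hZmean i
      · rw [integral_conj]
        rw [show (∫ ω, Y i ω - c ∂ℙ) = 0 from hZmean i, map_zero]
      · simp
    constructor
    · exact h.1.congr (Filter.Eventually.of_forall fun ω => (hPP ω).symm)
    · have hval : ∫ ω, (∏ i ∈ u, Z i ω) * (starRingEnd ℂ) (∏ i ∈ v, Z i ω) ∂ℙ
          = ∏ i ∈ Finset.univ, ∫ ω, g i (Y i ω) ∂ℙ := by
        rw [show (fun ω => (∏ i ∈ u, Z i ω) * (starRingEnd ℂ) (∏ i ∈ v, Z i ω))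
          = fun ω => ∏ i ∈ Finset.univ, g i (Y i ω) from funext hPP]
        exact h.2
      rw [hval, Finset.prod_congr rfl (fun i _ => hgi i)]
      by_cases huv : u = v
      · subst huv
        rw [if_pos rfl]
        have heq : ∀ i : Fin n, (if i ∈ u then (if i ∈ u then ((σ ^ 2 : ℝ) : ℂ) else 0)
            else (if i ∈ u then 0 else 1)) = (if i ∈ u then ((σ ^ 2 : ℝ) : ℂ) else 1) := by
          intro i; by_cases h : i ∈ u <;> simp [h]
        rw [Finset.prod_congr rfl (fun i _ => heq i), Finset.prod_ite_mem,
          Finset.univ_inter, Finset.prod_const]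
      · rw [if_neg huv]
        have hex : ∃ i, ¬ (i ∈ u ↔ i ∈ v) := by
          rw [← not_forall]
          exact fun h' => huv (Finset.ext_iff.mpr h')
        obtain ⟨i, hi⟩ := hex
        refine Finset.prod_eq_zero (Finset.mem_univ i) ?_
        by_cases h1 : i ∈ u <;> by_cases h2 : i ∈ v <;> simp [h1, h2] at hi ⊢
  -- the complex second moment
  have hvar1 : ∫ ω, ((∑ s ∈ Finset.powersetCard k (Finset.univ : Finset (Fin n)),
      ∏ i ∈ s, Y i ω) - (n.choose k : ℂ) * c ^ k) * (starRingEnd ℂ)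
        ((∑ s ∈ Finset.powersetCard k (Finset.univ : Finset (Fin n)),
          ∏ i ∈ s, Y i ω) - (n.choose k : ℂ) * c ^ k) ∂ℙ
      = ∑ u ∈ T, (b u * (starRingEnd ℂ) (b u)) * ((σ ^ 2 : ℝ) : ℂ) ^ u.card := by
    have hpt : ∀ ω, ((∑ s ∈ Finset.powersetCard k (Finset.univ : Finset (Fin n)),
        ∏ i ∈ s, Y i ω) - (n.choose k : ℂ) * c ^ k) * (starRingEnd ℂ)
          ((∑ s ∈ Finset.powersetCard k (Finset.univ : Finset (Fin n)),
            ∏ i ∈ s, Y i ω) - (n.choose k : ℂ) * c ^ k)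
        = ∑ u ∈ T, ∑ v ∈ T, (b u * (starRingEnd ℂ) (b v)) *
            ((∏ i ∈ u, Z i ω) * (starRingEnd ℂ) (∏ i ∈ v, Z i ω)) := by
      intro ω
      rw [hW ω, map_sum, Finset.sum_mul_sum]
      refine Finset.sum_congr rfl fun u _ => Finset.sum_congr rfl fun v _ => ?_
      rw [map_mul, map_prod]
      ring
    simp only [hpt]
    rw [integral_finset_sum _ (fun u _ => integrable_finset_sum _
      (fun v _ => ((hstep u v).1.const_mul _)))]
    refine Finset.sum_congr rfl fun u hu => ?_
    rw [integral_finset_sum _ (fun v _ => ((hstep u v).1.const_mul _))]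
    have hterm : ∀ v ∈ T, ∫ ω, (b u * (starRingEnd ℂ) (b v)) *
        ((∏ i ∈ u, Z i ω) * (starRingEnd ℂ) (∏ i ∈ v, Z i ω)) ∂ℙ
        = (b u * (starRingEnd ℂ) (b v)) * (if u = v then ((σ ^ 2 : ℝ) : ℂ) ^ u.card else 0) := by
      intro v _
      rw [integral_const_mul, (hstep u v).2]
    rw [Finset.sum_congr rfl hterm]
    rw [Finset.sum_eq_single u (fun v _ hvu => by
        rw [if_neg (fun h => hvu h.symm), mul_zero])
      (fun hu' => absurd hu hu')]
    rw [if_pos rfl]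
  -- pass to real
  have hvar2 : ∫ ω, ‖(∑ s ∈ Finset.powersetCard k (Finset.univ : Finset (Fin n)),
      ∏ i ∈ s, Y i ω) - (n.choose k : ℂ) * c ^ k‖ ^ 2 ∂ℙ
      = ∑ u ∈ T, ‖b u‖ ^ 2 * (σ ^ 2) ^ u.card := by
    have hA : ∫ ω, ((‖(∑ s ∈ Finset.powersetCard k
        (Finset.univ : Finset (Fin n)), ∏ i ∈ s, Y i ω)
          - (n.choose k : ℂ) * c ^ k‖ ^ 2 : ℝ) : ℂ) ∂ℙ
        = ((∑ u ∈ T, ‖b u‖ ^ 2 * (σ ^ 2) ^ u.card : ℝ) : ℂ) := by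
      have hpt2 : ∀ ω : Ω, ((‖(∑ s ∈ Finset.powersetCard k
          (Finset.univ : Finset (Fin n)), ∏ i ∈ s, Y i ω)
            - (n.choose k : ℂ) * c ^ k‖ ^ 2 : ℝ) : ℂ)
          = ((∑ s ∈ Finset.powersetCard k (Finset.univ : Finset (Fin n)),
            ∏ i ∈ s, Y i ω) - (n.choose k : ℂ) * c ^ k) * (starRingEnd ℂ)
              ((∑ s ∈ Finset.powersetCard k (Finset.univ : Finset (Fin n)),
                ∏ i ∈ s, Y i ω) - (n.choose k : ℂ) * c ^ k) := by
        intro ω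
        rw [Complex.mul_conj']
        push_cast
        ring
      simp only [hpt2]
      rw [hvar1, Complex.ofReal_sum]
      refine Finset.sum_congr rfl fun u _ => ?_
      rw [Complex.mul_conj']
      push_cast
      ring
    have hB : ∫ ω, ((‖(∑ s ∈ Finset.powersetCard k
        (Finset.univ : Finset (Fin n)), ∏ i ∈ s, Y i ω)
          - (n.choose k : ℂ) * c ^ k‖ ^ 2 : ℝ) : ℂ) ∂ℙ
        = ((∫ ω, ‖(∑ s ∈ Finset.powersetCard k
          (Finset.univ : Finset (Fin n)), ∏ i ∈ s, Y i ω)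
            - (n.choose k : ℂ) * c ^ k‖ ^ 2 ∂ℙ : ℝ) : ℂ) := integral_ofReal
    exact Complex.ofReal_injective (hB.symm.trans hA)
  rw [hvar2]
  -- combinatorial regrouping
  set G : ℕ → ℝ := fun r => if r ≤ k then ((n - r).choose (k - r) : ℝ) ^ 2 * (σ ^ 2) ^ r
    * (‖c‖ ^ 2) ^ (k - r) else 0 with hGdef
  have habs : ∀ u : Finset (Fin n), ‖b u‖ ^ 2 * (σ ^ 2) ^ u.card = G u.card := by
    intro u
    rw [hbdef, hGdef]
    simp only
    by_cases hc : u.card ≤ k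
    · rw [if_pos hc, if_pos hc, norm_mul, norm_pow, Complex.norm_natCast]
      ring
    · rw [if_neg hc, if_neg hc, norm_zero]
      ring
  rw [Finset.sum_congr rfl (fun u _ => habs u)]
  have hT : ∑ u ∈ T, G u.card = (∑ u ∈ (Finset.univ : Finset (Fin n)).powerset, G u.card)
      - G 0 := by
    rw [hTdef, Finset.sum_erase_eq_sub (Finset.empty_mem_powerset _), Finset.card_empty]
  have hpow : ∑ u ∈ (Finset.univ : Finset (Fin n)).powerset, G u.card
      = ∑ r ∈ Finset.range (n + 1), (n.choose r : ℝ) * G r := by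
    rw [Finset.sum_powerset, Finset.card_univ, Fintype.card_fin]
    refine Finset.sum_congr rfl fun r _ => ?_
    have : ∀ u ∈ Finset.powersetCard r (Finset.univ : Finset (Fin n)), G u.card = G r := by
      intro u hu
      rw [(Finset.mem_powersetCard.1 hu).2]
    rw [Finset.sum_congr rfl this, Finset.sum_const, Finset.card_powersetCard,
      Finset.card_univ, Fintype.card_fin, nsmul_eq_mul]
  have hrange : ∑ r ∈ Finset.range (n + 1), (n.choose r : ℝ) * G r
      = G 0 + ∑ r ∈ Finset.Icc 1 k, (n.choose r : ℝ) * G r := by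
    have hsub : insert 0 (Finset.Icc 1 k) ⊆ Finset.range (n + 1) := by
      intro r hr
      simp only [Finset.mem_insert, Finset.mem_Icc, Finset.mem_range] at hr ⊢
      omega
    rw [← Finset.sum_subset hsub (fun r hr hnr => ?_)]
    · rw [Finset.sum_insert (by simp), Nat.choose_zero_right, Nat.cast_one, one_mul]
    · simp only [Finset.mem_insert, Finset.mem_Icc, Finset.mem_range] at hr hnr
      have hrk : ¬ r ≤ k := by omega
      rw [hGdef]
      simp only [hrk, if_false, mul_zero]
  rw [hT, hpow, hrange, add_sub_cancel_left]
  refine Finset.sum_congr rfl fun r hr => ?_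
  rw [Finset.mem_Icc] at hr
  rw [hGdef]
  simp only [hr.2, if_true]
  ring
end

section
/- Let μ be a probability measure on ℂ, let z₀ ∈ ℂ with p := μ({z₀}) > 0, let ξ_1, ξ_2, … be i.i.d. with law μ, and let P_n(z) = ∏_{j=1}^n (z − ξ_j). Let (k_n) be integers with 1 ≤ k_n < n and k_n/n → 0. Then almost surely, liminf_{n→∞} μ_{P_n^{(k_n)}}({z₀}) ≥ p, i.e. liminf_{n→∞} m_n/(n−k_n) ≥ p, where m_n is the multiplicity of z₀ as a root of P_n^{(k_n)}. -/
open MeasureTheory ProbabilityTheory Polynomial Filter Topology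
open scoped ENNReal

lemma rm_le_iterate_deriv (P : Polynomial ℂ) (z : ℂ) :
    ∀ k : ℕ, P.rootMultiplicity z ≤ (derivative^[k] P).rootMultiplicity z + k := by
  intro k
  induction k with
  | zero => simp
  | succ k ih =>
    have h := rootMultiplicity_sub_one_le_derivative_rootMultiplicity (derivative^[k] P) z
    rw [Function.iterate_succ_apply']
    omega

lemma rm_Pn {Ω : Type*} (ξ : ℕ → Ω → ℂ) (n : ℕ) (ω : Ω) (z₀ : ℂ) :
    (Pn ξ n ω).rootMultiplicity z₀ =
      ((Finset.range n).filter (fun j => ξ j ω = z₀)).card := by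
  classical
  have hP : Pn ξ n ω =
      (Multiset.map (fun a => X - C a) ((Finset.range n).val.map (fun j => ξ j ω))).prod := by
    rw [Pn, Finset.prod, Multiset.map_map]
    rfl
  rw [← count_roots, hP, roots_multiset_prod_X_sub_C, Multiset.count_map,
      Finset.card_def, Finset.filter_val]
  congr 1
  exact Multiset.filter_congr (fun x _ => ⟨fun h => h.symm, fun h => h.symm⟩)

lemma rm_le_natDegree {p : Polynomial ℂ} (hp : p ≠ 0) (z : ℂ) :
    p.rootMultiplicity z ≤ p.natDegree := by
  have := Polynomial.natDegree_le_of_dvd (p.pow_rootMultiplicity_dvd z) hp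
  simpa [natDegree_pow, natDegree_X_sub_C] using this

/-- if `z₀` is an atom of `μ` of mass `p > 0` and `k_n = o(n)`, then
almost surely `liminf_n m_n/(n-k_n) ≥ p`, where `m_n` is the multiplicity of `z₀` as a
root of `P_n^{(k_n)}`. -/
theorem atom_liminf_multiplicity
    {Ω : Type*} [MeasureSpace Ω] [IsProbabilityMeasure (ℙ : Measure Ω)]
    (μ : Measure ℂ) [IsProbabilityMeasure μ]
    (z₀ : ℂ) (hatom : 0 < μ {z₀})
    (ξ : ℕ → Ω → ℂ) (hmeas : ∀ i, Measurable (ξ i))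
    (hindep : iIndepFun ξ ℙ)
    (hdist : ∀ i, Measure.map (ξ i) ℙ = μ)
    (k : ℕ → ℕ) (hk : ∀ n, 2 ≤ n → 1 ≤ k n ∧ k n < n)
    (hko : Tendsto (fun n => (k n : ℝ) / n) atTop (𝓝 0)) :
    ∀ᵐ ω ∂ℙ, (μ {z₀}).toReal ≤
      Filter.liminf (fun n =>
        ((derivative^[k n] (Pn ξ n ω)).rootMultiplicity z₀ : ℝ) / ((n - k n : ℕ) : ℝ))
        atTop := by
  classical
  set p : ℝ := (μ {z₀}).toReal with hp
  set f : ℂ → ℝ := Set.indicator ({z₀} : Set ℂ) (fun _ => (1:ℝ)) with hf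
  have hfmeas : Measurable f := measurable_const.indicator (measurableSet_singleton z₀)
  set Y : ℕ → Ω → ℝ := fun i ω => f (ξ i ω) with hY
  have hYind : Y 0 = Set.indicator (ξ 0 ⁻¹' {z₀}) (fun _ => (1:ℝ)) := by
    funext ω
    simp only [hY, hf, Set.indicator_apply, Set.mem_singleton_iff, Set.mem_preimage]
  have hint : Integrable (Y 0) ℙ := by
    rw [hYind]
    exact (integrable_const (1:ℝ)).indicator ((hmeas 0) (measurableSet_singleton z₀))
  have hpre : (ℙ : Measure Ω) (ξ 0 ⁻¹' {z₀}) = μ {z₀} := by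
    rw [← hdist 0, Measure.map_apply (hmeas 0) (measurableSet_singleton z₀)]
  have hE : (ℙ : Measure Ω)[Y 0] = p := by
    rw [hYind, MeasureTheory.integral_indicator_const (1:ℝ)
      ((hmeas 0) (measurableSet_singleton z₀)), measureReal_def, hpre]
    simp [hp]
  have hindY : Pairwise (Function.onFun (IndepFun · · (ℙ : Measure Ω)) Y) := by
    intro i j hij
    exact (hindep.indepFun hij).comp hfmeas hfmeas
  have hidY : ∀ i, IdentDistrib (Y i) (Y 0) ℙ ℙ := by
    intro i
    have : IdentDistrib (ξ i) (ξ 0) ℙ ℙ :=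
      ⟨(hmeas i).aemeasurable, (hmeas 0).aemeasurable, by rw [hdist i, hdist 0]⟩
    exact this.comp hfmeas
  have hsl := strong_law_ae_real Y hint hindY hidY
  rw [hE] at hsl
  filter_upwards [hsl] with ω hω
  -- N n = number of j < n with ξ j ω = z₀
  set N : ℕ → ℕ := fun n => ((Finset.range n).filter (fun j => ξ j ω = z₀)).card with hN
  have hsum : ∀ n, (∑ i ∈ Finset.range n, Y i ω) = (N n : ℝ) := by
    intro n
    rw [hN]
    simp only [hY, hf, Set.indicator_apply, Set.mem_singleton_iff]
    rw [Finset.sum_boole]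
  have hNlim : Tendsto (fun n => (N n : ℝ) / n) atTop (𝓝 p) := by
    refine hω.congr (fun n => by rw [hsum n])
  -- the auxiliary sequence
  set g : ℕ → ℝ := fun n => ((N n : ℝ) - k n) / (((n - k n : ℕ)) : ℝ) with hg
  have hglim : Tendsto g atTop (𝓝 p) := by
    have h1 : Tendsto (fun n => ((N n : ℝ)/n - (k n : ℝ)/n) / (1 - (k n : ℝ)/n))
        atTop (𝓝 p) := by
      have h0 : (1:ℝ) - 0 ≠ 0 := by norm_num
      have := (hNlim.sub hko).div (tendsto_const_nhds.sub hko) h0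
      simp only [sub_zero, div_one] at this
      exact this
    refine h1.congr' ?_
    filter_upwards [eventually_ge_atTop 2] with n hn
    have hkn := hk n hn
    have hn0 : (n:ℝ) ≠ 0 := by positivity
    have hklt : (k n : ℝ) < n := by exact_mod_cast hkn.2
    have hnk : (n:ℝ) - k n ≠ 0 := by linarith
    show ((N n : ℝ) / n - (k n : ℝ) / n) / (1 - (k n : ℝ) / n)
        = ((N n : ℝ) - k n) / (((n - k n : ℕ)) : ℝ)
    rw [Nat.cast_sub hkn.2.le]
    field_simp
  have hle : ∀ᶠ n in atTop, g n ≤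
      ((derivative^[k n] (Pn ξ n ω)).rootMultiplicity z₀ : ℝ) / ((n - k n : ℕ) : ℝ) := by
    filter_upwards [eventually_ge_atTop 2] with n hn
    have hkn := hk n hn
    have hdenom : (0:ℝ) < ((n - k n : ℕ) : ℝ) := by
      have : 0 < n - k n := Nat.sub_pos_of_lt hkn.2
      exact_mod_cast this
    have hnum : ((N n : ℝ) - k n) ≤ ((derivative^[k n] (Pn ξ n ω)).rootMultiplicity z₀ : ℝ) := by
      have h2 : N n ≤ (derivative^[k n] (Pn ξ n ω)).rootMultiplicity z₀ + k n := by
        have h3 := rm_le_iterate_deriv (Pn ξ n ω) z₀ (k n)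
        rw [rm_Pn ξ n ω z₀] at h3
        exact h3
      have : (N n : ℝ) ≤ ((derivative^[k n] (Pn ξ n ω)).rootMultiplicity z₀ : ℝ) + k n := by
        exact_mod_cast h2
      linarith
    exact div_le_div_of_nonneg_right hnum hdenom.le
  have hliminf_g : liminf g atTop = p := hglim.liminf_eq
  rw [← hliminf_g]
  refine liminf_le_liminf hle hglim.isBoundedUnder_ge ?_
  refine isCoboundedUnder_ge_of_eventually_le atTop (x := 1) ?_
  filter_upwards [eventually_ge_atTop 2] with n hn
  have hkn := hk n hn
  have hdenom : (0:ℝ) < ((n - k n : ℕ) : ℝ) := by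
    have : 0 < n - k n := Nat.sub_pos_of_lt hkn.2
    exact_mod_cast this
  rw [div_le_one hdenom]
  by_cases h0 : derivative^[k n] (Pn ξ n ω) = 0
  · simpa [h0] using hdenom.le
  · have h1 : (derivative^[k n] (Pn ξ n ω)).rootMultiplicity z₀ ≤ n - k n := by
      refine (rm_le_natDegree h0 z₀).trans ?_
      refine (natDegree_iterate_derivative _ _).trans ?_
      have : (Pn ξ n ω).natDegree ≤ n := by
        refine (natDegree_prod_le _ _).trans ?_
        simp [natDegree_X_sub_C]
      omega
    exact_mod_cast h1
end

section
/- Let B be a disk in ℂ of area 1, let Z_1, Z_2, … be i.i.d. uniform on B, and let ε > 0. Let (k_n) be integers with 1 ≤ k_n < n and (k_n log n)/n → 0. Then there exists n₀ such that for all n ≥ n₀, P( |Σ_{1 ≤ i_1 < … < i_{k_n} ≤ n} Z_{i_1}⋯Z_{i_{k_n}}| ≤ e^{−ε n} ) ≤ n^{−2}. -/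
open MeasureTheory ProbabilityTheory Filter Topology
open scoped ENNReal


lemma finC {r : ℝ} (hr : 0 < r) :
    ∫⁻ w in Metric.ball (0:ℂ) r, (‖w‖₊ : ℝ≥0∞)⁻¹ ∂volume < ⊤ := by
  set A : ℕ → Set ℂ := fun k => Metric.ball 0 (r / 2 ^ k) \ Metric.ball 0 (r / 2 ^ (k+1)) with hA
  have hsub : Metric.ball (0:ℂ) r ⊆ {0} ∪ ⋃ k, A k := by
    intro w hw
    rcases eq_or_ne w 0 with h | h
    · exact Or.inl h
    right
    have hwpos : 0 < ‖w‖ := norm_pos_iff.2 h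
    have hwr : ‖w‖ < r := by simpa [Metric.mem_ball] using hw
    have hex : ∃ k, r / 2 ^ (k+1) ≤ ‖w‖ := by
      obtain ⟨n, hn⟩ := exists_pow_lt_of_lt_one (div_pos hwpos hr) (by norm_num : (1:ℝ)/2 < 1)
      refine ⟨n, ?_⟩
      have h2 : ((1:ℝ)/2) ^ (n+1) ≤ ((1:ℝ)/2) ^ n :=
        pow_le_pow_of_le_one (by norm_num) (by norm_num) (Nat.le_succ n)
      have := (h2.trans hn.le)
      calc r / 2 ^ (n+1) = r * ((1/2) ^ (n+1) : ℝ) := by rw [div_pow, one_pow]; ring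
        _ ≤ r * (‖w‖ / r) := by nlinarith
        _ = ‖w‖ := by field_simp
    have h1 : r / 2 ^ (Nat.find hex + 1) ≤ ‖w‖ := Nat.find_spec hex
    have h2 : ‖w‖ < r / 2 ^ (Nat.find hex) := by
      rcases Nat.eq_zero_or_pos (Nat.find hex) with h0 | h0
      · rw [h0]; simpa using hwr
      · have hmin := Nat.find_min hex (Nat.sub_lt h0 one_pos)
        push_neg at hmin
        have : Nat.find hex - 1 + 1 = Nat.find hex := Nat.succ_pred_eq_of_pos h0
        rwa [this] at hmin
    exact Set.mem_iUnion.2 ⟨Nat.find hex,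
      ⟨by simpa [Metric.mem_ball, dist_zero_right] using h2,
       by simpa [Metric.mem_ball, dist_zero_right, not_lt] using h1⟩⟩
  have hπ : (NNReal.pi : ℝ≥0∞) = ENNReal.ofReal Real.pi := by
    rw [← NNReal.coe_real_pi, ENNReal.ofReal_coe_nnreal]
  have key : ∀ k, ∫⁻ w in A k, (‖w‖₊ : ℝ≥0∞)⁻¹ ∂volume
      ≤ ENNReal.ofReal (2 * Real.pi * r) * (2⁻¹ : ℝ≥0∞) ^ k := by
    intro k
    have hpos : (0:ℝ) < r / 2 ^ (k+1) := by positivity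
    have hb : ∀ w ∈ A k, (‖w‖₊ : ℝ≥0∞)⁻¹ ≤ (ENNReal.ofReal (r / 2 ^ (k+1)))⁻¹ := by
      intro w hw
      have : r / 2 ^ (k+1) ≤ ‖w‖ := by
        have := hw.2; simpa [Metric.mem_ball, dist_zero_right, not_lt] using this
      exact ENNReal.inv_le_inv.2
        (by rw [← enorm_eq_nnnorm, ← ofReal_norm]; exact ENNReal.ofReal_le_ofReal this)
    have h2k : ((2:ℝ≥0∞)⁻¹) ^ k = ENNReal.ofReal ((2⁻¹:ℝ) ^ k) := by
      rw [ENNReal.ofReal_pow (by norm_num), ENNReal.ofReal_inv_of_pos two_pos,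
        ENNReal.ofReal_ofNat]
    calc ∫⁻ w in A k, (‖w‖₊ : ℝ≥0∞)⁻¹ ∂volume
        ≤ ∫⁻ _ in A k, (ENNReal.ofReal (r / 2 ^ (k+1)))⁻¹ ∂volume :=
          setLIntegral_mono' (measurableSet_ball.diff measurableSet_ball) hb
      _ = (ENNReal.ofReal (r / 2 ^ (k+1)))⁻¹ * volume (A k) := setLIntegral_const _ _
      _ ≤ (ENNReal.ofReal (r / 2 ^ (k+1)))⁻¹ * volume (Metric.ball (0:ℂ) (r / 2 ^ k)) := by
          gcongr; exact Set.diff_subset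
      _ = ENNReal.ofReal ((r / 2 ^ (k+1))⁻¹ * ((r / 2 ^ k) ^ 2 * Real.pi)) := by
          rw [Complex.volume_ball, hπ, ← ENNReal.ofReal_pow (by positivity),
            ← ENNReal.ofReal_mul (by positivity), ← ENNReal.ofReal_inv_of_pos hpos,
            ← ENNReal.ofReal_mul (by positivity)]
      _ ≤ ENNReal.ofReal (2 * Real.pi * r) * (2⁻¹ : ℝ≥0∞) ^ k := by
          rw [h2k, ← ENNReal.ofReal_mul (by positivity)]
          apply ENNReal.ofReal_le_ofReal
          apply le_of_eq
          rw [inv_pow]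
          field_simp
          ring
  calc ∫⁻ w in Metric.ball (0:ℂ) r, (‖w‖₊ : ℝ≥0∞)⁻¹ ∂volume
      ≤ ∫⁻ w in ({0} : Set ℂ) ∪ ⋃ k, A k, (‖w‖₊ : ℝ≥0∞)⁻¹ ∂volume :=
        lintegral_mono_set hsub
    _ ≤ (∫⁻ w in ({0} : Set ℂ), (‖w‖₊ : ℝ≥0∞)⁻¹ ∂volume)
        + ∫⁻ w in ⋃ k, A k, (‖w‖₊ : ℝ≥0∞)⁻¹ ∂volume := lintegral_union_le _ _ _
    _ ≤ 0 + ∑' k, ∫⁻ w in A k, (‖w‖₊ : ℝ≥0∞)⁻¹ ∂volume := by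
        gcongr
        · exact le_of_eq (setLIntegral_measure_zero _ _ (measure_singleton 0))
        · exact lintegral_iUnion_le _ _
    _ ≤ 0 + ∑' k, ENNReal.ofReal (2 * Real.pi * r) * (2⁻¹ : ℝ≥0∞) ^ k := by
        gcongr; exact key _
    _ < ⊤ := by
        rw [zero_add, ENNReal.tsum_mul_left, ENNReal.tsum_geometric]
        refine ENNReal.mul_lt_top ENNReal.ofReal_lt_top ?_
        rw [ENNReal.one_sub_inv_two, inv_inv]
        exact ENNReal.ofNat_lt_top

lemma bathtub (b c : ℂ) {r : ℝ} (hr : 0 < r) :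
    ∫⁻ z in Metric.ball b r, (‖z - c‖₊ : ℝ≥0∞)⁻¹ ∂volume
      ≤ ∫⁻ w in Metric.ball (0:ℂ) r, (‖w‖₊ : ℝ≥0∞)⁻¹ ∂volume := by
  set g : ℂ → ℝ≥0∞ := fun z => (‖z - c‖₊ : ℝ≥0∞)⁻¹ with hg
  have hDeq : ∫⁻ z in Metric.ball c r, g z ∂volume
      = ∫⁻ w in Metric.ball (0:ℂ) r, (‖w‖₊ : ℝ≥0∞)⁻¹ ∂volume := by
    have hmp : MeasurePreserving (fun w : ℂ => w + c) volume volume :=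
      measurePreserving_add_right volume c
    have himg : (fun w : ℂ => w + c) '' Metric.ball 0 r = Metric.ball c r := by
      ext z
      simp only [Set.mem_image, Metric.mem_ball, dist_zero_right, dist_eq_norm]
      constructor
      · rintro ⟨w, hw, rfl⟩; simpa using hw
      · intro hz; exact ⟨z - c, by simpa using hz, by ring⟩
    rw [← himg, ← hmp.setLIntegral_comp_emb (measurableEmbedding_addRight c)]
    simp [hg]
  have hvol_eq : volume (Metric.ball b r \ Metric.ball c r)
      = volume (Metric.ball c r \ Metric.ball b r) := by
    have h1 : volume (Metric.ball b r) = volume (Metric.ball c r) := by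
      simp [Complex.volume_ball]
    have hb : volume (Metric.ball b r) ≠ ⊤ := measure_ball_lt_top.ne
    have hc : volume (Metric.ball c r) ≠ ⊤ := measure_ball_lt_top.ne
    rw [measure_diff' _ measurableSet_ball.nullMeasurableSet hc,
      measure_diff' _ measurableSet_ball.nullMeasurableSet hb,
      Set.union_comm, h1]
  have hlow : ∀ z ∈ Metric.ball c r, (ENNReal.ofReal r)⁻¹ ≤ g z := by
    intro z hz
    have : ‖z - c‖ < r := by simpa [Metric.mem_ball, dist_eq_norm] using hz
    exact ENNReal.inv_le_inv.2 (by
      rw [← enorm_eq_nnnorm, ← ofReal_norm]; exact ENNReal.ofReal_le_ofReal this.le)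
  have hup : ∀ z ∈ Metric.ball b r \ Metric.ball c r, g z ≤ (ENNReal.ofReal r)⁻¹ := by
    intro z hz
    have : r ≤ ‖z - c‖ := by
      have := hz.2; simpa [Metric.mem_ball, dist_eq_norm, not_lt] using this
    exact ENNReal.inv_le_inv.2 (by
      rw [← enorm_eq_nnnorm, ← ofReal_norm]; exact ENNReal.ofReal_le_ofReal this)
  have step : ∫⁻ z in Metric.ball b r \ Metric.ball c r, g z ∂volume
      ≤ ∫⁻ z in Metric.ball c r \ Metric.ball b r, g z ∂volume := by
    calc ∫⁻ z in Metric.ball b r \ Metric.ball c r, g z ∂volume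
        ≤ ∫⁻ _ in Metric.ball b r \ Metric.ball c r, (ENNReal.ofReal r)⁻¹ ∂volume :=
          setLIntegral_mono' (measurableSet_ball.diff measurableSet_ball) hup
      _ = (ENNReal.ofReal r)⁻¹ * volume (Metric.ball b r \ Metric.ball c r) :=
          setLIntegral_const _ _
      _ = (ENNReal.ofReal r)⁻¹ * volume (Metric.ball c r \ Metric.ball b r) := by
          rw [hvol_eq]
      _ = ∫⁻ _ in Metric.ball c r \ Metric.ball b r, (ENNReal.ofReal r)⁻¹ ∂volume :=
          (setLIntegral_const _ _).symm
      _ ≤ ∫⁻ z in Metric.ball c r \ Metric.ball b r, g z ∂volume :=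
          setLIntegral_mono' (measurableSet_ball.diff measurableSet_ball)
            (fun z hz => hlow z hz.1)
  calc ∫⁻ z in Metric.ball b r, g z ∂volume
      = (∫⁻ z in Metric.ball b r ∩ Metric.ball c r, g z ∂volume)
        + ∫⁻ z in Metric.ball b r \ Metric.ball c r, g z ∂volume :=
        (lintegral_inter_add_diff _ _ measurableSet_ball).symm
    _ ≤ (∫⁻ z in Metric.ball c r ∩ Metric.ball b r, g z ∂volume)
        + ∫⁻ z in Metric.ball c r \ Metric.ball b r, g z ∂volume := by
        rw [Set.inter_comm]; exact add_le_add le_rfl step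
    _ = ∫⁻ z in Metric.ball c r, g z ∂volume :=
        lintegral_inter_add_diff _ _ measurableSet_ball
    _ = _ := hDeq

lemma esymm_attach (f : ℕ → ℂ) (s : Finset ℕ) (t : ℕ) :
    ∑ u ∈ Finset.powersetCard t s.attach, ∏ i ∈ u, f i.1
      = ∑ u ∈ Finset.powersetCard t s, ∏ i ∈ u, f i := by
  conv_rhs => rw [← Finset.attach_map_val (s := s)]
  rw [Finset.powersetCard_map, Finset.sum_map]
  refine Finset.sum_congr rfl fun u hu => ?_
  rw [RelEmbedding.coe_toEmbedding, Finset.mapEmbedding_apply, Finset.prod_map]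
  simp

lemma esymm_rec (f : ℕ → ℂ) (j m : ℕ) :
    ∑ s ∈ Finset.powersetCard (j+1) (Finset.range (m+1)), ∏ i ∈ s, f i
      = (∑ s ∈ Finset.powersetCard (j+1) (Finset.range m), ∏ i ∈ s, f i)
        + f m * ∑ s ∈ Finset.powersetCard j (Finset.range m), ∏ i ∈ s, f i := by
  classical
  rw [Finset.range_add_one, Finset.powersetCard_succ_insert (Finset.notMem_range_self)]
  rw [Finset.sum_union]
  · congr 1
    rw [Finset.sum_image, Finset.mul_sum]
    · refine Finset.sum_congr rfl fun s hs => ?_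
      have hms : m ∉ s := fun hm => Finset.notMem_range_self
        ((Finset.mem_powersetCard.1 hs).1 hm)
      rw [Finset.prod_insert hms]
    · intro x hx y hy hxy
      have hmx : m ∉ x := fun hm => Finset.notMem_range_self
        ((Finset.mem_powersetCard.1 hx).1 hm)
      have hmy : m ∉ y := fun hm => Finset.notMem_range_self
        ((Finset.mem_powersetCard.1 hy).1 hm)
      have := congrArg (fun u : Finset ℕ => u.erase m) hxy
      simpa [Finset.erase_insert hmx, Finset.erase_insert hmy] using this
  · rw [Finset.disjoint_right]
    intro s hs hs'
    obtain ⟨u, hu, rfl⟩ := Finset.mem_image.1 hs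
    have : m ∈ Finset.range m := (Finset.mem_powersetCard.1 hs').1 (Finset.mem_insert_self m u)
    exact Finset.notMem_range_self this

lemma affine_bound (b : ℂ) {r : ℝ} (hr : 0 < r) (a d : ℂ) :
    ∫⁻ z in Metric.ball b r, (‖a * z + d‖₊ : ℝ≥0∞)⁻¹ ∂volume
      ≤ (max (∫⁻ w in Metric.ball (0:ℂ) r, (‖w‖₊ : ℝ≥0∞)⁻¹ ∂volume) 1)
        * ((‖a‖₊ : ℝ≥0∞))⁻¹ := by
  set K := max (∫⁻ w in Metric.ball (0:ℂ) r, (‖w‖₊ : ℝ≥0∞)⁻¹ ∂volume) 1 with hK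
  rcases eq_or_ne a 0 with rfl | ha
  · rw [nnnorm_zero]
    rw [ENNReal.coe_zero, ENNReal.inv_zero, ENNReal.mul_top]
    · exact le_top
    · exact fun h => by simp [hK] at h
  · have hpt : ∀ z : ℂ, (‖a * z + d‖₊ : ℝ≥0∞)⁻¹
        = (‖a‖₊ : ℝ≥0∞)⁻¹ * (‖z - (-(d/a))‖₊ : ℝ≥0∞)⁻¹ := by
      intro z
      have : a * z + d = a * (z - (-(d/a))) := by field_simp; ring
      rw [this, nnnorm_mul, ENNReal.coe_mul, ENNReal.mul_inv (Or.inl ?_) (Or.inl ?_)]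
      · simp [ha]
      · exact ENNReal.coe_ne_top
    calc ∫⁻ z in Metric.ball b r, (‖a * z + d‖₊ : ℝ≥0∞)⁻¹ ∂volume
        = ∫⁻ z in Metric.ball b r,
            (‖a‖₊ : ℝ≥0∞)⁻¹ * (‖z - (-(d/a))‖₊ : ℝ≥0∞)⁻¹ ∂volume := by
          simp_rw [hpt]
      _ = (‖a‖₊ : ℝ≥0∞)⁻¹ * ∫⁻ z in Metric.ball b r, (‖z - (-(d/a))‖₊ : ℝ≥0∞)⁻¹ ∂volume :=
          lintegral_const_mul' _ _ (by simp [ha])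
      _ ≤ (‖a‖₊ : ℝ≥0∞)⁻¹ * K := by
          gcongr
          exact (bathtub b _ hr).trans (le_max_left _ _)
      _ = K * (‖a‖₊ : ℝ≥0∞)⁻¹ := mul_comm _ _

lemma key_induction {Ω : Type*} [MeasureSpace Ω] [IsProbabilityMeasure (ℙ : Measure Ω)]
    (b : ℂ) {r : ℝ} (hr : 0 < r)
    (Z : ℕ → Ω → ℂ) (hmeas : ∀ i, Measurable (Z i))
    (hindep : iIndepFun Z ℙ)
    (hdist : ∀ i, Measure.map (Z i) ℙ = volume.restrict (Metric.ball b r)) :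
    ∀ j m : ℕ, j ≤ m →
      ∫⁻ ω, ((‖∑ s ∈ Finset.powersetCard j (Finset.range m), ∏ i ∈ s, Z i ω‖₊ : ℝ≥0∞))⁻¹ ∂ℙ
        ≤ (max (∫⁻ w in Metric.ball (0:ℂ) r, (‖w‖₊ : ℝ≥0∞)⁻¹ ∂volume) 1) ^ j := by
  classical
  set K := max (∫⁻ w in Metric.ball (0:ℂ) r, (‖w‖₊ : ℝ≥0∞)⁻¹ ∂volume) 1 with hK
  have hEmeas : ∀ t m : ℕ, Measurable fun ω =>
      ∑ s ∈ Finset.powersetCard t (Finset.range m), ∏ i ∈ s, Z i ω :=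
    fun t m => Finset.measurable_sum _ fun s _ => Finset.measurable_prod _ fun i _ => hmeas i
  intro j
  induction j with
  | zero =>
    intro m _
    simp [Finset.powersetCard_zero]
  | succ j ih =>
    rintro (_ | m) hm
    · omega
    have hjm : j ≤ m := Nat.succ_le_succ_iff.1 hm
    -- abbreviations
    set A : Ω → ℂ := fun ω => ∑ s ∈ Finset.powersetCard (j+1) (Finset.range m), ∏ i ∈ s, Z i ω
      with hA
    set B : Ω → ℂ := fun ω => ∑ s ∈ Finset.powersetCard j (Finset.range m), ∏ i ∈ s, Z i ω
      with hB
    have hAmeas : Measurable A := hEmeas _ _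
    have hBmeas : Measurable B := hEmeas _ _
    set X : Ω → ℂ × ℂ := fun ω => (A ω, B ω) with hX
    have hXmeas : Measurable X := hAmeas.prodMk hBmeas
    -- independence of X and Z m
    have hdisj : Disjoint (Finset.range m) ({m} : Finset ℕ) := by
      simp [Finset.disjoint_singleton_right]
    have h1 := hindep.indepFun_finset (Finset.range m) ({m} : Finset ℕ) hdisj hmeas
    set gS : (({x // x ∈ Finset.range m}) → ℂ) → ℂ × ℂ := fun v =>
      (∑ s ∈ Finset.powersetCard (j+1) (Finset.range m).attach, ∏ i ∈ s, v i,
       ∑ s ∈ Finset.powersetCard j (Finset.range m).attach, ∏ i ∈ s, v i) with hgS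
    have hgSmeas : Measurable gS := by
      apply Measurable.prodMk <;>
        exact Finset.measurable_sum _ fun s _ =>
          Finset.measurable_prod _ fun i _ => measurable_pi_apply _
    set hT : (({x // x ∈ ({m} : Finset ℕ)}) → ℂ) → ℂ := fun v =>
      v ⟨m, Finset.mem_singleton_self m⟩ with hhT
    have hhTmeas : Measurable hT := measurable_pi_apply _
    have hXY : IndepFun X (Z m) ℙ := by
      have h2 := h1.comp hgSmeas hhTmeas
      have e1 : (gS ∘ fun ω (i : ({x // x ∈ Finset.range m})) => Z i ω) = X := by
        funext ω
        simp only [Function.comp_apply, hgS, hX, hA, hB]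
        exact congrArg₂ Prod.mk (esymm_attach (fun i => Z i ω) _ _)
          (esymm_attach (fun i => Z i ω) _ _)
      have e2 : (hT ∘ fun ω (i : ({x // x ∈ ({m} : Finset ℕ)})) => Z i ω) = Z m := rfl
      rwa [e1, e2] at h2
    have hmap : Measure.map (fun ω => (X ω, Z m ω)) ℙ
        = (Measure.map X ℙ).prod (Measure.map (Z m) ℙ) :=
      (indepFun_iff_map_prod_eq_prod_map_map hXmeas.aemeasurable
        (hmeas m).aemeasurable).1 hXY
    set F : (ℂ × ℂ) × ℂ → ℝ≥0∞ := fun p => ((‖p.1.1 + p.2 * p.1.2‖₊ : ℝ≥0∞))⁻¹ with hF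
    have hFmeas : Measurable F := by
      have h : Measurable fun p : (ℂ × ℂ) × ℂ => p.1.1 + p.2 * p.1.2 := by fun_prop
      exact h.enorm.inv
    have hrec : ∀ ω, (∑ s ∈ Finset.powersetCard (j+1) (Finset.range (m+1)), ∏ i ∈ s, Z i ω)
        = A ω + Z m ω * B ω := fun ω => esymm_rec (fun i => Z i ω) j m
    have hsndmeas : Measurable fun x : ℂ × ℂ => ((‖x.2‖₊ : ℝ≥0∞))⁻¹ :=
      measurable_snd.enorm.inv
    calc ∫⁻ ω, ((‖∑ s ∈ Finset.powersetCard (j+1) (Finset.range (m+1)),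
            ∏ i ∈ s, Z i ω‖₊ : ℝ≥0∞))⁻¹ ∂ℙ
        = ∫⁻ ω, F (X ω, Z m ω) ∂ℙ := lintegral_congr fun ω => by rw [hF]; simp only; rw [hrec ω]
      _ = ∫⁻ p, F p ∂(Measure.map (fun ω => (X ω, Z m ω)) ℙ) :=
          (lintegral_map hFmeas (hXmeas.prodMk (hmeas m))).symm
      _ = ∫⁻ p, F p ∂((Measure.map X ℙ).prod (Measure.map (Z m) ℙ)) := by rw [hmap]
      _ = ∫⁻ x, ∫⁻ y, F (x, y) ∂(Measure.map (Z m) ℙ) ∂(Measure.map X ℙ) :=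
          lintegral_prod _ hFmeas.aemeasurable
      _ ≤ ∫⁻ x, K * ((‖x.2‖₊ : ℝ≥0∞))⁻¹ ∂(Measure.map X ℙ) := by
          refine lintegral_mono fun x => ?_
          rw [hdist m]
          calc ∫⁻ y in Metric.ball b r, F (x, y) ∂volume
              = ∫⁻ y in Metric.ball b r, ((‖x.2 * y + x.1‖₊ : ℝ≥0∞))⁻¹ ∂volume :=
                lintegral_congr fun y => by
                  rw [hF]; simp only
                  rw [show x.1 + y * x.2 = x.2 * y + x.1 from by ring]
            _ ≤ K * ((‖x.2‖₊ : ℝ≥0∞))⁻¹ := affine_bound b hr x.2 x.1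
      _ = K * ∫⁻ x, ((‖x.2‖₊ : ℝ≥0∞))⁻¹ ∂(Measure.map X ℙ) :=
          lintegral_const_mul K hsndmeas
      _ = K * ∫⁻ ω, ((‖B ω‖₊ : ℝ≥0∞))⁻¹ ∂ℙ := by
          rw [lintegral_map hsndmeas hXmeas]
      _ ≤ K * K ^ j := by gcongr; exact ih m hjm
      _ = K ^ (j+1) := by rw [pow_succ]; exact mul_comm _ _

/-- for i.i.d. uniform random variables on a disk `B ⊂ ℂ` of area `1` and
`(k_n log n)/n → 0`, the `k_n`-th elementary symmetric polynomial `S` of `Z_1,…,Z_n`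
satisfies `ℙ(|S| ≤ e^{-εn}) ≤ n^{-2}` for all sufficiently large `n`. -/
theorem uniform_disk_esymm_anticoncentration
    {Ω : Type*} [MeasureSpace Ω] [IsProbabilityMeasure (ℙ : Measure Ω)]
    (b : ℂ) (r : ℝ) (hr : 0 < r) (hvol : volume (Metric.ball b r) = 1)
    (Z : ℕ → Ω → ℂ) (hmeas : ∀ i, Measurable (Z i))
    (hindep : iIndepFun Z ℙ)
    (hdist : ∀ i, Measure.map (Z i) ℙ = volume.restrict (Metric.ball b r))
    (ε : ℝ) (hε : 0 < ε)
    (k : ℕ → ℕ) (hk : ∀ n, 2 ≤ n → 1 ≤ k n ∧ k n < n)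
    (hko : Tendsto (fun n => (k n : ℝ) * Real.log n / n) atTop (𝓝 0)) :
    ∃ n₀ : ℕ, ∀ n : ℕ, n₀ ≤ n →
      ℙ {ω : Ω | ‖
          (∑ s ∈ Finset.powersetCard (k n) (Finset.range n), ∏ i ∈ s, Z i ω)‖
        ≤ Real.exp (-(ε * n))}
        ≤ ((n : ℝ≥0∞) ^ 2)⁻¹ := by
  classical
  set K := max (∫⁻ w in Metric.ball (0:ℂ) r, (‖w‖₊ : ℝ≥0∞)⁻¹ ∂volume) 1 with hKdef
  have hKfin : K ≠ ⊤ := by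
    rw [hKdef]
    exact (max_lt (finC hr) ENNReal.one_lt_top).ne
  set c := K.toReal with hc
  have hc1 : 1 ≤ c := by
    rw [hc]
    have : (1 : ℝ≥0∞) ≤ K := le_max_right _ _
    simpa using ENNReal.toReal_mono hKfin this
  have hc0 : 0 < c := lt_of_lt_of_le one_pos hc1
  have hKofReal : K = ENNReal.ofReal c := (ENNReal.ofReal_toReal hKfin).symm
  have hlogc : 0 ≤ Real.log c := Real.log_nonneg hc1
  set δ := ε / (Real.log c + 2) with hδdef
  have hδpos : 0 < δ := div_pos hε (by linarith)
  obtain ⟨N₁, hN₁⟩ := (hko.eventually_lt_const hδpos).exists_forall_of_atTop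
  refine ⟨max N₁ 3, fun n hn => ?_⟩
  have hn3 : 3 ≤ n := le_trans (le_max_right _ _) hn
  have hnN₁ : N₁ ≤ n := le_trans (le_max_left _ _) hn
  have hn2 : 2 ≤ n := by omega
  obtain ⟨hk1, hk2⟩ := hk n hn2
  have hkn : k n ≤ n := hk2.le
  set t := Real.exp (-(ε * n)) with ht
  have htpos : 0 < t := Real.exp_pos _
  set S : Ω → ℂ := fun ω => ∑ s ∈ Finset.powersetCard (k n) (Finset.range n), ∏ i ∈ s, Z i ω
    with hS
  have hSmeas : Measurable S :=
    Finset.measurable_sum _ fun s _ => Finset.measurable_prod _ fun i _ => hmeas i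
  have hset : {ω : Ω | ‖S ω‖ ≤ t}
      = {ω : Ω | (ENNReal.ofReal t)⁻¹ ≤ ((‖S ω‖₊ : ℝ≥0∞))⁻¹} := by
    ext ω
    simp only [Set.mem_setOf_eq]
    rw [ENNReal.inv_le_inv, ← enorm_eq_nnnorm, ← ofReal_norm]
    exact (ENNReal.ofReal_le_ofReal_iff htpos.le).symm
  have hmarkov : ℙ {ω : Ω | ‖S ω‖ ≤ t} ≤ K ^ (k n) * ENNReal.ofReal t := by
    rw [hset]
    calc ℙ {ω : Ω | (ENNReal.ofReal t)⁻¹ ≤ ((‖S ω‖₊ : ℝ≥0∞))⁻¹}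
        ≤ (∫⁻ ω, ((‖S ω‖₊ : ℝ≥0∞))⁻¹ ∂ℙ) / (ENNReal.ofReal t)⁻¹ :=
          meas_ge_le_lintegral_div (hSmeas.enorm.inv).aemeasurable
            (by simp [ENNReal.inv_ne_zero])
            (by simp [ENNReal.inv_ne_top, htpos])
      _ ≤ K ^ (k n) / (ENNReal.ofReal t)⁻¹ := by
          gcongr
          exact key_induction b hr Z hmeas hindep hdist (k n) n hkn
      _ = K ^ (k n) * ENNReal.ofReal t := by
          rw [div_eq_mul_inv, inv_inv]
  refine hmarkov.trans ?_
  -- asymptotic bound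
  have hnpos : (0:ℝ) < n := by positivity
  have hlogn1 : 1 ≤ Real.log n := by
    have h3 : Real.exp 1 < 3 := by
      have := Real.exp_one_lt_d9
      linarith
    have : Real.exp 1 < (n:ℝ) := lt_of_lt_of_le h3 (by exact_mod_cast hn3)
    calc (1:ℝ) = Real.log (Real.exp 1) := (Real.log_exp 1).symm
      _ ≤ Real.log n := Real.log_le_log (Real.exp_pos 1) this.le
  have hL : (k n : ℝ) * Real.log n ≤ δ * n := by
    have := hN₁ n hnN₁
    rw [div_lt_iff₀ hnpos] at this
    linarith
  have hreal : c ^ (k n) * t ≤ ((n:ℝ) ^ 2)⁻¹ := by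
    have e1 : c ^ (k n) = Real.exp ((k n : ℝ) * Real.log c) := by
      rw [Real.exp_nat_mul, Real.exp_log hc0]
    have e2 : ((n:ℝ) ^ 2)⁻¹ = Real.exp (-(2 * Real.log n)) := by
      rw [Real.exp_neg]
      congr 1
      rw [show (2:ℝ) * Real.log n = ((2:ℕ):ℝ) * Real.log n by norm_num,
        Real.exp_nat_mul, Real.exp_log hnpos]
    have hδε : δ * (Real.log c + 2) = ε := by
      rw [hδdef]
      field_simp
    rw [e1, e2, ht, ← Real.exp_add, Real.exp_le_exp]
    have hmul := mul_le_mul_of_nonneg_right hL (by linarith : (0:ℝ) ≤ Real.log c + 2)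
    have hkR : (1:ℝ) ≤ (k n : ℝ) := by exact_mod_cast hk1
    nlinarith [mul_nonneg (mul_nonneg (by linarith : (0:ℝ) ≤ (k n:ℝ)) (by linarith : (0:ℝ) ≤ Real.log n - 1)) hlogc,
      mul_nonneg (by linarith : (0:ℝ) ≤ (k n:ℝ) - 1) (by linarith : (0:ℝ) ≤ Real.log n)]
  calc K ^ (k n) * ENNReal.ofReal t
      = ENNReal.ofReal (c ^ (k n) * t) := by
        rw [hKofReal, ← ENNReal.ofReal_pow hc0.le, ← ENNReal.ofReal_mul (by positivity)]
    _ ≤ ENNReal.ofReal (((n:ℝ) ^ 2)⁻¹) := ENNReal.ofReal_le_ofReal hreal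
    _ = ((n : ℝ≥0∞) ^ 2)⁻¹ := by
        rw [ENNReal.ofReal_inv_of_pos (by positivity), ENNReal.ofReal_pow (by positivity)]
        congr 2
        exact ENNReal.ofReal_natCast n
end
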